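/- arXiv:1705.10140 — 4 statements merged into one kernel-verified Lean document; each statement's English description precedes it below -/
import Mathlib

section
/- Under Assumption A(ρ) with ρ ≥ 1, for each s ∈ {1,…,T} the function γ_s^{(2)} is of class C^ρ on [0,1], and there exist constants c > 0 and C > 0 such that for all n ≥ 1 and all t ∈ {⌈c·log n⌉, …, nT} with t ≡ s (mod T), one has |E[(X_t^{(n)})²] − γ_s^{(2)}(t/(nT))| ≤ C/n. -/
open MeasureTheory ProbabilityTheory Filter Set
open scoped ProbabilityTheory

noncomputable section

/-- The largest integer strictly smaller than a positive real `ρ`. -/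
def lint (ρ : ℝ) : ℕ := ⌈ρ⌉₊ - 1

/-- A function is of class `C^ρ` on `[0,1]`: it is `lint ρ` times continuously
differentiable there and its `lint ρ`-th derivative is `(ρ - lint ρ)`-Hölder. -/
def CHolder (ρ : ℝ) (f : ℝ → ℝ) : Prop :=
  ContDiffOn ℝ (lint ρ) f (Set.Icc 0 1) ∧
  ∃ C : ℝ, 0 ≤ C ∧ ∀ u ∈ Set.Icc (0:ℝ) 1, ∀ v ∈ Set.Icc (0:ℝ) 1,
    |iteratedDerivWithin (lint ρ) f (Set.Icc 0 1) u -
      iteratedDerivWithin (lint ρ) f (Set.Icc 0 1) v| ≤ C * |u - v| ^ (ρ - (lint ρ : ℝ))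

/-- `β_{s,i}(v) = ∏_{j=0}^{i} a_{s-j}(v)²`. -/
def beta2 (a : ℤ → ℝ → ℝ) (s : ℤ) (i : ℕ) (v : ℝ) : ℝ :=
  ∏ j ∈ Finset.range (i + 1), (a (s - j) v) ^ 2

/-- `γ_s^{(2)}(v) = σ² (1 + Σ_{i=0}^{T-2} β_{s,i}(v)) / (1 - β_{s,T-1}(v))`. -/
def gamma2 (a : ℤ → ℝ → ℝ) (T : ℕ) (σ : ℝ) (s : ℤ) (v : ℝ) : ℝ :=
  σ ^ 2 * (1 + ∑ i ∈ Finset.range (T - 1), beta2 a s i v) / (1 - beta2 a s (T - 1) v)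

def CHaux : ℕ → ℝ → (ℝ → ℝ) → Prop
  | 0, η, f => ContinuousOn f (Set.Icc 0 1) ∧
      ∃ C : ℝ, 0 ≤ C ∧ ∀ u ∈ Set.Icc (0:ℝ) 1, ∀ v ∈ Set.Icc (0:ℝ) 1,
        |f u - f v| ≤ C * |u - v| ^ η
  | (m+1), η, f => DifferentiableOn ℝ f (Set.Icc 0 1) ∧ CHaux m η (derivWithin f (Set.Icc 0 1))

namespace CHauxLemmas

local notation "I01" => Set.Icc (0:ℝ) 1

lemma udiff : UniqueDiffOn ℝ I01 := uniqueDiffOn_Icc zero_lt_one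

lemma chaux_congr {η : ℝ} : ∀ {m : ℕ} {f g : ℝ → ℝ}, Set.EqOn f g I01 →
    CHaux m η f → CHaux m η g := by
  intro m
  induction m with
  | zero =>
    intro f g hfg hf
    refine ⟨hf.1.congr hfg.symm, ?_⟩
    obtain ⟨C, hC, h⟩ := hf.2
    exact ⟨C, hC, fun u hu v hv => by rw [← hfg hu, ← hfg hv]; exact h u hu v hv⟩
  | succ m ih =>
    intro f g hfg hf
    refine ⟨hf.1.congr (fun x hx => (hfg hx).symm), ?_⟩
    refine ih (fun x hx => ?_) hf.2
    exact derivWithin_congr hfg (hfg hx)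

lemma chaux_continuousOn {η : ℝ} {m : ℕ} {f : ℝ → ℝ} (hf : CHaux m η f) :
    ContinuousOn f I01 := by
  cases m with
  | zero => exact hf.1
  | succ m => exact hf.1.continuousOn

lemma chaux_bound {η : ℝ} {m : ℕ} {f : ℝ → ℝ} (hf : CHaux m η f) :
    ∃ M : ℝ, 0 ≤ M ∧ ∀ v ∈ I01, |f v| ≤ M := by
  obtain ⟨M, hM⟩ := (isCompact_Icc).exists_bound_of_continuousOn (chaux_continuousOn hf)
  exact ⟨max M 0, le_max_right _ _, fun v hv => le_trans (hM v hv) (le_max_left _ _)⟩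

lemma abs_sub_le_rpow {η : ℝ} (hη : 0 < η) (hη1 : η ≤ 1) {u v : ℝ}
    (hu : u ∈ I01) (hv : v ∈ I01) : |u - v| ≤ |u - v| ^ η := by
  rcases eq_or_lt_of_le (abs_nonneg (u - v)) with h | h
  · rw [← h, Real.zero_rpow hη.ne']
  · have h1 : |u - v| ≤ 1 := by
      rw [abs_sub_le_iff]
      constructor <;> simp only [Set.mem_Icc] at hu hv <;> linarith
    calc |u - v| = |u - v| ^ (1:ℝ) := (Real.rpow_one _).symm
      _ ≤ |u - v| ^ η := Real.rpow_le_rpow_of_exponent_ge h h1 hη1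

lemma chaux_holder {η : ℝ} (hη : 0 < η) (hη1 : η ≤ 1) {m : ℕ} {f : ℝ → ℝ}
    (hf : CHaux m η f) :
    ∃ C : ℝ, 0 ≤ C ∧ ∀ u ∈ I01, ∀ v ∈ I01, |f u - f v| ≤ C * |u - v| ^ η := by
  cases m with
  | zero => exact hf.2
  | succ m =>
    obtain ⟨M, hM, hMb⟩ := chaux_bound hf.2
    refine ⟨M, hM, fun u hu v hv => ?_⟩
    have hlip : |f u - f v| ≤ M * |u - v| := by
      have := Convex.norm_image_sub_le_of_norm_derivWithin_le hf.1
        (fun x hx => by simpa [Real.norm_eq_abs] using hMb x hx) (convex_Icc 0 1) hv hu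
      simpa [Real.norm_eq_abs] using this
    calc |f u - f v| ≤ M * |u - v| := hlip
      _ ≤ M * |u - v| ^ η := by
        exact mul_le_mul_of_nonneg_left (abs_sub_le_rpow hη hη1 hu hv) hM

lemma chaux_down {η : ℝ} (hη : 0 < η) (hη1 : η ≤ 1) :
    ∀ {m : ℕ} {f : ℝ → ℝ}, CHaux (m+1) η f → CHaux m η f := by
  intro m
  induction m with
  | zero =>
    intro f hf
    exact ⟨hf.1.continuousOn, chaux_holder hη hη1 hf⟩
  | succ m ih =>
    intro f hf
    exact ⟨hf.1, ih hf.2⟩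

lemma chaux_const {η : ℝ} : ∀ (m : ℕ) (c : ℝ), CHaux m η (fun _ => c) := by
  intro m
  induction m with
  | zero =>
    intro c
    refine ⟨continuousOn_const, 0, le_refl _, fun u hu v hv => ?_⟩
    simp [Real.rpow_nonneg (abs_nonneg _)]
  | succ m ih =>
    intro c
    refine ⟨differentiableOn_const c, chaux_congr (fun x hx => ?_) (ih 0)⟩
    exact (congrFun (derivWithin_fun_const _ _) x).symm

lemma chaux_add {η : ℝ} : ∀ {m : ℕ} {f g : ℝ → ℝ}, CHaux m η f → CHaux m η g →
    CHaux m η (fun x => f x + g x) := by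
  intro m
  induction m with
  | zero =>
    intro f g hf hg
    obtain ⟨Cf, hCf, hf2⟩ := hf.2
    obtain ⟨Cg, hCg, hg2⟩ := hg.2
    refine ⟨hf.1.add hg.1, Cf + Cg, by linarith, fun u hu v hv => ?_⟩
    have := abs_add_le (f u - f v) (g u - g v)
    have h1 := hf2 u hu v hv
    have h2 := hg2 u hu v hv
    have : |f u + g u - (f v + g v)| ≤ |f u - f v| + |g u - g v| := by
      calc |f u + g u - (f v + g v)| = |(f u - f v) + (g u - g v)| := by ring_nf
        _ ≤ _ := abs_add_le _ _
    nlinarith [this]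
  | succ m ih =>
    intro f g hf hg
    refine ⟨hf.1.add hg.1, chaux_congr (fun x hx => ?_) (ih hf.2 hg.2)⟩
    exact (derivWithin_add (hf.1 x hx) (hg.1 x hx)).symm

lemma chaux_mul {η : ℝ} (hη : 0 < η) (hη1 : η ≤ 1) :
    ∀ {m : ℕ} {f g : ℝ → ℝ}, CHaux m η f → CHaux m η g →
    CHaux m η (fun x => f x * g x) := by
  intro m
  induction m with
  | zero =>
    intro f g hf hg
    obtain ⟨Mf, hMf, hfb⟩ := chaux_bound hf
    obtain ⟨Mg, hMg, hgb⟩ := chaux_bound hg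
    obtain ⟨Cf, hCf, hf2⟩ := hf.2
    obtain ⟨Cg, hCg, hg2⟩ := hg.2
    refine ⟨hf.1.mul hg.1, Mf * Cg + Mg * Cf, by positivity, fun u hu v hv => ?_⟩
    have key : |f u * g u - f v * g v| ≤ |f u| * |g u - g v| + |g v| * |f u - f v| := by
      calc |f u * g u - f v * g v| = |f u * (g u - g v) + g v * (f u - f v)| := by ring_nf
        _ ≤ |f u * (g u - g v)| + |g v * (f u - f v)| := abs_add_le _ _
        _ = |f u| * |g u - g v| + |g v| * |f u - f v| := by rw [abs_mul, abs_mul]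
    have h1 := hf2 u hu v hv
    have h2 := hg2 u hu v hv
    have hfu := hfb u hu
    have hgv := hgb v hv
    have hr : (0:ℝ) ≤ |u - v| ^ η := Real.rpow_nonneg (abs_nonneg _) _
    nlinarith [abs_nonneg (g u - g v), abs_nonneg (f u - f v), abs_nonneg (f u), abs_nonneg (g v)]
  | succ m ih =>
    intro f g hf hg
    refine ⟨hf.1.mul hg.1, chaux_congr (fun x hx => ?_)
      (chaux_add (ih hf.2 (chaux_down hη hη1 hg)) (ih (chaux_down hη hη1 hf) hg.2))⟩
    exact (derivWithin_mul (hf.1 x hx) (hg.1 x hx)).symm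


lemma chaux_sum {η : ℝ} {m : ℕ} {ι : Type*} (s : Finset ι) (f : ι → ℝ → ℝ)
    (h : ∀ i ∈ s, CHaux m η (f i)) : CHaux m η (fun x => ∑ i ∈ s, f i x) := by
  classical
  induction s using Finset.induction_on with
  | empty => exact chaux_congr (fun x _ => by simp) (chaux_const m 0)
  | @insert a s' hnotmem ih =>
    refine chaux_congr (fun x _ => ?_) (chaux_add (h a (Finset.mem_insert_self a s'))
      (ih (fun i hi => h i (Finset.mem_insert_of_mem hi))))
    rw [Finset.sum_insert hnotmem]

lemma chaux_prod {η : ℝ} (hη : 0 < η) (hη1 : η ≤ 1) {m : ℕ} {ι : Type*} (s : Finset ι)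
    (f : ι → ℝ → ℝ) (h : ∀ i ∈ s, CHaux m η (f i)) :
    CHaux m η (fun x => ∏ i ∈ s, f i x) := by
  classical
  induction s using Finset.induction_on with
  | empty => exact chaux_congr (fun x _ => by simp) (chaux_const m 1)
  | @insert a s' hnotmem ih =>
    refine chaux_congr (fun x _ => ?_) (chaux_mul hη hη1 (h a (Finset.mem_insert_self a s'))
      (ih (fun i hi => h i (Finset.mem_insert_of_mem hi))))
    rw [Finset.prod_insert hnotmem]

lemma chaux_inv {η : ℝ} (hη : 0 < η) (hη1 : η ≤ 1) :
    ∀ {m : ℕ} {f : ℝ → ℝ} {δ : ℝ}, 0 < δ → (∀ v ∈ I01, δ ≤ |f v|) → CHaux m η f →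
    CHaux m η (fun x => (f x)⁻¹) := by
  intro m
  induction m with
  | zero =>
    intro f δ hδ hlow hf
    have hne : ∀ v ∈ I01, f v ≠ 0 := fun v hv => by
      intro h0
      have := hlow v hv; rw [h0, abs_zero] at this; linarith
    obtain ⟨C, hC, h2⟩ := hf.2
    refine ⟨hf.1.inv₀ hne, C / (δ * δ), by positivity, fun u hu v hv => ?_⟩
    have hfu := hne u hu
    have hfv := hne v hv
    rw [inv_sub_inv hfu hfv, abs_div, abs_mul]
    rw [div_le_iff₀ (by positivity)]
    have h3 : |f v - f u| ≤ C * |u - v| ^ η := by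
      have := h2 v hv u hu; rwa [abs_sub_comm v u] at this
    have hδu : δ ≤ |f u| := hlow u hu
    have hδv : δ ≤ |f v| := hlow v hv
    have hr : (0:ℝ) ≤ |u - v| ^ η := Real.rpow_nonneg (abs_nonneg _) _
    calc |f v - f u| ≤ C * |u - v| ^ η := h3
      _ = C / (δ * δ) * |u - v| ^ η * (δ * δ) := by field_simp
      _ ≤ C / (δ * δ) * |u - v| ^ η * (|f u| * |f v|) := by
          refine mul_le_mul_of_nonneg_left ?_ (by positivity)
          exact mul_le_mul (hlow u hu) (hlow v hv) hδ.le (abs_nonneg _)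
  | succ m ih =>
    intro f δ hδ hlow hf
    have hne : ∀ v ∈ I01, f v ≠ 0 := fun v hv => by
      intro h0
      have := hlow v hv; rw [h0, abs_zero] at this; linarith
    have hdiff : DifferentiableOn ℝ (fun x => (f x)⁻¹) I01 := fun x hx =>
      ((hf.1 x hx).inv (hne x hx))
    have hcand : CHaux m η (fun x => (-1 * derivWithin f (Set.Icc 0 1) x) *
        ((f x)⁻¹ * (f x)⁻¹)) :=
      chaux_mul hη hη1
        (chaux_mul hη hη1 (chaux_const m (-1)) hf.2)
        (chaux_mul hη hη1 (ih hδ hlow (chaux_down hη hη1 hf))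
          (ih hδ hlow (chaux_down hη hη1 hf)))
    refine ⟨hdiff, chaux_congr (fun x hx => ?_) hcand⟩
    rw [derivWithin_fun_inv' (hf.1 x hx) (hne x hx)]
    rw [div_eq_mul_inv, sq, mul_inv]
    ring


lemma chaux_iff {η : ℝ} : ∀ {m : ℕ} {f : ℝ → ℝ},
    CHaux m η f ↔ (ContDiffOn ℝ m f I01 ∧ ∃ C : ℝ, 0 ≤ C ∧ ∀ u ∈ I01, ∀ v ∈ I01,
      |iteratedDerivWithin m f I01 u - iteratedDerivWithin m f I01 v| ≤ C * |u - v| ^ η) := by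
  intro m
  induction m with
  | zero =>
    intro f
    simp only [CHaux, contDiffOn_zero, iteratedDerivWithin_zero, Nat.cast_zero]
  | succ m ih =>
    intro f
    have hcd : ContDiffOn ℝ (m+1 : ℕ) f I01 ↔
        DifferentiableOn ℝ f I01 ∧ ContDiffOn ℝ m (derivWithin f I01) I01 := by
      rw [show ((m+1 : ℕ) : WithTop ℕ∞) = (m : WithTop ℕ∞) + 1 by push_cast; ring]
      rw [contDiffOn_succ_iff_derivWithin udiff]
      constructor
      · rintro ⟨h1, _, h3⟩; exact ⟨h1, h3⟩
      · rintro ⟨h1, h3⟩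
        refine ⟨h1, fun h => ?_, h3⟩
        · exact absurd h (by simp)
    have hit : ∀ u ∈ I01, iteratedDerivWithin (m+1) f I01 u =
        iteratedDerivWithin m (derivWithin f I01) I01 u :=
      fun u hu => congrFun iteratedDerivWithin_succ' u
    constructor
    · rintro ⟨h1, h2⟩
      obtain ⟨h3, C, hC, h4⟩ := ih.mp h2
      refine ⟨hcd.mpr ⟨h1, h3⟩, C, hC, fun u hu v hv => ?_⟩
      rw [hit u hu, hit v hv]; exact h4 u hu v hv
    · rintro ⟨h1, C, hC, h2⟩
      obtain ⟨h3, h4⟩ := hcd.mp h1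
      refine ⟨h3, ih.mpr ⟨h4, C, hC, fun u hu v hv => ?_⟩⟩
      rw [← hit u hu, ← hit v hv]; exact h2 u hu v hv

lemma chaux_lipschitz {η : ℝ} {m : ℕ} {f : ℝ → ℝ} (hf : CHaux m η f)
    (hone : η = 1 ∨ 1 ≤ m) :
    ∃ L : ℝ, 0 ≤ L ∧ ∀ u ∈ I01, ∀ v ∈ I01, |f u - f v| ≤ L * |u - v| := by
  cases m with
  | zero =>
    have hη : η = 1 := hone.resolve_right (by omega)
    obtain ⟨C, hC, h2⟩ := hf.2
    exact ⟨C, hC, fun u hu v hv => by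
      have := h2 u hu v hv; rwa [hη, Real.rpow_one] at this⟩
  | succ m =>
    obtain ⟨M, hM, hMb⟩ := chaux_bound hf.2
    refine ⟨M, hM, fun u hu v hv => ?_⟩
    have := Convex.norm_image_sub_le_of_norm_derivWithin_le hf.1
      (fun x hx => by simpa [Real.norm_eq_abs] using hMb x hx) (convex_Icc 0 1) hv hu
    simpa [Real.norm_eq_abs] using this


end CHauxLemmas

set_option maxHeartbeats 1000000 in
lemma indep_join {Ω : Type*} [MeasureSpace Ω] (hprob : IsProbabilityMeasure (ℙ : Measure Ω))
    (X0 : Ω → ℝ) (hX0meas : Measurable X0)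
    (ξ : ℕ → Ω → ℝ) (hξmeas : ∀ t, Measurable (ξ t))
    (hξindep : iIndepFun ξ ℙ)
    (hindX0 : Indep (MeasurableSpace.comap X0 inferInstance)
      (⨆ t, MeasurableSpace.comap (ξ t) inferInstance) ℙ) (t : ℕ) :
    Indep ((MeasurableSpace.comap X0 inferInstance) ⊔
        ⨆ i ∈ Finset.range t, MeasurableSpace.comap (ξ i) inferInstance)
      (MeasurableSpace.comap (ξ t) inferInstance) ℙ := by
  haveI := hprob
  set mA := MeasurableSpace.comap X0 inferInstance with hmA
  set mB := ⨆ i ∈ Finset.range t, MeasurableSpace.comap (ξ i) inferInstance with hmB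
  set mC := MeasurableSpace.comap (ξ t) inferInstance with hmC
  have hAle : mA ≤ _ := hX0meas.comap_le
  have hξle : ∀ i, MeasurableSpace.comap (ξ i) inferInstance ≤ _ :=
    fun i => (hξmeas i).comap_le
  have hBle : mB ≤ _ := iSup₂_le fun i _ => hξle i
  have hCle := hξle t
  have hBC : Indep mB mC ℙ := by
    have h := indep_biSup_compl hξle hξindep.iIndep {i | i < t}
    have hle1 : mB ≤ ⨆ i ∈ ({i | i < t} : Set ℕ), MeasurableSpace.comap (ξ i) inferInstance :=
      iSup₂_le fun i hi =>
        le_iSup₂ (f := fun (i : ℕ) (_ : i ∈ ({i | i < t} : Set ℕ)) =>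
          MeasurableSpace.comap (ξ i) inferInstance) i (Finset.mem_range.mp hi)
    have hle2 : mC ≤ ⨆ i ∈ ({i | i < t} : Set ℕ)ᶜ, MeasurableSpace.comap (ξ i) inferInstance :=
      le_iSup₂ (f := fun (i : ℕ) (_ : i ∈ ({i | i < t} : Set ℕ)ᶜ) =>
        MeasurableSpace.comap (ξ i) inferInstance) t (by simp)
    exact indep_of_indep_of_le_right (indep_of_indep_of_le_left h hle1) hle2
  have hA_BC : Indep mA (mB ⊔ mC) ℙ := by
    refine indep_of_indep_of_le_right hindX0 ?_
    refine sup_le (iSup₂_le fun i _ => ?_) ?_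
    · exact le_iSup (fun j => MeasurableSpace.comap (ξ j) inferInstance) i
    · rw [hmC]; exact le_iSup (fun j => MeasurableSpace.comap (ξ j) inferInstance) t
  set p1 : Set (Set Ω) :=
    {s | ∃ A, MeasurableSet[mA] A ∧ ∃ B, MeasurableSet[mB] B ∧ s = A ∩ B} with hp1def
  have hp1 : IsPiSystem p1 := by
    rintro s1 ⟨A1, hA1, B1, hB1, rfl⟩ s2 ⟨A2, hA2, B2, hB2, rfl⟩ _
    exact ⟨A1 ∩ A2, hA1.inter hA2, B1 ∩ B2, hB1.inter hB2, by
      rw [Set.inter_inter_inter_comm]⟩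
  have hp2 : IsPiSystem {s | MeasurableSet[mC] s} := by
    intro s hs u hu _
    simp only [Set.mem_setOf_eq] at *
    exact hs.inter hu
  have hgen1 : mA ⊔ mB = MeasurableSpace.generateFrom p1 := by
    refine le_antisymm (sup_le ?_ ?_) (MeasurableSpace.generateFrom_le ?_)
    · intro s hs
      exact MeasurableSpace.measurableSet_generateFrom
        ⟨s, hs, Set.univ, MeasurableSet.univ, (Set.inter_univ s).symm⟩
    · intro s hs
      exact MeasurableSpace.measurableSet_generateFrom
        ⟨Set.univ, MeasurableSet.univ, s, hs, (Set.univ_inter s).symm⟩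
    · rintro s ⟨A, hA, B, hB, rfl⟩
      exact MeasurableSet.inter (le_sup_left (a := mA) (b := mB) A hA)
        (le_sup_right (a := mA) (b := mB) B hB)
  have hgen2 : mC = MeasurableSpace.generateFrom {s | MeasurableSet[mC] s} :=
    (MeasurableSpace.generateFrom_measurableSet).symm
  have hIS : IndepSets p1 {s | MeasurableSet[mC] s} ℙ := by
    rw [IndepSets_iff]
    rintro s S ⟨A, hA, B, hB, rfl⟩ hS
    simp only [Set.mem_setOf_eq] at hS
    have hBsup : MeasurableSet[mB ⊔ mC] B := le_sup_left (a := mB) (b := mC) B hB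
    have hSsup : MeasurableSet[mB ⊔ mC] S := le_sup_right (a := mB) (b := mC) S hS
    have h1 : ℙ (A ∩ (B ∩ S)) = ℙ A * ℙ (B ∩ S) :=
      (Indep_iff _ _ _).mp hA_BC A (B ∩ S) hA (hBsup.inter hSsup)
    have h2 : ℙ (B ∩ S) = ℙ B * ℙ S := (Indep_iff _ _ _).mp hBC B S hB hS
    have h3 : ℙ (A ∩ B) = ℙ A * ℙ B := (Indep_iff _ _ _).mp hA_BC A B hA hBsup
    calc ℙ (A ∩ B ∩ S) = ℙ (A ∩ (B ∩ S)) := by rw [Set.inter_assoc]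
      _ = ℙ A * (ℙ B * ℙ S) := by rw [h1, h2]
      _ = ℙ A * ℙ B * ℙ S := by ring
      _ = ℙ (A ∩ B) * ℙ S := by rw [h3]
  exact IndepSets.indep (sup_le hAle hBle) hCle hp1 hp2 hgen1 hgen2 hIS

section GammaFacts
variable (a : ℤ → ℝ → ℝ) {T : ℕ} (σ : ℝ)

lemma beta2_zero (u : ℤ) (v : ℝ) : beta2 a u 0 v = (a u v)^2 := by
  unfold beta2; simp

lemma beta2_succ (u : ℤ) (i : ℕ) (v : ℝ) :
    beta2 a u (i+1) v = (a u v)^2 * beta2 a (u-1) i v := by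
  unfold beta2
  rw [Finset.prod_range_succ']
  have h0 : (a (u - ((0:ℕ):ℤ)) v)^2 = (a u v)^2 := by norm_num
  rw [h0, mul_comm]
  congr 1
  apply Finset.prod_congr rfl
  intro j _
  rw [show u - ((j+1:ℕ):ℤ) = u - 1 - (j:ℤ) from by push_cast; ring]

lemma beta2_per (hper : ∀ (t : ℤ) (v : ℝ), a (t + T) v = a t v) (u : ℤ) (i : ℕ) (v : ℝ) :
    beta2 a (u + T) i v = beta2 a u i v := by
  unfold beta2
  apply Finset.prod_congr rfl
  intro j _
  have h := hper (u - j) v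
  rw [show u + (T:ℤ) - (j:ℤ) = u - j + T from by ring, h]

lemma gamma2_per (hper : ∀ (t : ℤ) (v : ℝ), a (t + T) v = a t v) (u : ℤ) (v : ℝ) :
    gamma2 a T σ (u + T) v = gamma2 a T σ u v := by
  unfold gamma2
  simp only [beta2_per a hper]

lemma beta2_shift (hT : 1 ≤ T) (hper : ∀ (t : ℤ) (v : ℝ), a (t + T) v = a t v) (u : ℤ) (v : ℝ) :
    beta2 a (u-1) (T-1) v = beta2 a u (T-1) v := by
  have hT1 : T - 1 + 1 = T := Nat.succ_pred_eq_of_pos hT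
  have hf0 : a (u - (T:ℤ)) v = a u v := by
    have h := hper (u - (T:ℤ)) v
    rw [show u - (T:ℤ) + (T:ℤ) = u from by ring] at h
    exact h.symm
  unfold beta2
  rw [hT1]
  have hre : ∀ j ∈ Finset.range T, (a (u - 1 - (j:ℤ)) v)^2 = (a (u - ((j+1:ℕ):ℤ)) v)^2 := by
    intro j _
    rw [show u - ((j+1:ℕ):ℤ) = u - 1 - (j:ℤ) from by push_cast; ring]
  rw [Finset.prod_congr rfl hre]
  obtain ⟨T', hT'⟩ : ∃ T', T = T' + 1 := ⟨T-1, by omega⟩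
  rw [hT', Finset.prod_range_succ, Finset.prod_range_succ']
  congr 1
  rw [show ((T'+1:ℕ):ℤ) = (T:ℤ) from by rw [hT'], hf0]
  norm_num

lemma gamma2_rec (hT : 1 ≤ T) (hper : ∀ (t : ℤ) (v : ℝ), a (t + T) v = a t v)
    (u : ℤ) (v : ℝ) (hD : beta2 a u (T-1) v < 1) :
    gamma2 a T σ u v = (a u v)^2 * gamma2 a T σ (u-1) v + σ^2 := by
  have hT1 : T - 1 + 1 = T := Nat.succ_pred_eq_of_pos hT
  have hDne : (1 - beta2 a u (T-1) v) ≠ 0 := by linarith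
  have hsum : (∑ i ∈ Finset.range (T-1), beta2 a u i v) + beta2 a u (T-1) v
      = (a u v)^2 * (1 + ∑ i ∈ Finset.range (T-1), beta2 a (u-1) i v) := by
    rw [← Finset.sum_range_succ (fun i => beta2 a u i v) (T-1), hT1]
    obtain ⟨T', hT'⟩ : ∃ T', T = T' + 1 := ⟨T-1, by omega⟩
    rw [hT', Finset.sum_range_succ' (fun i => beta2 a u i v) T']
    simp only [beta2_succ a, beta2_zero a, Nat.add_sub_cancel]
    rw [← Finset.mul_sum]
    ring
  have hγu1 : gamma2 a T σ (u-1) v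
      = σ^2 * (1 + ∑ i ∈ Finset.range (T-1), beta2 a (u-1) i v) / (1 - beta2 a u (T-1) v) := by
    unfold gamma2
    rw [beta2_shift a hT hper]
  unfold gamma2 at *
  rw [hγu1]
  field_simp
  linear_combination σ^2 * hsum

end GammaFacts


open CHauxLemmas in
set_option maxHeartbeats 2000000 in
/-- Under Assumption A(ρ) with ρ ≥ 1, for each `s ∈ {1,…,T}` the
function `γ_s^{(2)}` is of class `C^ρ` on `[0,1]`, and there exist constants `c > 0`
and `C > 0` such that for all `n ≥ 1` and all `t ∈ {⌈c·log n⌉, …, nT}` with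
`t ≡ s (mod T)`, one has `|E[(X_t^{(n)})²] − γ_s^{(2)}(t/(nT))| ≤ C/n`. -/
theorem statement1
    {Ω : Type*} [MeasureSpace Ω] (hprob : IsProbabilityMeasure (ℙ : Measure Ω))
    (T : ℕ) (hT : 1 ≤ T) (ρ : ℝ) (hρ : 1 ≤ ρ)
    -- Assumption A(ρ)
    (a : ℤ → ℝ → ℝ) (α : ℝ) (hα1 : α < 1)
    (hper : ∀ (t : ℤ) (v : ℝ), a (t + T) v = a t v)
    (hbdd : ∀ (t : ℤ), ∀ v ∈ Set.Icc (0:ℝ) 1, |a t v| ≤ α)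
    (hreg : ∀ t : ℤ, CHolder ρ (a t))
    -- the i.i.d. innovations, with mean 0 and variance σ² ∈ (0,∞)
    (ξ : ℕ → Ω → ℝ) (hξmeas : ∀ t, Measurable (ξ t))
    (hξindep : iIndepFun ξ ℙ)
    (hξid : ∀ t, IdentDistrib (ξ t) (ξ 0) ℙ ℙ)
    (hξmean : ∫ ω, ξ 0 ω ∂ℙ = 0)
    (σ : ℝ) (hσ : 0 < σ)
    (hξvar : ∫ ω, (ξ 0 ω) ^ 2 ∂ℙ = σ ^ 2)
    (hξsq : Integrable (fun ω => (ξ 0 ω) ^ 2) ℙ)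
    -- the initial value: square integrable and independent of the innovations
    (X0 : Ω → ℝ) (hX0meas : Measurable X0)
    (hX0sq : Integrable (fun ω => (X0 ω) ^ 2) ℙ)
    (hindX0 : Indep (MeasurableSpace.comap X0 inferInstance)
      (⨆ t, MeasurableSpace.comap (ξ t) inferInstance) ℙ)
    -- the process
    (X : ℕ → ℕ → Ω → ℝ)
    (hXinit : ∀ n ω, X n 0 ω = X0 ω)
    (hXrec : ∀ n t, 1 ≤ t → t ≤ n * T →
      ∀ ω, X n t ω = a (t : ℤ) ((t : ℝ) / ((n : ℝ) * T)) * X n (t - 1) ω + ξ t ω)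
 :
    ∀ s : ℕ, 1 ≤ s → s ≤ T →
      CHolder ρ (gamma2 a T σ (s : ℤ)) ∧
      ∃ c C : ℝ, 0 < c ∧ 0 < C ∧
        ∀ n : ℕ, 1 ≤ n → ∀ t : ℕ, ⌈c * Real.log n⌉₊ ≤ t → t ≤ n * T → t % T = s % T →
          |(∫ ω, (X n t ω) ^ 2 ∂ℙ) - gamma2 a T σ (s : ℤ) ((t : ℝ) / ((n : ℝ) * T))|
            ≤ C / n := by
  
  have hT0 : 0 < T := hT
  -- a uniform bound α₁ ∈ [1/2, 1)
  set α₁ : ℝ := max α (1/2) with hα₁def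
  have hα₁h : (1/2:ℝ) ≤ α₁ := le_max_right _ _
  have hα₁0 : (0:ℝ) < α₁ := by linarith
  have hα₁1 : α₁ < 1 := by
    apply max_lt hα1; norm_num
  have hb1 : ∀ (t : ℤ), ∀ v ∈ Set.Icc (0:ℝ) 1, |a t v| ≤ α₁ :=
    fun t v hv => le_trans (hbdd t v hv) (le_max_left _ _)
  -- smoothness parameters
  set m : ℕ := lint ρ with hmdef
  have hceil1 : 1 ≤ ⌈ρ⌉₊ := Nat.one_le_ceil_iff.mpr (by linarith)
  have hmcast : (m:ℝ) = (⌈ρ⌉₊:ℝ) - 1 := by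
    rw [hmdef]; unfold lint
    rw [Nat.cast_sub hceil1]; norm_num
  set η : ℝ := ρ - (m:ℝ) with hηdef
  have hη : 0 < η := by
    have h := Nat.ceil_lt_add_one (show (0:ℝ) ≤ ρ by linarith)
    rw [hηdef, hmcast]; linarith
  have hη1 : η ≤ 1 := by
    have h := Nat.le_ceil ρ
    rw [hηdef, hmcast]; linarith
  have hone : η = 1 ∨ 1 ≤ m := by
    rcases Nat.eq_zero_or_pos m with h0 | h1
    · left
      have hle := Nat.le_ceil ρ
      have hc1 : ⌈ρ⌉₊ = 1 := by
        rw [hmdef] at h0; unfold lint at h0; omega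
      rw [hηdef, h0]
      rw [hc1] at hle
      push_cast at hle ⊢
      linarith
    · right; exact h1
  have hCHiff : ∀ f : ℝ → ℝ, CHolder ρ f ↔ CHaux m η f := by
    intro f
    unfold CHolder
    rw [hmdef, hηdef, hmdef]
    exact (chaux_iff (η := ρ - (lint ρ : ℝ))).symm
  -- CHaux facts for the coefficient functions
  have ha : ∀ t : ℤ, CHaux m η (a t) := fun t => (hCHiff (a t)).mp (hreg t)
  have hsq : ∀ t : ℤ, CHaux m η (fun v => (a t v)^2) := fun t =>
    chaux_congr (fun x _ => (sq (a t x)).symm) (chaux_mul hη hη1 (ha t) (ha t))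
  have hbeta_ch : ∀ (u : ℤ) (i : ℕ), CHaux m η (beta2 a u i) := fun u i =>
    chaux_congr (fun x _ => rfl)
      (chaux_prod hη hη1 (Finset.range (i+1)) (fun j v => (a (u - j) v)^2)
        (fun j _ => hsq (u - j)))
  -- pointwise bounds on beta2
  have hbeta_nonneg : ∀ (u : ℤ) (i : ℕ) (v : ℝ), 0 ≤ beta2 a u i v := fun u i v =>
    Finset.prod_nonneg fun j _ => sq_nonneg _
  have hbeta_le : ∀ (u : ℤ) (i : ℕ), ∀ v ∈ Set.Icc (0:ℝ) 1,
      beta2 a u i v ≤ (α₁^2)^(i+1) := by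
    intro u i v hv
    calc beta2 a u i v ≤ ∏ _j ∈ Finset.range (i+1), α₁^2 := by
          refine Finset.prod_le_prod (fun j _ => sq_nonneg _) (fun j _ => ?_)
          rw [← sq_abs]
          exact pow_le_pow_left₀ (abs_nonneg _) (hb1 _ v hv) 2
      _ = (α₁^2)^(i+1) := by rw [Finset.prod_const, Finset.card_range]
  have hα₁sq1 : α₁^2 < 1 := pow_lt_one₀ hα₁0.le hα₁1 (by norm_num)
  have hbeta_le1 : ∀ (u : ℤ) (i : ℕ), ∀ v ∈ Set.Icc (0:ℝ) 1, beta2 a u i v ≤ 1 :=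
    fun u i v hv => le_trans (hbeta_le u i v hv)
      (pow_le_one₀ (by positivity) hα₁sq1.le)
  set κ : ℝ := (α₁^2)^T with hκdef
  have hκ1 : κ < 1 := pow_lt_one₀ (by positivity) hα₁sq1 hT0.ne'
  have hT1 : T - 1 + 1 = T := Nat.succ_pred_eq_of_pos hT0
  have hPle : ∀ (u : ℤ), ∀ v ∈ Set.Icc (0:ℝ) 1, beta2 a u (T-1) v ≤ κ := by
    intro u v hv
    have h := hbeta_le u (T-1) v hv
    rwa [hT1] at h
  have hdenpos : (0:ℝ) < 1 - κ := by linarith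
  have hden : ∀ (u : ℤ), ∀ v ∈ Set.Icc (0:ℝ) 1,
      1 - κ ≤ 1 - beta2 a u (T-1) v := fun u v hv => by linarith [hPle u v hv]
  -- CHaux for gamma2
  have hgCH : ∀ u : ℤ, CHaux m η (gamma2 a T σ u) := by
    intro u
    have hnum : CHaux m η (fun v => σ^2 * (1 + ∑ i ∈ Finset.range (T-1), beta2 a u i v)) :=
      chaux_mul hη hη1 (chaux_const m (σ^2))
        (chaux_add (chaux_const m 1)
          (chaux_sum (Finset.range (T-1)) (fun i => beta2 a u i) (fun i _ => hbeta_ch u i)))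
    have hd : CHaux m η (fun v => 1 - beta2 a u (T-1) v) :=
      chaux_congr (fun x _ => by ring)
        (chaux_add (chaux_const m 1)
          (chaux_mul hη hη1 (chaux_const m (-1)) (hbeta_ch u (T-1))))
    have hdinv : CHaux m η (fun v => (1 - beta2 a u (T-1) v)⁻¹) := by
      refine chaux_inv hη hη1 hdenpos (fun v hv => ?_) hd
      rw [abs_of_nonneg (by linarith [hPle u v hv, hκ1])]
      exact hden u v hv
    exact chaux_congr (fun x _ => by simp only [gamma2, div_eq_mul_inv])
      (chaux_mul hη hη1 hnum hdinv)
  -- uniform bound for gamma2 on [0,1]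
  set MΓ : ℝ := σ^2 * T / (1-κ) with hMΓdef
  have hMΓ0 : 0 ≤ MΓ := by positivity
  have hGb : ∀ (u : ℤ), ∀ v ∈ Set.Icc (0:ℝ) 1, |gamma2 a T σ u v| ≤ MΓ := by
    intro u v hv
    have hS1 : ∑ i ∈ Finset.range (T-1), beta2 a u i v ≤ ((T-1:ℕ):ℝ) := by
      calc ∑ i ∈ Finset.range (T-1), beta2 a u i v
          ≤ ∑ _i ∈ Finset.range (T-1), (1:ℝ) :=
            Finset.sum_le_sum (fun i _ => hbeta_le1 u i v hv)
        _ = ((T-1:ℕ):ℝ) := by simp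
    have hS0 : 0 ≤ ∑ i ∈ Finset.range (T-1), beta2 a u i v :=
      Finset.sum_nonneg fun i _ => hbeta_nonneg u i v
    have hcst : ((T-1:ℕ):ℝ) = (T:ℝ) - 1 := by
      rw [Nat.cast_sub hT]; norm_num
    have hnum_le : σ^2 * (1 + ∑ i ∈ Finset.range (T-1), beta2 a u i v) ≤ σ^2 * T := by
      apply mul_le_mul_of_nonneg_left _ (sq_nonneg σ)
      rw [hcst] at hS1; linarith
    have hd1 := hden u v hv
    unfold gamma2
    rw [abs_of_nonneg (div_nonneg (by positivity) (by linarith))]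
    rw [hMΓdef]
    exact div_le_div₀ (by positivity) hnum_le hdenpos hd1
  -- uniform Lipschitz constant for gamma2
  choose Lf hLf0 hLf using fun r : ℕ => chaux_lipschitz (hgCH (r:ℤ)) hone
  have hTne : (Finset.range T).Nonempty := ⟨0, Finset.mem_range.mpr hT0⟩
  set L : ℝ := (Finset.range T).sup' hTne Lf with hLdef
  have hL0 : 0 ≤ L := le_trans (hLf0 0) (Finset.le_sup' Lf (Finset.mem_range.mpr hT0))
  have hΓmod : ∀ t : ℕ, ∀ v : ℝ, gamma2 a T σ (t:ℤ) v = gamma2 a T σ ((t % T : ℕ):ℤ) v := by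
    intro t
    induction t using Nat.strong_induction_on with
    | _ t ih =>
      intro v
      by_cases h : t < T
      · rw [Nat.mod_eq_of_lt h]
      · push_neg at h
        have h2 : ((t:ℕ):ℤ) = (((t - T:ℕ)):ℤ) + (T:ℤ) := by
          rw [Nat.cast_sub h]; ring
        have hmodeq : (t - T) % T = t % T := (Nat.mod_eq_sub_mod h).symm
        rw [h2, gamma2_per a σ hper, ih (t-T) (by omega) v, hmodeq]
  have hΓlipN : ∀ t : ℕ, ∀ u ∈ Set.Icc (0:ℝ) 1, ∀ v ∈ Set.Icc (0:ℝ) 1,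
      |gamma2 a T σ (t:ℤ) u - gamma2 a T σ (t:ℤ) v| ≤ L * |u - v| := by
    intro t u hu v hv
    rw [hΓmod t u, hΓmod t v]
    refine le_trans (hLf (t % T) u hu v hv) ?_
    exact mul_le_mul_of_nonneg_right
      (Finset.le_sup' Lf (Finset.mem_range.mpr (Nat.mod_lt t hT0))) (abs_nonneg _)
  -- moments of the innovations
  have hξid2 : ∀ t, IdentDistrib (fun ω => (ξ t ω)^2) (fun ω => (ξ 0 ω)^2) ℙ ℙ := by
    intro t
    have h := (hξid t).comp (measurable_id.pow_const 2)
    exact h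
  have hξmean' : ∀ t, ∫ ω, ξ t ω ∂ℙ = 0 := fun t => by
    rw [(hξid t).integral_eq]; exact hξmean
  have hξvar' : ∀ t, ∫ ω, (ξ t ω)^2 ∂ℙ = σ^2 := fun t => by
    rw [(hξid2 t).integral_eq]; exact hξvar
  have hξsq' : ∀ t, Integrable (fun ω => (ξ t ω)^2) ℙ := fun t =>
    (hξid2 t).integrable_iff.mpr hξsq
  have hξL2 : ∀ t, MemLp (ξ t) 2 ℙ := fun t =>
    (memLp_two_iff_integrable_sq (hξmeas t).aestronglyMeasurable).mpr (hξsq' t)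
  have hX0L2 : MemLp X0 2 ℙ :=
    (memLp_two_iff_integrable_sq hX0meas.aestronglyMeasurable).mpr hX0sq
  -- filtration
  set M : ℕ → MeasurableSpace Ω := fun t =>
    (MeasurableSpace.comap X0 inferInstance) ⊔
      ⨆ i ∈ Finset.range (t+1), MeasurableSpace.comap (ξ i) inferInstance with hMdef
  have hMle : ∀ t, M t ≤ (inferInstance : MeasurableSpace Ω) := fun t =>
    sup_le hX0meas.comap_le (iSup₂_le fun i _ => (hξmeas i).comap_le)
  have hMmono : ∀ t, M t ≤ M (t+1) := by
    intro t
    refine sup_le le_sup_left (le_trans ?_ le_sup_right)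
    refine iSup₂_le fun i hi => ?_
    exact le_iSup₂ (f := fun (i : ℕ) (_ : i ∈ Finset.range (t+2)) =>
      MeasurableSpace.comap (ξ i) inferInstance) i
      (Finset.mem_range.mpr (by have := Finset.mem_range.mp hi; omega))
  -- measurability and square integrability of the process
  have hXstr : ∀ n, 1 ≤ n → ∀ t, t ≤ n*T →
      Measurable[M t] (X n t) ∧ MemLp (X n t) 2 ℙ := by
    intro n hn t
    induction t with
    | zero =>
      intro _
      have hX00 : X n 0 = X0 := funext (hXinit n)
      constructor
      · rw [hX00]
        exact Measurable.mono (Measurable.of_comap_le le_rfl) le_sup_left le_rfl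
      · rw [hX00]; exact hX0L2
    | succ t ih =>
      intro hle
      obtain ⟨ihm, ihL⟩ := ih (by omega)
      have hXe : X n (t+1) = fun ω =>
          a ((t+1:ℕ):ℤ) (((t+1:ℕ):ℝ)/((n:ℝ)*T)) * X n t ω + ξ (t+1) ω := by
        funext ω
        rw [hXrec n (t+1) (by omega) hle ω, Nat.add_sub_cancel]
      constructor
      · rw [hXe]
        have h1 : Measurable[M (t+1)] (X n t) := ihm.mono (hMmono t) le_rfl
        have h2 : Measurable[M (t+1)] (ξ (t+1)) := by
          refine Measurable.mono (Measurable.of_comap_le le_rfl) ?_ le_rfl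
          refine le_trans ?_ le_sup_right
          exact le_iSup₂ (f := fun (i : ℕ) (_ : i ∈ Finset.range (t+2)) =>
            MeasurableSpace.comap (ξ i) inferInstance) (t+1)
            (Finset.mem_range.mpr (by omega))
        exact (h1.const_mul _).add h2
      · rw [hXe]
        exact (ihL.const_mul _).add (hξL2 (t+1))
  -- second-moment recursion
  have hrec : ∀ n, 1 ≤ n → ∀ t, t+1 ≤ n*T →
      ∫ ω, (X n (t+1) ω)^2 ∂ℙ
        = (a ((t+1:ℕ):ℤ) (((t+1:ℕ):ℝ)/((n:ℝ)*T)))^2 * ∫ ω, (X n t ω)^2 ∂ℙ + σ^2 := by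
    intro n hn t hle
    obtain ⟨hm, hL2⟩ := hXstr n hn t (by omega)
    set c := a ((t+1:ℕ):ℤ) (((t+1:ℕ):ℝ)/((n:ℝ)*T)) with hcdef
    have hYmeas : Measurable (X n t) := hm.mono (hMle t) le_rfl
    have hindep : IndepFun (X n t) (ξ (t+1)) ℙ := by
      have hJ := indep_join hprob X0 hX0meas ξ hξmeas hξindep hindX0 (t+1)
      refine (IndepFun_iff_Indep _ _ _).mpr ?_
      exact indep_of_indep_of_le_left hJ (measurable_iff_comap_le.mp hm)
    have hint_sq_Y : Integrable (fun ω => (X n t ω)^2) ℙ :=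
      (memLp_two_iff_integrable_sq hYmeas.aestronglyMeasurable).mp hL2
    have hint_sq_Z := hξsq' (t+1)
    have hYint : Integrable (X n t) ℙ := hL2.integrable one_le_two
    have hZint : Integrable (ξ (t+1)) ℙ := (hξL2 (t+1)).integrable one_le_two
    have hYZ : Integrable (fun ω => X n t ω * ξ (t+1) ω) ℙ :=
      hindep.integrable_mul hYint hZint
    have hcross : ∫ ω, X n t ω * ξ (t+1) ω ∂ℙ = 0 := by
      have h := hindep.integral_mul_eq_mul_integral hYmeas.aestronglyMeasurable
        (hξmeas (t+1)).aestronglyMeasurable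
      have h2 : ∫ ω, X n t ω * ξ (t+1) ω ∂ℙ
          = (∫ ω, X n t ω ∂ℙ) * ∫ ω, ξ (t+1) ω ∂ℙ := h
      rw [h2, hξmean' (t+1), mul_zero]
    have hXe2 : (fun ω => (X n (t+1) ω)^2)
        = fun ω => ((c^2 * (X n t ω)^2 + (2*c) * (X n t ω * ξ (t+1) ω)) + (ξ (t+1) ω)^2) := by
      funext ω
      rw [hXrec n (t+1) (by omega) hle ω, Nat.add_sub_cancel, ← hcdef]
      ring
    have hi1 : Integrable (fun ω => c^2 * (X n t ω)^2 + (2*c) * (X n t ω * ξ (t+1) ω)) ℙ := by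
      exact (hint_sq_Y.const_mul _).add (hYZ.const_mul _)
    have h1 : ∫ ω, (X n (t+1) ω)^2 ∂ℙ
        = ∫ ω, ((c^2 * (X n t ω)^2 + (2*c) * (X n t ω * ξ (t+1) ω)) + (ξ (t+1) ω)^2) ∂ℙ := by
      rw [hXe2]
    rw [h1, integral_add hi1 hint_sq_Z,
      integral_add (hint_sq_Y.const_mul _) (hYZ.const_mul _),
      integral_const_mul, integral_const_mul, hcross, hξvar' (t+1)]
    ring
  -- now fix s and prove the statement
  intro s hs1 hsT
  refine ⟨(hCHiff _).mpr (hgCH (s:ℤ)), ?_⟩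
  -- constants
  set K0 : ℝ := |∫ ω, (X0 ω)^2 ∂ℙ| + MΓ with hK0def
  have hK00 : 0 ≤ K0 := by positivity
  set L' : ℝ := L * (1 - α₁^2)⁻¹ with hL'def
  have h1mB : (0:ℝ) < 1 - α₁^2 := by linarith
  have hL'0 : 0 ≤ L' := mul_nonneg hL0 (by positivity)
  have hℓ : 0 < Real.log α₁⁻¹ := by
    rw [Real.log_inv]
    have := Real.log_neg hα₁0 hα₁1
    linarith
  refine ⟨(2 * Real.log α₁⁻¹)⁻¹, K0 + L' + 1, by positivity, by positivity, ?_⟩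
  intro n hn t htlow hthigh hmod
  have hn1 : (1:ℝ) ≤ (n:ℝ) := by exact_mod_cast hn
  have hT1R : (1:ℝ) ≤ (T:ℝ) := by exact_mod_cast hT
  have hnT1 : (1:ℝ) ≤ (n:ℝ) * T := by
    have h := mul_le_mul hn1 hT1R (by norm_num) (by linarith)
    simpa using h
  have hnT0 : (0:ℝ) < (n:ℝ) * T := by linarith
  have hvmem : ∀ u : ℕ, u ≤ n*T → ((u:ℝ)/((n:ℝ)*T)) ∈ Set.Icc (0:ℝ) 1 := by
    intro u hu
    constructor
    · positivity
    · rw [div_le_one hnT0]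
      have : ((u:ℝ)) ≤ ((n*T:ℕ):ℝ) := by exact_mod_cast hu
      rwa [Nat.cast_mul] at this
  -- the error recursion
  have key : ∀ u : ℕ, u ≤ n*T →
      |(∫ ω, (X n u ω)^2 ∂ℙ) - gamma2 a T σ (u:ℤ) ((u:ℝ)/((n:ℝ)*T))|
        ≤ α₁^(2*u) * K0 + L * (1-α₁^2)⁻¹ / ((n:ℝ)*T) := by
    intro u
    induction u with
    | zero =>
      intro _
      have hXe0 : (fun ω => (X n 0 ω)^2) = fun ω => (X0 ω)^2 := by
        funext ω; rw [hXinit n ω]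
      have h0 : ∫ ω, (X n 0 ω)^2 ∂ℙ = ∫ ω, (X0 ω)^2 ∂ℙ := by rw [hXe0]
      rw [h0]
      have hb := hGb ((0:ℕ):ℤ) (((0:ℕ):ℝ)/((n:ℝ)*T)) (hvmem 0 (by omega))
      have htri : |(∫ ω, (X0 ω)^2 ∂ℙ) - gamma2 a T σ ((0:ℕ):ℤ) (((0:ℕ):ℝ)/((n:ℝ)*T))|
          ≤ |∫ ω, (X0 ω)^2 ∂ℙ| + |gamma2 a T σ ((0:ℕ):ℤ) (((0:ℕ):ℝ)/((n:ℝ)*T))| := by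
        calc |(∫ ω, (X0 ω)^2 ∂ℙ) - gamma2 a T σ ((0:ℕ):ℤ) (((0:ℕ):ℝ)/((n:ℝ)*T))|
            = |(∫ ω, (X0 ω)^2 ∂ℙ) + -(gamma2 a T σ ((0:ℕ):ℤ) (((0:ℕ):ℝ)/((n:ℝ)*T)))| := by
              rw [sub_eq_add_neg]
          _ ≤ _ := by
              refine le_trans (abs_add_le _ _) ?_
              rw [abs_neg]
      have hpos : 0 ≤ L * (1-α₁^2)⁻¹ / ((n:ℝ)*T) := by positivity
      have : α₁^(2*0) * K0 = K0 := by norm_num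
      rw [this]
      rw [hK0def]
      linarith
    | succ u ih =>
      intro hle
      have hu : u ≤ n*T := by omega
      have hihb := ih hu
      have hv1 : (((u+1:ℕ):ℝ)/((n:ℝ)*T)) ∈ Set.Icc (0:ℝ) 1 := hvmem (u+1) hle
      have hv0 : (((u:ℕ):ℝ)/((n:ℝ)*T)) ∈ Set.Icc (0:ℝ) 1 := hvmem u hu
      have hA : |a ((u+1:ℕ):ℤ) (((u+1:ℕ):ℝ)/((n:ℝ)*T))| ≤ α₁ := hb1 _ _ hv1
      have hrec1 := hrec n hn u hle
      have hgrec := gamma2_rec a σ hT hper ((u+1:ℕ):ℤ) (((u+1:ℕ):ℝ)/((n:ℝ)*T))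
        (lt_of_le_of_lt (hPle _ _ hv1) hκ1)
      rw [show ((u+1:ℕ):ℤ) - 1 = ((u:ℕ):ℤ) from by push_cast; ring] at hgrec
      set A := a ((u+1:ℕ):ℤ) (((u+1:ℕ):ℝ)/((n:ℝ)*T)) with hAdef
      set E1 := ∫ ω, (X n (u+1) ω)^2 ∂ℙ with hE1def
      set E0 := ∫ ω, (X n u ω)^2 ∂ℙ with hE0def
      set G1 := gamma2 a T σ ((u+1:ℕ):ℤ) (((u+1:ℕ):ℝ)/((n:ℝ)*T)) with hG1def
      set Gm := gamma2 a T σ ((u:ℕ):ℤ) (((u+1:ℕ):ℝ)/((n:ℝ)*T)) with hGmdef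
      set G0 := gamma2 a T σ ((u:ℕ):ℤ) (((u:ℕ):ℝ)/((n:ℝ)*T)) with hG0def
      have hdiff : E1 - G1 = A^2 * (E0 - Gm) := by
        rw [hrec1, hgrec]; ring
      have hsplit : |E0 - Gm| ≤ |E0 - G0| + |G0 - Gm| := abs_sub_le _ _ _
      have hvd : |((u:ℕ):ℝ)/((n:ℝ)*T) - ((u+1:ℕ):ℝ)/((n:ℝ)*T)| = 1/((n:ℝ)*T) := by
        rw [div_sub_div_same]
        rw [show ((u:ℕ):ℝ) - ((u+1:ℕ):ℝ) = -1 from by push_cast; ring]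
        rw [abs_div, abs_neg, abs_one, abs_of_pos hnT0]
      have hlip : |G0 - Gm| ≤ L * (1/((n:ℝ)*T)) := by
        rw [hG0def, hGmdef, ← hvd]
        exact hΓlipN u _ hv0 _ hv1
      have hA2 : A^2 ≤ α₁^2 := by
        rw [← sq_abs]
        exact pow_le_pow_left₀ (abs_nonneg _) hA 2
      have hrel : α₁^2 * (L*(1-α₁^2)⁻¹/((n:ℝ)*T) + L * (1/((n:ℝ)*T)))
          ≤ L*(1-α₁^2)⁻¹/((n:ℝ)*T) := by
        rw [mul_one_div, ← add_div, ← mul_div_assoc]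
        rw [div_le_div_iff_of_pos_right hnT0]
        have hw : (1-α₁^2)⁻¹ * (1-α₁^2) = 1 := inv_mul_cancel₀ h1mB.ne'
        have h3 : α₁^2 * (L*(1-α₁^2)⁻¹ + L) - L*(1-α₁^2)⁻¹ = L*(α₁^2 - 1) := by
          linear_combination (-L) * hw
        have h4 : L*(α₁^2 - 1) ≤ 0 :=
          mul_nonpos_iff.mpr (Or.inl ⟨hL0, by linarith⟩)
        linarith
      have hpow : α₁^(2*(u+1)) = α₁^(2*u) * α₁^2 := by
        rw [← pow_add]; ring_nf
      calc |E1 - G1| = A^2 * |E0 - Gm| := by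
            rw [hdiff, abs_mul, abs_of_nonneg (sq_nonneg A)]
        _ ≤ α₁^2 * ((α₁^(2*u) * K0 + L * (1-α₁^2)⁻¹ / ((n:ℝ)*T)) + L * (1/((n:ℝ)*T))) := by
            refine mul_le_mul hA2 ?_ (abs_nonneg _) (by positivity)
            refine le_trans hsplit ?_
            exact add_le_add hihb hlip
        _ = α₁^(2*u) * α₁^2 * K0
            + α₁^2 * (L*(1-α₁^2)⁻¹/((n:ℝ)*T) + L * (1/((n:ℝ)*T))) := by ring
        _ ≤ α₁^(2*(u+1)) * K0 + L * (1-α₁^2)⁻¹ / ((n:ℝ)*T) := by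
            rw [hpow]
            linarith [hrel]
  -- conclude
  have hkey := key t hthigh
  have hΓst : gamma2 a T σ (t:ℤ) ((t:ℝ)/((n:ℝ)*T)) = gamma2 a T σ (s:ℤ) ((t:ℝ)/((n:ℝ)*T)) := by
    rw [hΓmod t, hΓmod s, hmod]
  rw [hΓst] at hkey
  -- decay of the geometric term
  have hnpos : (0:ℝ) < n := by linarith
  have hgeo : α₁^(2*t) ≤ ((n:ℝ))⁻¹ := by
    have hceil : (((2 * Real.log α₁⁻¹)⁻¹ * Real.log n : ℝ)) ≤ (t:ℝ) := by
      refine le_trans (Nat.le_ceil _) ?_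
      exact_mod_cast htlow
    have hlogn0 : 0 ≤ Real.log n := Real.log_nonneg hn1
    have hkey2 : Real.log n ≤ (2*t) * Real.log α₁⁻¹ := by
      have h2 : ((2 * Real.log α₁⁻¹)⁻¹ * Real.log n) * (2 * Real.log α₁⁻¹) = Real.log n := by
        rw [mul_comm ((2 * Real.log α₁⁻¹)⁻¹) (Real.log n), mul_assoc,
          inv_mul_cancel₀ (ne_of_gt (by linarith)), mul_one]
      calc Real.log n = ((2 * Real.log α₁⁻¹)⁻¹ * Real.log n) * (2 * Real.log α₁⁻¹) := h2.symm
        _ ≤ (t:ℝ) * (2 * Real.log α₁⁻¹) := by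
            refine mul_le_mul_of_nonneg_right hceil (by positivity)
        _ = (2*t) * Real.log α₁⁻¹ := by push_cast; ring
    have hpowpos : (0:ℝ) < α₁^(2*t) := pow_pos hα₁0 _
    rw [← Real.log_le_log_iff hpowpos (inv_pos.mpr hnpos)]
    rw [Real.log_pow, Real.log_inv]
    have hla : Real.log α₁ = - Real.log α₁⁻¹ := by rw [Real.log_inv]; ring
    rw [hla]
    push_cast
    linarith [hkey2]
  have hfin1 : α₁^(2*t) * K0 ≤ K0 / n := by
    rw [div_eq_mul_inv, mul_comm K0 _]
    exact mul_le_mul_of_nonneg_right hgeo hK00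
  have hfin2 : L * (1-α₁^2)⁻¹ / ((n:ℝ)*T) ≤ L' / n := by
    rw [hL'def]
    refine div_le_div_of_nonneg_left (by positivity) hnpos ?_
    calc (n:ℝ) = n * 1 := by ring
      _ ≤ n * T := by
          refine mul_le_mul_of_nonneg_left hT1R (by linarith)
  have hfin3 : (0:ℝ) < 1 / n := by positivity
  calc |(∫ ω, (X n t ω) ^ 2 ∂ℙ) - gamma2 a T σ (s : ℤ) ((t : ℝ) / ((n : ℝ) * T))|
      ≤ α₁^(2*t) * K0 + L * (1-α₁^2)⁻¹ / ((n:ℝ)*T) := hkey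
    _ ≤ K0 / n + L' / n := add_le_add hfin1 hfin2
    _ ≤ (K0 + L' + 1) / n := by
        rw [← add_div]
        exact (div_le_div_iff_of_pos_right hnpos).mpr (by linarith)
end
end

section
/- Under Assumption A(ρ), there exist constants C > 0 and c > 0 such that for all n ≥ 1 and all integers t with T < t ≤ nT and t ≥ c·log n, one has |E[(X_t^{(n)})²] − E[(X_{t−T}^{(n)})²]| ≤ C · n^{−(ρ∧1)}. -/
open MeasureTheory ProbabilityTheory Filter Set
open scoped ProbabilityTheory

noncomputable section

/-- Product of two `L²` functions is integrable. -/
lemma l2_mul_integrable {Ω : Type*} [MeasureSpace Ω] {f g : Ω → ℝ}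
    (hf : MemLp f 2 (ℙ : Measure Ω)) (hg : MemLp g 2 (ℙ : Measure Ω)) :
    Integrable (fun ω => f ω * g ω) (ℙ : Measure Ω) := by
  have h1 : Integrable (fun ω => f ω ^ 2) ℙ := hf.integrable_sq
  have h2 : Integrable (fun ω => g ω ^ 2) ℙ := hg.integrable_sq
  refine Integrable.mono' (((h1.add h2)).div_const 2) (hf.1.mul hg.1) ?_
  refine Filter.Eventually.of_forall fun ω => ?_
  have : |f ω * g ω| ≤ (f ω ^ 2 + g ω ^ 2) / 2 := by
    rw [abs_mul]
    nlinarith [sq_nonneg (|f ω| - |g ω|), sq_abs (f ω), sq_abs (g ω),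
      abs_nonneg (f ω), abs_nonneg (g ω)]
  simpa [Real.norm_eq_abs, abs_mul] using this

set_option maxHeartbeats 4000000 in
/-- Under Assumption A(ρ), there exist constants `C, c > 0` such
that for all `n ≥ 1` and all `T < t ≤ nT` with `t ≥ c log n`, one has
`|E[(X_t^{(n)})²] − E[(X_{t−T}^{(n)})²]| ≤ C n^{−(ρ∧1)}`. -/
theorem statement13
    {Ω : Type*} [MeasureSpace Ω] (hprob : IsProbabilityMeasure (ℙ : Measure Ω))
    (T : ℕ) (hT : 1 ≤ T) (ρ : ℝ) (hρ : 0 < ρ)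
    -- Assumption A(ρ)
    (a : ℤ → ℝ → ℝ) (α : ℝ) (hα1 : α < 1)
    (hper : ∀ (t : ℤ) (v : ℝ), a (t + T) v = a t v)
    (hbdd : ∀ (t : ℤ), ∀ v ∈ Set.Icc (0:ℝ) 1, |a t v| ≤ α)
    (hreg : ∀ t : ℤ, CHolder ρ (a t))
    -- the i.i.d. innovations, with mean 0 and variance σ² ∈ (0,∞)
    (ξ : ℕ → Ω → ℝ) (hξmeas : ∀ t, Measurable (ξ t))
    (hξindep : iIndepFun ξ ℙ)
    (hξid : ∀ t, IdentDistrib (ξ t) (ξ 0) ℙ ℙ)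
    (hξmean : ∫ ω, ξ 0 ω ∂ℙ = 0)
    (σ : ℝ) (hσ : 0 < σ)
    (hξvar : ∫ ω, (ξ 0 ω) ^ 2 ∂ℙ = σ ^ 2)
    (hξsq : Integrable (fun ω => (ξ 0 ω) ^ 2) ℙ)
    -- the initial value: square integrable and independent of the innovations
    (X0 : Ω → ℝ) (hX0meas : Measurable X0)
    (hX0sq : Integrable (fun ω => (X0 ω) ^ 2) ℙ)
    (hindX0 : Indep (MeasurableSpace.comap X0 inferInstance)
      (⨆ t, MeasurableSpace.comap (ξ t) inferInstance) ℙ)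
    -- the process
    (X : ℕ → ℕ → Ω → ℝ)
    (hXinit : ∀ n ω, X n 0 ω = X0 ω)
    (hXrec : ∀ n t, 1 ≤ t → t ≤ n * T →
      ∀ ω, X n t ω = a (t : ℤ) ((t : ℝ) / ((n : ℝ) * T)) * X n (t - 1) ω + ξ t ω)
 :
    ∃ C c : ℝ, 0 < C ∧ 0 < c ∧
      ∀ n : ℕ, 1 ≤ n → ∀ t : ℕ, T < t → t ≤ n * T → c * Real.log n ≤ t →
        |(∫ ω, (X n t ω) ^ 2 ∂ℙ) - ∫ ω, (X n (t - T) ω) ^ 2 ∂ℙ|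
          ≤ C * (n : ℝ) ^ (-(min ρ 1)) := by
  have hα0 : 0 ≤ α := le_trans (abs_nonneg _) (hbdd 0 0 ⟨le_rfl, zero_le_one⟩)
  set e : ℝ := min ρ 1 with he
  have he0 : 0 < e := lt_min hρ one_pos
  have he1 : e ≤ 1 := min_le_right _ _
  -- β : a positive strict contraction factor
  set β : ℝ := max α 2⁻¹ with hβ
  have hβ0 : 0 < β := lt_of_lt_of_le (by norm_num) (le_max_right _ _)
  have hβ1 : β < 1 := max_lt hα1 (by norm_num)
  have hαβ : α ≤ β := le_max_left _ _
  have hβ2 : β ^ 2 < 1 := by nlinarith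
  have h1β2 : 0 < 1 - β ^ 2 := by linarith
  have hlogβ : Real.log β < 0 := Real.log_neg hβ0 hβ1
  -- uniform Hölder-type constant
  have hone : ∀ s : ℤ, ∃ K, 0 ≤ K ∧ ∀ u ∈ Icc (0:ℝ) 1, ∀ v ∈ Icc (0:ℝ) 1,
      |a s u - a s v| ≤ K * |u - v| ^ e := by
    intro s
    obtain ⟨hcd, C, hC0, hH⟩ := hreg s
    rcases le_or_gt ρ 1 with h1 | h1
    · have hceil : ⌈ρ⌉₊ = 1 :=
        le_antisymm (Nat.ceil_le.mpr (by norm_num [h1])) (Nat.one_le_ceil_iff.mpr hρ)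
      have hl : lint ρ = 0 := by simp [lint, hceil]
      refine ⟨C, hC0, fun u hu v hv => ?_⟩
      have h3 := hH u hu v hv
      rw [hl] at h3
      simp only [iteratedDerivWithin_zero, Nat.cast_zero, sub_zero] at h3
      rw [he, min_eq_left h1]
      exact h3
    · have hl1 : 1 ≤ lint ρ := by
        have h2 : 1 < ⌈ρ⌉₊ := Nat.lt_ceil.mpr (by exact_mod_cast h1)
        unfold lint; omega
      have hcd1 : ContDiffOn ℝ 1 (a s) (Icc 0 1) := hcd.of_le (by exact_mod_cast hl1)
      have hdiff : DifferentiableOn ℝ (a s) (Icc 0 1) := hcd1.differentiableOn one_ne_zero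
      have hcont : ContinuousOn (derivWithin (a s) (Icc 0 1)) (Icc 0 1) :=
        hcd1.continuousOn_derivWithin (uniqueDiffOn_Icc one_pos) le_rfl
      obtain ⟨C', hC'⟩ := isCompact_Icc.exists_bound_of_continuousOn hcont
      refine ⟨max C' 0, le_max_right _ _, fun u hu v hv => ?_⟩
      have hb := Convex.norm_image_sub_le_of_norm_derivWithin_le (C := max C' 0) hdiff
        (fun x hx => le_trans (hC' x hx) (le_max_left _ _)) (convex_Icc 0 1) hv hu
      rw [he, min_eq_right h1.le, Real.rpow_one]
      simpa [Real.norm_eq_abs] using hb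
  have hmod : ∀ (t : ℕ) (v : ℝ), a t v = a ((t % T : ℕ) : ℤ) v := by
    intro t v
    have key : ∀ (k : ℕ) (s : ℤ), a (s + k * T) v = a s v := by
      intro k
      induction k with
      | zero => simp
      | succ k ih =>
        intro s
        have h : (s + (k + 1 : ℕ) * (T:ℤ)) = (s + k * T) + T := by push_cast; ring
        rw [h, hper, ih]
    have ht : (t : ℤ) = ((t % T : ℕ) : ℤ) + ((t / T : ℕ) : ℤ) * T := by
      exact_mod_cast (Nat.mod_add_div' t T).symm
    rw [ht, key]
  obtain ⟨K, hK0, hK⟩ : ∃ K, 0 ≤ K ∧ ∀ (t : ℕ), ∀ u ∈ Icc (0:ℝ) 1, ∀ v ∈ Icc (0:ℝ) 1,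
      |a t u - a t v| ≤ K * |u - v| ^ e := by
    choose g hg0 hgH using fun r : ℕ => hone (r : ℤ)
    have hne : (Finset.range T).Nonempty := ⟨0, Finset.mem_range.mpr hT⟩
    refine ⟨(Finset.range T).sup' hne g,
      le_trans (hg0 0) (Finset.le_sup' g (Finset.mem_range.mpr hT)), fun t u hu v hv => ?_⟩
    rw [hmod t u, hmod t v]
    refine le_trans (hgH (t % T) u hu v hv) ?_
    have hmem : t % T ∈ Finset.range T := Finset.mem_range.mpr (Nat.mod_lt t hT)
    exact mul_le_mul_of_nonneg_right (Finset.le_sup' g hmem)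
      (Real.rpow_nonneg (abs_nonneg _) _)
  -- probabilistic preliminaries
  have hξ0L2 : MemLp (ξ 0) 2 ℙ :=
    (memLp_two_iff_integrable_sq (hξmeas 0).aestronglyMeasurable).mpr hξsq
  have hξL2 : ∀ t, MemLp (ξ t) 2 ℙ := fun t => (hξid t).memLp_iff.mpr hξ0L2
  have hξm : ∀ t, ∫ ω, ξ t ω ∂ℙ = 0 := fun t => (hξid t).integral_eq.trans hξmean
  have hξv : ∀ t, ∫ ω, (ξ t ω) ^ 2 ∂ℙ = σ ^ 2 := by
    intro t
    have h := ((hξid t).comp (measurable_id.pow_const 2)).integral_eq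
    simp only [Function.comp] at h
    exact h.trans hξvar
  have hX0L2 : MemLp X0 2 ℙ :=
    (memLp_two_iff_integrable_sq hX0meas.aestronglyMeasurable).mpr hX0sq
  have hX0ξ : ∀ t, IndepFun X0 (ξ t) ℙ := by
    intro t
    rw [indepFun_iff_measure_inter_preimage_eq_mul]
    intro s u hs hu
    refine (Indep_iff _ _ _).mp hindX0 (X0 ⁻¹' s) (ξ t ⁻¹' u) ⟨s, hs, rfl⟩ ?_
    exact le_iSup (fun i => MeasurableSpace.comap (ξ i) inferInstance) t (ξ t ⁻¹' u) ⟨u, hu, rfl⟩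
  have hξξ : ∀ s t : ℕ, s ≠ t → IndepFun (ξ s) (ξ t) ℙ := fun s t h => hξindep.indepFun h
  -- constants
  set M : ℝ := max (∫ ω, (X0 ω) ^ 2 ∂ℙ) (σ ^ 2 / (1 - β ^ 2)) with hMdef
  have hM0 : 0 ≤ M :=
    le_trans (le_of_lt (div_pos (pow_pos hσ 2) h1β2)) (le_max_right _ _)
  have hMσ : σ ^ 2 / (1 - β ^ 2) ≤ M := le_max_right _ _
  set S : ℝ := 2 * K * M / (1 - β ^ 2) with hSdef
  have hS0 : 0 ≤ S := div_nonneg (by positivity) h1β2.le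
  have hSK : 2 * K * M = S * (1 - β ^ 2) := by
    rw [hSdef]; field_simp
  set C : ℝ := M / β ^ (2 * T + 2) + S + 1 with hCdef
  have hC0 : 0 < C := by positivity
  set c : ℝ := 1 / (2 * (-Real.log β)) with hcdef
  have hc0 : 0 < c := by
    apply div_pos one_pos; linarith
  refine ⟨C, c, hC0, hc0, ?_⟩
  intro n hn t htT htn hclog
  have hnR : (0:ℝ) < (n:ℝ) := by exact_mod_cast hn
  have hTR : (0:ℝ) < (T:ℝ) := by exact_mod_cast hT
  have hnTR : (0:ℝ) < (n:ℝ) * T := mul_pos hnR hTR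
  -- the coefficient sequence
  set A : ℕ → ℝ := fun s => a (s : ℤ) ((s : ℝ) / ((n : ℝ) * T)) with hA
  have hmem : ∀ s : ℕ, s ≤ n * T → ((s : ℝ) / ((n : ℝ) * T)) ∈ Icc (0:ℝ) 1 := by
    intro s hs
    constructor
    · positivity
    · rw [div_le_one hnTR]
      calc (s:ℝ) ≤ ((n*T : ℕ) : ℝ) := by exact_mod_cast hs
        _ = (n:ℝ) * T := by push_cast; ring
  have hAb : ∀ s : ℕ, s ≤ n * T → |A s| ≤ β := by
    intro s hs
    exact le_trans (hbdd _ _ (hmem s hs)) hαβ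
  have hA2 : ∀ s : ℕ, s ≤ n * T → (A s) ^ 2 ≤ β ^ 2 := by
    intro s hs
    calc (A s) ^ 2 = |A s| ^ 2 := (sq_abs _).symm
      _ ≤ β ^ 2 := pow_le_pow_left₀ (abs_nonneg _) (hAb s hs) 2
  -- L² membership
  have hL2X : ∀ s : ℕ, s ≤ n * T → MemLp (X n s) 2 ℙ := by
    intro s
    induction s with
    | zero =>
      intro _
      have h : X n 0 = X0 := funext (hXinit n)
      rw [h]; exact hX0L2
    | succ s ih =>
      intro hle
      have hs : s ≤ n * T := le_trans (Nat.le_succ s) hle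
      have hfun : X n (s+1) = fun ω => A (s+1) * X n s ω + ξ (s+1) ω := by
        funext ω
        simp only [hA]
        simpa using hXrec n (s+1) (Nat.succ_le_succ (Nat.zero_le s)) hle ω
      rw [hfun]
      exact ((ih hs).const_mul _).add (hξL2 _)
  -- orthogonality
  have hXortho : ∀ s : ℕ, s ≤ n * T → ∀ t', s < t' → ∫ ω, X n s ω * ξ t' ω ∂ℙ = 0 := by
    intro s
    induction s with
    | zero =>
      intro _ t' _
      have h : (fun ω => X n 0 ω * ξ t' ω) = fun ω => X0 ω * ξ t' ω := by
        funext ω; rw [hXinit]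
      rw [h, (hX0ξ t').integral_fun_mul_eq_mul_integral hX0meas.aestronglyMeasurable
        (hξmeas t').aestronglyMeasurable, hξm t', mul_zero]
    | succ s ih =>
      intro hle t' ht'
      have hs : s ≤ n * T := le_trans (Nat.le_succ s) hle
      have h1 : Integrable (fun ω => X n s ω * ξ t' ω) ℙ :=
        l2_mul_integrable (hL2X s hs) (hξL2 t')
      have h2 : Integrable (fun ω => ξ (s+1) ω * ξ t' ω) ℙ :=
        l2_mul_integrable (hξL2 (s+1)) (hξL2 t')
      have hfun : (fun ω => X n (s+1) ω * ξ t' ω)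
          = fun ω => A (s+1) * (X n s ω * ξ t' ω) + ξ (s+1) ω * ξ t' ω := by
        funext ω
        simp only [hA]
        have := hXrec n (s+1) (Nat.succ_le_succ (Nat.zero_le s)) hle ω
        simp only [Nat.add_sub_cancel] at this
        rw [this]; ring
      rw [hfun, integral_add (h1.const_mul _) h2, integral_const_mul _ _,
        ih hs t' (lt_trans (Nat.lt_succ_self s) ht'),
        (hξξ (s+1) t' (Nat.ne_of_lt ht')).integral_fun_mul_eq_mul_integral (hξmeas _).aestronglyMeasurable
          (hξmeas _).aestronglyMeasurable, hξm t']
      ring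
  -- second moments
  set m : ℕ → ℝ := fun s => ∫ ω, (X n s ω) ^ 2 ∂ℙ with hm
  have hrecm : ∀ s : ℕ, 1 ≤ s → s ≤ n * T → m s = (A s) ^ 2 * m (s - 1) + σ ^ 2 := by
    intro s hs1 hs2
    have hs1' : s - 1 ≤ n * T := le_trans (Nat.sub_le s 1) hs2
    have h1 : Integrable (fun ω => (X n (s-1) ω) ^ 2) ℙ := (hL2X (s-1) hs1').integrable_sq
    have h2 : Integrable (fun ω => X n (s-1) ω * ξ s ω) ℙ :=
      l2_mul_integrable (hL2X (s-1) hs1') (hξL2 s)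
    have h3 : Integrable (fun ω => (ξ s ω) ^ 2) ℙ := (hξL2 s).integrable_sq
    have hfun : (fun ω => (X n s ω) ^ 2)
        = fun ω => (A s) ^ 2 * (X n (s-1) ω) ^ 2
          + (2 * A s) * (X n (s-1) ω * ξ s ω) + (ξ s ω) ^ 2 := by
      funext ω
      simp only [hA]
      rw [hXrec n s hs1 hs2 ω]; ring
    have hc1 : Integrable (fun ω => (A s) ^ 2 * (X n (s-1) ω) ^ 2) ℙ := h1.const_mul _
    have hc2 : Integrable (fun ω => (2 * A s) * (X n (s-1) ω * ξ s ω)) ℙ := h2.const_mul _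
    have hc12 : Integrable (fun ω => (A s) ^ 2 * (X n (s-1) ω) ^ 2
        + (2 * A s) * (X n (s-1) ω * ξ s ω)) ℙ := hc1.add hc2
    simp only [hm]
    rw [hfun, integral_add hc12 h3, integral_add hc1 hc2, integral_const_mul _ _,
      integral_const_mul _ _, hXortho (s-1) hs1' s (Nat.sub_lt hs1 one_pos), hξv s]
    ring
  have hm0 : ∀ s : ℕ, 0 ≤ m s := fun s => integral_nonneg (fun ω => sq_nonneg _)
  have hmM : ∀ s : ℕ, s ≤ n * T → m s ≤ M := by
    intro s
    induction s with
    | zero =>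
      intro _
      have h : X n 0 = X0 := funext (hXinit n)
      rw [hm]; simp only [h]
      exact le_max_left _ _
    | succ s ih =>
      intro hle
      have hs : s ≤ n * T := le_trans (Nat.le_succ s) hle
      have hr := hrecm (s+1) (Nat.succ_le_succ (Nat.zero_le s)) hle
      simp only [Nat.add_sub_cancel] at hr
      rw [hr]
      have hAs : (A (s+1)) ^ 2 ≤ β ^ 2 := hA2 (s+1) hle
      have h1 : (A (s+1)) ^ 2 * m s ≤ β ^ 2 * M := by
        apply mul_le_mul hAs (ih hs) (hm0 s) (by positivity)
      have h2 : σ ^ 2 ≤ M * (1 - β ^ 2) := (div_le_iff₀ h1β2).mp hMσ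
      nlinarith [h1, h2, hm0 s]
  -- the Hölder estimate on coefficients
  have hrpow0 : (0:ℝ) ≤ (n:ℝ) ^ (-e) := Real.rpow_nonneg hnR.le _
  have hAdiff : ∀ s : ℕ, T < s → s ≤ n * T → |A s - A (s - T)| ≤ K * (n:ℝ) ^ (-e) := by
    intro s hTs hsn
    have hTs' : T ≤ s := hTs.le
    have hsub : s - T ≤ n * T := le_trans (Nat.sub_le s T) hsn
    have hcast : ((s - T : ℕ) : ℤ) = (s : ℤ) - T := by
      push_cast [hTs']; ring
    have hper' : a ((s - T : ℕ) : ℤ) = a (s : ℤ) := by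
      rw [hcast]
      funext v
      have := hper ((s:ℤ) - T) v
      rw [sub_add_cancel] at this
      rw [this]
    have hASt : A (s - T) = a (s : ℤ) (((s - T : ℕ) : ℝ) / ((n:ℝ) * T)) := by
      simp only [hA]; simp only [hper']
    have hcastR : ((s - T : ℕ) : ℝ) = (s : ℝ) - T := by
      push_cast [hTs']; ring
    have hdist : |(s : ℝ) / ((n:ℝ) * T) - ((s - T : ℕ) : ℝ) / ((n:ℝ) * T)| = (n:ℝ)⁻¹ := by
      rw [hcastR, div_sub_div_same]
      have : (s:ℝ) - ((s:ℝ) - T) = T := by ring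
      rw [this]
      rw [abs_of_pos (div_pos hTR hnTR)]
      field_simp
    have hb := hK s ((s:ℝ) / ((n:ℝ) * T)) (hmem s hsn)
      (((s - T : ℕ) : ℝ) / ((n:ℝ) * T)) (hmem (s - T) hsub)
    simp only [hA]
    rw [show ((s - T : ℕ) : ℤ) = ((s:ℤ) - T) from hcast, show a ((s:ℤ) - T) = a (s:ℤ) from by rw [← hcast, hper']]
    calc |a (s:ℤ) ((s:ℝ)/((n:ℝ)*T)) - a (s:ℤ) (((s-T:ℕ):ℝ)/((n:ℝ)*T))|
        ≤ K * |(s:ℝ)/((n:ℝ)*T) - ((s-T:ℕ):ℝ)/((n:ℝ)*T)| ^ e := hb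
      _ = K * (n:ℝ) ^ (-e) := by
          rw [hdist, Real.inv_rpow hnR.le, ← Real.rpow_neg hnR.le]
  -- difference of squared coefficients
  have hA2diff : ∀ s : ℕ, T < s → s ≤ n * T →
      |(A s) ^ 2 - (A (s - T)) ^ 2| ≤ 2 * K * (n:ℝ) ^ (-e) := by
    intro s hTs hsn
    have h1 : |A s| ≤ β := hAb s hsn
    have h2 : |A (s - T)| ≤ β := hAb (s - T) (le_trans (Nat.sub_le s T) hsn)
    have hfac : (A s) ^ 2 - (A (s - T)) ^ 2 = (A s - A (s - T)) * (A s + A (s - T)) := by ring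
    rw [hfac, abs_mul]
    have h3 : |A s + A (s - T)| ≤ 2 :=
      le_trans (abs_add_le _ _) (by linarith [hβ1])
    calc |A s - A (s-T)| * |A s + A (s-T)|
        ≤ (K * (n:ℝ) ^ (-e)) * 2 := by
          apply mul_le_mul (hAdiff s hTs hsn) h3 (abs_nonneg _) (by positivity)
      _ = 2 * K * (n:ℝ) ^ (-e) := by ring
  -- one-step recursion for the difference
  have honestep : ∀ s : ℕ, T < s → s ≤ n * T →
      |m s - m (s - T)| ≤ β ^ 2 * |m (s - 1) - m (s - T - 1)| + 2 * K * M * (n:ℝ) ^ (-e) := by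
    intro s hTs hsn
    have hs1 : 1 ≤ s := le_trans hT hTs.le
    have hsT1 : 1 ≤ s - T := by omega
    have hsTn : s - T ≤ n * T := le_trans (Nat.sub_le s T) hsn
    have hr1 := hrecm s hs1 hsn
    have hr2 := hrecm (s - T) hsT1 hsTn
    have heq : m s - m (s - T)
        = (A s) ^ 2 * (m (s-1) - m (s - T - 1)) + ((A s) ^ 2 - (A (s-T)) ^ 2) * m (s - T - 1) := by
      rw [hr1, hr2]; ring
    rw [heq]
    have hmT1 : |m (s - T - 1)| ≤ M := by
      rw [abs_of_nonneg (hm0 _)]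
      exact hmM _ (by omega)
    calc |(A s) ^ 2 * (m (s-1) - m (s-T-1)) + ((A s)^2 - (A (s-T))^2) * m (s-T-1)|
        ≤ |(A s) ^ 2 * (m (s-1) - m (s-T-1))| + |((A s)^2 - (A (s-T))^2) * m (s-T-1)| :=
          abs_add_le _ _
      _ = (A s)^2 * |m (s-1) - m (s-T-1)| + |(A s)^2 - (A (s-T))^2| * |m (s-T-1)| := by
          rw [abs_mul, abs_mul, abs_of_nonneg (sq_nonneg (A s))]
      _ ≤ β ^ 2 * |m (s-1) - m (s-T-1)| + (2 * K * (n:ℝ)^(-e)) * M := by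
          apply add_le_add
          · exact mul_le_mul_of_nonneg_right (hA2 s hsn) (abs_nonneg _)
          · exact mul_le_mul (hA2diff s hTs hsn) hmT1 (abs_nonneg _) (by positivity)
      _ = β ^ 2 * |m (s-1) - m (s-T-1)| + 2 * K * M * (n:ℝ)^(-e) := by ring
  -- the key claim
  have claim : ∀ s : ℕ, T < s → s ≤ n * T →
      |m s - m (s - T)| ≤ β ^ (2 * (s - T - 1)) * M + S * (n:ℝ) ^ (-e) := by
    intro s hTs
    induction s, hTs using Nat.le_induction with
    | base =>
      intro hsn
      have h1 := honestep (T + 1) (Nat.lt_succ_self T) hsn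
      have e1 : T + 1 - 1 = T := by omega
      have e2 : T + 1 - T - 1 = 0 := by omega
      have e3 : T + 1 - T - 1 = 0 := by omega
      rw [e1, e2] at h1
      have h2 : |m T - m 0| ≤ M := by
        rw [abs_le]
        constructor
        · have := hmM 0 (Nat.zero_le _)
          have := hm0 T
          linarith
        · have := hmM T (by omega)
          have := hm0 0
          linarith
      have h3 : 2 * K * M ≤ S := by
        rw [hSK]
        have := mul_le_mul_of_nonneg_left (by linarith [sq_nonneg β] : 1 - β ^ 2 ≤ 1) hS0
        linarith
      have h4 : β ^ (2 * (T + 1 - T - 1)) = 1 := by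
        rw [e3]; norm_num
      rw [h4, one_mul]
      have hβ2M : β ^ 2 * M ≤ M := by
        have := mul_le_mul_of_nonneg_right (by nlinarith : β ^ 2 ≤ 1) hM0
        linarith
      have h5 : 2 * K * M * (n:ℝ) ^ (-e) ≤ S * (n:ℝ) ^ (-e) :=
        mul_le_mul_of_nonneg_right h3 hrpow0
      have hb1 : β ^ 2 * |m T - m 0| ≤ β ^ 2 * M :=
        mul_le_mul_of_nonneg_left h2 (sq_nonneg β)
      linarith [h1, hb1, hβ2M, h5]
    | succ s hs ih =>
      intro hsn
      have hsn' : s ≤ n * T := le_trans (Nat.le_succ s) hsn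
      have hstep := honestep (s + 1) (by omega) hsn
      have e1 : s + 1 - 1 = s := by omega
      have e2 : s + 1 - T - 1 = s - T := by omega
      rw [e1, e2] at hstep
      have hih := ih hsn'
      have e3 : 2 * (s - T - 1) + 2 = 2 * (s + 1 - T - 1) := by omega
      have h3 : 2 * K * M = S * (1 - β ^ 2) := hSK
      have hpow : β ^ 2 * β ^ (2 * (s - T - 1)) = β ^ (2 * (s + 1 - T - 1)) := by
        rw [← pow_add, ← e3]; ring
      calc |m (s+1) - m (s+1-T)|
          ≤ β ^ 2 * |m s - m (s - T)| + 2 * K * M * (n:ℝ) ^ (-e) := hstep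
        _ ≤ β ^ 2 * (β ^ (2 * (s - T - 1)) * M + S * (n:ℝ) ^ (-e))
              + 2 * K * M * (n:ℝ) ^ (-e) := by
            apply add_le_add_left
            exact mul_le_mul_of_nonneg_left hih (sq_nonneg β)
        _ = β ^ (2 * (s + 1 - T - 1)) * M
              + (β ^ 2 * S + 2 * K * M) * (n:ℝ) ^ (-e) := by
            rw [← hpow]; ring
        _ = β ^ (2 * (s + 1 - T - 1)) * M + S * (n:ℝ) ^ (-e) := by
            rw [h3]; ring
  -- final assembly
  have hclaim := claim t htT htn
  have hlogn : 0 ≤ Real.log n := Real.log_nonneg (by exact_mod_cast hn)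
  -- bound on the geometric factor
  have hβ2t : β ^ (2 * t) ≤ (n:ℝ) ^ (-e) := by
    have hlt : Real.log n ≤ 2 * (t:ℝ) * (-Real.log β) := by
      have h2L : (0:ℝ) < 2 * (-Real.log β) := by linarith
      have hne2 : (2:ℝ) * Real.log β ≠ 0 :=
        ne_of_lt (mul_neg_of_pos_of_neg two_pos hlogβ)
      have h1 : Real.log n = (c * Real.log n) * (2 * (-Real.log β)) := by
        rw [hcdef]; field_simp
        rw [mul_div_assoc, div_self hlogβ.ne, mul_one]
      calc Real.log n = (c * Real.log n) * (2 * (-Real.log β)) := h1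
        _ ≤ (t:ℝ) * (2 * (-Real.log β)) := mul_le_mul_of_nonneg_right hclog h2L.le
        _ = 2 * (t:ℝ) * (-Real.log β) := by ring
    have h2 : β ^ (2 * t) = Real.exp (((2 * t : ℕ) : ℝ) * Real.log β) := by
      rw [← Real.log_pow, Real.exp_log (pow_pos hβ0 _)]
    have h3 : (n:ℝ)⁻¹ = Real.exp (-Real.log n) := by
      rw [Real.exp_neg, Real.exp_log hnR]
    have h4 : β ^ (2 * t) ≤ (n:ℝ)⁻¹ := by
      rw [h2, h3]
      apply Real.exp_le_exp.mpr
      push_cast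
      nlinarith
    have h5 : (n:ℝ)⁻¹ ≤ (n:ℝ) ^ (-e) := by
      rw [← Real.rpow_neg_one]
      apply Real.rpow_le_rpow_of_exponent_le (by exact_mod_cast hn)
      linarith
    linarith
  have hβpow : β ^ (2 * (t - T - 1)) ≤ (n:ℝ) ^ (-e) / β ^ (2 * T + 2) := by
    have hexp : 2 * (t - T - 1) + (2 * T + 2) = 2 * t := by omega
    have heq : β ^ (2 * t) = β ^ (2 * (t - T - 1)) * β ^ (2 * T + 2) := by
      rw [← pow_add, hexp]
    have hpowpos : (0:ℝ) < β ^ (2 * T + 2) := pow_pos hβ0 _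
    rw [le_div_iff₀ hpowpos, ← heq]
    exact hβ2t
  calc |m t - m (t - T)|
      ≤ β ^ (2 * (t - T - 1)) * M + S * (n:ℝ) ^ (-e) := hclaim
    _ ≤ ((n:ℝ) ^ (-e) / β ^ (2 * T + 2)) * M + S * (n:ℝ) ^ (-e) := by
        apply add_le_add_left
        exact mul_le_mul_of_nonneg_right hβpow hM0
    _ = (M / β ^ (2 * T + 2) + S) * (n:ℝ) ^ (-e) := by ring
    _ ≤ C * (n:ℝ) ^ (-e) := by
        apply mul_le_mul_of_nonneg_right _ hrpow0
        rw [hCdef]; linarith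
end
end

section
/- Under Assumption A(ρ) with 0 < ρ ≤ 2 and X_0 = 0 almost surely, let K satisfy Assumption (K) or (K̃) as well as ker(ρ∨1), let (b_n)_{n≥1} be positive reals with b_n → 0 and n·b_n → ∞, and fix u ∈ (0,1) and s ∈ {1,…,T}. Then there exists a constant C > 0 such that for all n large enough, E[|J_n|] ≤ C · √(n·b_n) · (A_n/(n·b_n) + b_n^{ρ∧1}), where A_n = 1 if K satisfies (K̃) and A_n = log n if K satisfies (K). -/
open MeasureTheory ProbabilityTheory Filter Set
open scoped ProbabilityTheory

noncomputable section

/-- Assumption (K): a Borel, bounded, even kernel with unit integral whose tails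
decay faster than some exponential. -/
def AssumpK (K : ℝ → ℝ) : Prop :=
  Measurable K ∧ (∃ M : ℝ, ∀ x, |K x| ≤ M) ∧ (∀ x, K (-x) = K x) ∧
  (∫ t : ℝ, K t) = 1 ∧
  ∃ β : ℝ, 0 < β ∧
    Tendsto (fun t => Real.exp (β * |t|) * K t) (cocompact ℝ) (nhds 0)

/-- Assumption (K̃): a Borel, bounded, even kernel with unit integral and
compact support. -/
def AssumpKt (K : ℝ → ℝ) : Prop :=
  Measurable K ∧ (∃ M : ℝ, ∀ x, |K x| ≤ M) ∧ (∀ x, K (-x) = K x) ∧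
  (∫ t : ℝ, K t) = 1 ∧
  ∃ B : ℝ, 0 < B ∧ ∀ t : ℝ, B < |t| → K t = 0

/-- Assumption ker(r): moment integrability, vanishing moments up to `lint r - 1`,
boundedness and Lipschitz continuity. -/
def AssumpKer (r : ℝ) (K : ℝ → ℝ) : Prop :=
  Integrable (fun x => (|x| ^ r + 1) * |K x|) ∧
  (∀ p : ℕ, 1 ≤ p → p ≤ lint r - 1 → (∫ x : ℝ, x ^ p * K x) = 0) ∧
  (∃ M : ℝ, ∀ x, |K x| ≤ M) ∧ (∃ L : NNReal, LipschitzWith L K)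

open scoped ENNReal NNReal

/- ## Auxiliary lemmas -/

lemma my_geom_sum_le {r : ℝ} (h0 : 0 ≤ r) (h1 : r < 1) (n : ℕ) :
    ∑ k ∈ Finset.range n, r ^ k ≤ 1 / (1 - r) := by
  have h1r : 0 < 1 - r := by linarith
  rw [geom_sum_eq h1.ne]
  have heq : (r ^ n - 1) / (r - 1) = (1 - r ^ n) / (1 - r) := by
    rw [div_eq_div_iff (by linarith) (by linarith)]; ring
  rw [heq]
  have hpn : (0:ℝ) ≤ r ^ n := pow_nonneg h0 n
  gcongr <;> linarith

lemma sum_exp_abs_le (δ d c : ℝ) (hδ : 0 < δ) (hd : 0 < d) (n : ℕ) :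
    ∑ j ∈ Finset.range n, Real.exp (-(δ * |c + (j : ℝ) * d|)) ≤
      2 / (1 - Real.exp (-(δ * d))) := by
  set r : ℝ := Real.exp (-(δ * d)) with hr
  have hr0 : 0 ≤ r := (Real.exp_pos _).le
  have hr1 : r < 1 := by
    rw [hr, Real.exp_lt_one_iff]; nlinarith
  have h1r : 0 < 1 - r := by linarith
  have hsplit := Finset.sum_filter_add_sum_filter_not (Finset.range n)
    (fun (j : ℕ) => 0 ≤ c + (j : ℝ) * d)
    (fun j => Real.exp (-(δ * |c + (j : ℝ) * d|)))
  set Sp := (Finset.range n).filter (fun (j : ℕ) => 0 ≤ c + (j : ℝ) * d) with hSp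
  set Sm := (Finset.range n).filter (fun (j : ℕ) => ¬ (0 ≤ c + (j : ℝ) * d)) with hSm
  have hbound : ∀ (S : Finset ℕ) (g : ℕ → ℕ),
      (∀ j ∈ S, Real.exp (-(δ * |c + (j : ℝ) * d|)) ≤ r ^ (g j)) →
      (∀ j ∈ S, g j < n) → (Set.InjOn g S) →
      ∑ j ∈ S, Real.exp (-(δ * |c + (j : ℝ) * d|)) ≤ 1 / (1 - r) := by
    intro S g hle hlt hinj
    calc ∑ j ∈ S, Real.exp (-(δ * |c + (j : ℝ) * d|))
        ≤ ∑ j ∈ S, r ^ (g j) := Finset.sum_le_sum hle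
      _ = ∑ k ∈ S.image g, r ^ k := (Finset.sum_image (fun x hx y hy h => hinj hx hy h)).symm
      _ ≤ ∑ k ∈ Finset.range n, r ^ k := by
          apply Finset.sum_le_sum_of_subset_of_nonneg
          · intro k hk
            rcases Finset.mem_image.1 hk with ⟨j, hj, rfl⟩
            exact Finset.mem_range.2 (hlt j hj)
          · intro k _ _; exact pow_nonneg hr0 k
      _ ≤ 1 / (1 - r) := my_geom_sum_le hr0 hr1 n
  have hp : ∑ j ∈ Sp, Real.exp (-(δ * |c + (j : ℝ) * d|)) ≤ 1 / (1 - r) := by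
    rcases Sp.eq_empty_or_nonempty with h | h
    · rw [h]; simp only [Finset.sum_empty]; exact div_nonneg (by norm_num) h1r.le
    · set j0 := Sp.min' h with hj0
      have hj0mem := Sp.min'_mem h
      have hj0p : (0:ℝ) ≤ c + (j0 : ℝ) * d := (Finset.mem_filter.1 hj0mem).2
      apply hbound Sp (fun j => j - j0)
      · intro j hj
        have hjge : j0 ≤ j := Finset.min'_le _ _ hj
        have hjp : (0:ℝ) ≤ c + (j : ℝ) * d := (Finset.mem_filter.1 hj).2
        rw [abs_of_nonneg hjp, ← Real.exp_nat_mul]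
        apply Real.exp_le_exp.2
        have : ((j - j0 : ℕ) : ℝ) = (j : ℝ) - (j0 : ℝ) := by
          rw [Nat.cast_sub hjge]
        rw [this]
        nlinarith [hδ, hd]
      · intro j hj
        have := Finset.mem_range.1 (Finset.mem_filter.1 hj).1
        omega
      · intro x hx y hy hxy
        simp only [] at hxy
        have hx' : j0 ≤ x := Finset.min'_le _ _ hx
        have hy' : j0 ≤ y := Finset.min'_le _ _ hy
        omega
  have hm : ∑ j ∈ Sm, Real.exp (-(δ * |c + (j : ℝ) * d|)) ≤ 1 / (1 - r) := by
    rcases Sm.eq_empty_or_nonempty with h | h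
    · rw [h]; simp only [Finset.sum_empty]; exact div_nonneg (by norm_num) h1r.le
    · set j1 := Sm.max' h with hj1
      have hj1mem := Sm.max'_mem h
      have hj1m : ¬ (0:ℝ) ≤ c + (j1 : ℝ) * d := (Finset.mem_filter.1 hj1mem).2
      have hj1m' : c + (j1 : ℝ) * d < 0 := lt_of_not_ge hj1m
      apply hbound Sm (fun j => j1 - j)
      · intro j hj
        have hjle : j ≤ j1 := Finset.le_max' _ _ hj
        have hjm : c + (j : ℝ) * d < 0 := lt_of_not_ge (Finset.mem_filter.1 hj).2
        rw [abs_of_neg hjm, ← Real.exp_nat_mul]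
        apply Real.exp_le_exp.2
        have : ((j1 - j : ℕ) : ℝ) = (j1 : ℝ) - (j : ℝ) := by
          rw [Nat.cast_sub hjle]
        rw [this]
        nlinarith [hδ, hd]
      · intro j hj
        have h1 := Finset.mem_range.1 (Finset.mem_filter.1 hj1mem).1
        omega
      · intro x hx y hy hxy
        simp only [] at hxy
        have hx' : x ≤ j1 := Finset.le_max' _ _ hx
        have hy' : y ≤ j1 := Finset.le_max' _ _ hy
        omega
  calc ∑ j ∈ Finset.range n, Real.exp (-(δ * |c + (j : ℝ) * d|))
      = ∑ j ∈ Sp, Real.exp (-(δ * |c + (j : ℝ) * d|))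
        + ∑ j ∈ Sm, Real.exp (-(δ * |c + (j : ℝ) * d|)) := hsplit.symm
    _ ≤ 1 / (1 - r) + 1 / (1 - r) := add_le_add hp hm
    _ = 2 / (1 - r) := by ring

lemma holder_bound (ρ : ℝ) (hρ0 : 0 < ρ) (hρ2 : ρ ≤ 2) (f : ℝ → ℝ) (hf : CHolder ρ f) :
    ∃ C : ℝ, 0 ≤ C ∧ ∀ x ∈ Set.Icc (0:ℝ) 1, ∀ y ∈ Set.Icc (0:ℝ) 1,
      |f x - f y| ≤ C * |x - y| ^ (min ρ 1) := by
  by_cases hρ1 : ρ ≤ 1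
  · have hceil : ⌈ρ⌉₊ = 1 := le_antisymm (Nat.ceil_le.2 (by exact_mod_cast hρ1))
      (Nat.ceil_pos.2 hρ0)
    have hlint : lint ρ = 0 := by simp [lint, hceil]
    obtain ⟨C, hC0, hC⟩ := hf.2
    refine ⟨C, hC0, fun x hx y hy => ?_⟩
    have := hC x hx y hy
    rw [hlint] at this
    simp only [iteratedDerivWithin_zero, Nat.cast_zero, sub_zero] at this
    rwa [min_eq_left hρ1]
  · push_neg at hρ1
    have hceil : ⌈ρ⌉₊ = 2 := le_antisymm (Nat.ceil_le.2 (by exact_mod_cast hρ2))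
      (Nat.lt_ceil.2 (by exact_mod_cast hρ1))
    have hlint : lint ρ = 1 := by simp [lint, hceil]
    have h1 : ContDiffOn ℝ 1 f (Set.Icc 0 1) := by
      have := hf.1; rwa [hlint] at this
    have hu : UniqueDiffOn ℝ (Set.Icc (0:ℝ) 1) := uniqueDiffOn_Icc zero_lt_one
    have hd : DifferentiableOn ℝ f (Set.Icc 0 1) :=
      h1.differentiableOn (by norm_num)
    have hcd : ContinuousOn (derivWithin f (Set.Icc 0 1)) (Set.Icc 0 1) :=
      h1.continuousOn_derivWithin hu (by exact_mod_cast le_refl (1:ℕ∞))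
    obtain ⟨C, hC⟩ := isCompact_Icc.exists_bound_of_continuousOn hcd
    set C' : NNReal := ⟨max C 0, le_max_right _ _⟩ with hC'
    have hlip : LipschitzOnWith C' f (Set.Icc 0 1) := by
      apply (convex_Icc (0:ℝ) 1).lipschitzOnWith_of_nnnorm_derivWithin_le hd
      intro x hx
      have := hC x hx
      rw [← NNReal.coe_le_coe]
      have h2 : ‖derivWithin f (Set.Icc 0 1) x‖ ≤ max C 0 := le_trans this (le_max_left _ _)
      rw [coe_nnnorm]; exact h2
    refine ⟨C', NNReal.coe_nonneg _, fun x hx y hy => ?_⟩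
    have := hlip.dist_le_mul x hx y hy
    rw [Real.dist_eq, Real.dist_eq] at this
    rw [min_eq_right hρ1.le, Real.rpow_one]
    exact this

lemma kernel_exp_decay {K : ℝ → ℝ} (hK : AssumpK K ∨ AssumpKt K) :
    ∃ D β : ℝ, 0 < D ∧ 0 < β ∧ ∀ z, |K z| ≤ D * Real.exp (-(β * |z|)) := by
  rcases hK with ⟨_, ⟨M, hM⟩, _, _, β, hβ, htend⟩ | ⟨_, ⟨M, hM⟩, _, _, B, hB, hB0⟩
  · have hev : ∀ᶠ t in cocompact ℝ, dist (Real.exp (β * |t|) * K t) 0 < 1 :=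
      htend (Metric.ball_mem_nhds 0 one_pos)
    rw [Filter.eventually_iff, Filter.mem_cocompact] at hev
    obtain ⟨sc, hsc, hsub⟩ := hev
    obtain ⟨R, hR⟩ := hsc.isBounded.subset_closedBall 0
    set R' := max R 0 with hR'
    refine ⟨max M 1 * Real.exp (β * R'), β, by positivity, hβ, fun z => ?_⟩
    by_cases hz : |z| ≤ R'
    · calc |K z| ≤ M := hM z
        _ ≤ max M 1 := le_max_left _ _
        _ ≤ max M 1 * Real.exp (β * R') * Real.exp (-(β * |z|)) := by
            rw [mul_assoc, ← Real.exp_add]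
            nlinarith [Real.add_one_le_exp (β * R' + -(β * |z|)), abs_nonneg z,
              le_max_right M 1, mul_nonneg hβ.le (sub_nonneg.2 hz)]
    · push_neg at hz
      have hzR : R < |z| := lt_of_le_of_lt (le_max_left _ _) hz
      have hznot : z ∉ sc := by
        intro hmem
        have := hR hmem
        rw [Metric.mem_closedBall, Real.dist_eq, sub_zero] at this
        linarith
      have h1 : dist (Real.exp (β * |z|) * K z) 0 < 1 := hsub hznot
      rw [Real.dist_eq, sub_zero, abs_mul, abs_of_pos (Real.exp_pos _)] at h1
      have hprod : Real.exp (-(β * |z|)) * Real.exp (β * |z|) = 1 := by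
        rw [← Real.exp_add]; simp
      have h2 : |K z| < Real.exp (-(β * |z|)) := by
        nlinarith [Real.exp_pos (β * |z|), abs_nonneg (K z)]
      calc |K z| ≤ Real.exp (-(β * |z|)) := h2.le
        _ ≤ max M 1 * Real.exp (β * R') * Real.exp (-(β * |z|)) := by
            have h3 : (1:ℝ) * 1 ≤ max M 1 * Real.exp (β * R') :=
              mul_le_mul (le_max_right M 1)
                (Real.one_le_exp (by positivity : (0:ℝ) ≤ β * R')) one_pos.le
                (le_trans zero_le_one (le_max_right M 1))
            nlinarith [Real.exp_pos (-(β * |z|))]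
  · refine ⟨max M 1 * Real.exp B, 1, by positivity, one_pos, fun z => ?_⟩
    by_cases hz : B < |z|
    · rw [hB0 z hz, abs_zero]; positivity
    · push_neg at hz
      calc |K z| ≤ M := hM z
        _ ≤ max M 1 := le_max_left _ _
        _ ≤ max M 1 * Real.exp B * Real.exp (-(1 * |z|)) := by
            rw [mul_assoc, ← Real.exp_add, one_mul]
            nlinarith [Real.add_one_le_exp (B + -|z|), abs_nonneg z,
              le_max_right M 1]

lemma rpow_le_one_add {x γ : ℝ} (hx : 0 ≤ x) (hγ0 : 0 < γ) (hγ1 : γ ≤ 1) :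
    x ^ γ ≤ 1 + x := by
  rcases le_or_gt x 1 with h | h
  · calc x ^ γ ≤ 1 := Real.rpow_le_one hx h hγ0.le
      _ ≤ 1 + x := by linarith
  · calc x ^ γ ≤ x ^ (1:ℝ) := Real.rpow_le_rpow_of_exponent_le h.le hγ1
      _ = x := Real.rpow_one x
      _ ≤ 1 + x := by linarith

lemma exp_mul_one_add_le {β t : ℝ} (hβ : 0 < β) (ht : 0 ≤ t) :
    Real.exp (-(β * t)) * (1 + t) ≤ (1 + 2 / β) * Real.exp (-(β / 2 * t)) := by
  have h1 : Real.exp (-(β * t)) = Real.exp (-(β / 2 * t)) * Real.exp (-(β / 2 * t)) := by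
    rw [← Real.exp_add]; ring_nf
  have h2 : Real.exp (-(β / 2 * t)) ≤ 1 := Real.exp_le_one_iff.2 (by nlinarith)
  have h3 : Real.exp (-(β / 2 * t)) * Real.exp (β / 2 * t) = 1 := by
    rw [← Real.exp_add]; ring_nf; exact Real.exp_zero
  have h4 : β / 2 * t + 1 ≤ Real.exp (β / 2 * t) := Real.add_one_le_exp _
  have h5 : Real.exp (-(β / 2 * t)) * t ≤ 2 / β := by
    have hE : 0 < Real.exp (-(β / 2 * t)) := Real.exp_pos _
    rw [le_div_iff₀ hβ]
    nlinarith [mul_le_mul_of_nonneg_left h4 hE.le, h3, hE]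
  have h6 : Real.exp (-(β / 2 * t)) * (1 + t) ≤ 1 + 2 / β := by nlinarith
  have hE : 0 < Real.exp (-(β / 2 * t)) := Real.exp_pos _
  calc Real.exp (-(β * t)) * (1 + t)
      = Real.exp (-(β / 2 * t)) * (Real.exp (-(β / 2 * t)) * (1 + t)) := by rw [h1]; ring
    _ ≤ Real.exp (-(β / 2 * t)) * (1 + 2 / β) := by
        apply mul_le_mul_of_nonneg_left h6 hE.le
    _ = (1 + 2 / β) * Real.exp (-(β / 2 * t)) := by ring

lemma one_sub_exp_neg_ge {x : ℝ} (h0 : 0 ≤ x) (h1 : x ≤ 1) :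
    x / 3 ≤ 1 - Real.exp (-x) := by
  have hE : Real.exp (-x) * Real.exp x = 1 := by rw [← Real.exp_add]; simp
  have h2 : x + 1 ≤ Real.exp x := Real.add_one_le_exp x
  have h3 : Real.exp (-x) ≤ 1 := Real.exp_le_one_iff.2 (by linarith)
  have h4 : (1:ℝ)/3 ≤ Real.exp (-x) := by
    have : Real.exp (-x) ≥ Real.exp (-1) := Real.exp_le_exp.2 (by linarith)
    have he : Real.exp 1 < 3 := by
      have := Real.exp_one_lt_d9; linarith
    have hprod : Real.exp (-1) * Real.exp 1 = 1 := by rw [← Real.exp_add]; simp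
    nlinarith [Real.exp_pos 1, Real.exp_pos (-1)]
  nlinarith

def procY {Ω : Type*} (ca : ℕ → ℝ) (ξ : ℕ → Ω → ℝ) : ℕ → Ω → ℝ
  | 0 => fun _ => 0
  | t+1 => fun ω => ca (t+1) * procY ca ξ t ω + ξ (t+1) ω

lemma procY_measurable {Ω : Type*} [MeasurableSpace Ω] (ca : ℕ → ℝ) (ξ : ℕ → Ω → ℝ)
    (hξ : ∀ t, Measurable (ξ t)) : ∀ t, Measurable (procY ca ξ t)
  | 0 => measurable_const
  | (t+1) => ((procY_measurable ca ξ hξ t).const_mul _).add (hξ (t+1))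

lemma procY_moment {Ω : Type*} [MeasureSpace Ω]
    (ca : ℕ → ℝ) (ξ : ℕ → Ω → ℝ)
    (σ₂ : ℝ≥0∞) (hξLp : ∀ t, MemLp (ξ t) 2 ℙ) (hξnorm : ∀ t, eLpNorm (ξ t) 2 ℙ ≤ σ₂)
    (α : ℝ) (hα0 : 0 ≤ α) (hα1 : α < 1) (m : ℕ)
    (hca : ∀ t, 1 ≤ t → t ≤ m → |ca t| ≤ α) :
    ∀ t, t ≤ m → MemLp (procY ca ξ t) 2 ℙ ∧
      eLpNorm (procY ca ξ t) 2 ℙ ≤ σ₂ * ENNReal.ofReal (1/(1-α)) := by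
  intro t
  induction t with
  | zero =>
    intro _
    constructor
    · simpa [procY] using (zero_memLp : MemLp (0 : Ω → ℝ) 2 ℙ)
    · simp [procY, eLpNorm_zero]
  | succ t ih =>
    intro hle
    obtain ⟨ihLp, ihnorm⟩ := ih (by omega)
    have hc : |ca (t+1)| ≤ α := hca (t+1) (by omega) hle
    have hLp : MemLp (procY ca ξ (t+1)) 2 ℙ := by
      show MemLp (fun ω => ca (t+1) * procY ca ξ t ω + ξ (t+1) ω) 2 ℙ
      exact (ihLp.const_mul _).add (hξLp (t+1))
    refine ⟨hLp, ?_⟩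
    have hsmul : (fun ω => ca (t+1) * procY ca ξ t ω) = (ca (t+1)) • (procY ca ξ t) := rfl
    have step1 : eLpNorm (procY ca ξ (t+1)) 2 ℙ ≤
        eLpNorm (fun ω => ca (t+1) * procY ca ξ t ω) 2 ℙ + eLpNorm (ξ (t+1)) 2 ℙ := by
      show eLpNorm (fun ω => ca (t+1) * procY ca ξ t ω + ξ (t+1) ω) 2 ℙ ≤ _
      exact eLpNorm_add_le (by rw [hsmul]; exact ihLp.aestronglyMeasurable.const_smul _)
        (hξLp (t+1)).aestronglyMeasurable one_le_two
    have step2 : eLpNorm (fun ω => ca (t+1) * procY ca ξ t ω) 2 ℙ ≤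
        ENNReal.ofReal α * eLpNorm (procY ca ξ t) 2 ℙ := by
      rw [hsmul, eLpNorm_const_smul]
      gcongr
      rw [← ofReal_norm_eq_enorm]
      exact ENNReal.ofReal_le_ofReal (by rwa [Real.norm_eq_abs])
    have h1α : 0 < 1 - α := by linarith
    have key : ENNReal.ofReal α * ENNReal.ofReal (1/(1-α)) + 1 =
        ENNReal.ofReal (1/(1-α)) := by
      rw [← ENNReal.ofReal_mul hα0, ← ENNReal.ofReal_one,
        ← ENNReal.ofReal_add (by positivity) zero_le_one]
      congr 1
      field_simp
      ring
    calc eLpNorm (procY ca ξ (t+1)) 2 ℙ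
        ≤ ENNReal.ofReal α * eLpNorm (procY ca ξ t) 2 ℙ + eLpNorm (ξ (t+1)) 2 ℙ :=
          le_trans step1 (add_le_add_left step2 _)
      _ ≤ ENNReal.ofReal α * (σ₂ * ENNReal.ofReal (1/(1-α))) + σ₂ := by
          exact add_le_add (mul_le_mul_right ihnorm _) (hξnorm (t+1))
      _ = σ₂ * (ENNReal.ofReal α * ENNReal.ofReal (1/(1-α)) + 1) := by ring
      _ = σ₂ * ENNReal.ofReal (1/(1-α)) := by rw [key]

lemma sq_integral_bound {Ω : Type*} [MeasureSpace Ω] (f : Ω → ℝ) (hf : MemLp f 2 ℙ)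
    {c : ℝ≥0∞} (hc : c ≠ ⊤) (h : eLpNorm f 2 ℙ ≤ c) :
    ∫ ω, (f ω)^2 ∂(ℙ : Measure Ω) ≤ (c.toReal)^2 := by
  have heq := hf.eLpNorm_eq_integral_rpow_norm two_ne_zero ENNReal.ofNat_ne_top
  rw [heq] at h
  have htr : ((2:ℝ≥0∞)).toReal = 2 := by simp
  rw [htr] at h
  have hXnn : 0 ≤ ∫ ω, ‖f ω‖ ^ (2:ℝ) ∂(ℙ : Measure Ω) :=
    integral_nonneg (fun ω => Real.rpow_nonneg (norm_nonneg _) _)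
  have h2 : (∫ ω, ‖f ω‖ ^ (2:ℝ) ∂(ℙ : Measure Ω)) ^ ((2:ℝ)⁻¹) ≤ c.toReal := by
    rw [ENNReal.ofReal_le_iff_le_toReal hc] at h
    exact h
  have hct : 0 ≤ c.toReal := ENNReal.toReal_nonneg
  have h3 : ∫ ω, ‖f ω‖ ^ (2:ℝ) ∂(ℙ : Measure Ω) ≤ (c.toReal)^2 := by
    have hsq := pow_le_pow_left₀ (Real.rpow_nonneg hXnn _) h2 2
    rwa [← Real.rpow_natCast ((∫ ω, ‖f ω‖ ^ (2:ℝ) ∂(ℙ : Measure Ω)) ^ ((2:ℝ)⁻¹)) 2,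
      ← Real.rpow_mul hXnn, show ((2:ℝ)⁻¹ * ((2:ℕ):ℝ)) = 1 by norm_num,
      Real.rpow_one] at hsq
  have hcong : ∫ ω, (f ω)^2 ∂(ℙ : Measure Ω) = ∫ ω, ‖f ω‖ ^ (2:ℝ) ∂(ℙ : Measure Ω) := by
    congr 1
    funext ω
    rw [show (2:ℝ) = ((2:ℕ):ℝ) by norm_num, Real.rpow_natCast, Real.norm_eq_abs, sq_abs]
  rw [hcong]
  exact h3

/-- Under Assumption A(ρ) with `0 < ρ ≤ 2` and `X₀ = 0` a.s., for a
kernel `K` satisfying (K) or (K̃) and ker(ρ∨1), one has, for `n` large enough,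
`E|Jₙ| ≤ C √(n bₙ) (Aₙ/(n bₙ) + bₙ^{ρ∧1})`. -/
theorem statement15
    {Ω : Type*} [MeasureSpace Ω] (hprob : IsProbabilityMeasure (ℙ : Measure Ω))
    (T : ℕ) (hT : 1 ≤ T) (ρ : ℝ) (hρ0 : 0 < ρ) (hρ2 : ρ ≤ 2)
    -- Assumption A(ρ)
    (a : ℤ → ℝ → ℝ) (α : ℝ) (hα1 : α < 1)
    (hper : ∀ (t : ℤ) (v : ℝ), a (t + T) v = a t v)
    (hbdd : ∀ (t : ℤ), ∀ v ∈ Set.Icc (0:ℝ) 1, |a t v| ≤ α)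
    (hreg : ∀ t : ℤ, CHolder ρ (a t))
    -- the i.i.d. innovations, with mean 0 and variance σ² ∈ (0,∞)
    (ξ : ℕ → Ω → ℝ) (hξmeas : ∀ t, Measurable (ξ t))
    (hξindep : iIndepFun ξ ℙ)
    (hξid : ∀ t, IdentDistrib (ξ t) (ξ 0) ℙ ℙ)
    (hξmean : ∫ ω, ξ 0 ω ∂ℙ = 0)
    (σ : ℝ) (hσ : 0 < σ)
    (hξvar : ∫ ω, (ξ 0 ω) ^ 2 ∂ℙ = σ ^ 2)
    (hξsq : Integrable (fun ω => (ξ 0 ω) ^ 2) ℙ)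
    -- the process, started from X₀ = 0 almost surely
    (X : ℕ → ℕ → Ω → ℝ)
    (hXinit : ∀ n, ∀ᵐ ω ∂ℙ, X n 0 ω = 0)
    (hXrec : ∀ n t, 1 ≤ t → t ≤ n * T →
      ∀ ω, X n t ω = a (t : ℤ) ((t : ℝ) / ((n : ℝ) * T)) * X n (t - 1) ω + ξ t ω)
    -- the kernel, the bandwidths and the constants Aₙ
    (K : ℝ → ℝ) (hK : AssumpK K ∨ AssumpKt K) (hker : AssumpKer (max ρ 1) K)
    (b : ℕ → ℝ) (hbpos : ∀ n, 0 < b n)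
    (hb0 : Tendsto b atTop (nhds 0))
    (hnb : Tendsto (fun n : ℕ => (n : ℝ) * b n) atTop atTop)
    (A : ℕ → ℝ)
    (hKA : (AssumpKt K ∧ ∀ n, A n = 1) ∨ (AssumpK K ∧ ∀ n : ℕ, A n = Real.log n))
    -- the point of estimation and the phase
    (u : ℝ) (hu : u ∈ Set.Ioo (0:ℝ) 1) (s : ℕ) (hs1 : 1 ≤ s) (hsT : s ≤ T)
    -- the bias term Jₙ
    (J : ℕ → Ω → ℝ)
    (hJ : ∀ n ω, J n ω = (1 / Real.sqrt ((n : ℝ) * b n)) * ∑ j ∈ Finset.range n,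
      K ((((s + j * T : ℕ) : ℝ) / ((n : ℝ) * T) - u) / b n) *
        (X n (s + j * T - 1) ω) ^ 2 *
        (a (s : ℤ) (((s + j * T : ℕ) : ℝ) / ((n : ℝ) * T)) - a (s : ℤ) u))
 :
    ∃ C : ℝ, 0 < C ∧ ∀ᶠ n : ℕ in atTop,
      (∫ ω, |J n ω| ∂ℙ) ≤
        C * Real.sqrt ((n : ℝ) * b n) * (A n / ((n : ℝ) * b n) + b n ^ min ρ 1) := by
  -- basic constants
  set γ := min ρ 1 with hγ
  have hγ0 : 0 < γ := lt_min hρ0 one_pos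
  have hγ1 : γ ≤ 1 := min_le_right _ _
  have hα0 : 0 ≤ α := le_trans (abs_nonneg _) (hbdd 0 0 ⟨le_refl 0, zero_le_one⟩)
  -- Hölder bound on a s
  obtain ⟨Ca, hCa0, hCa⟩ := holder_bound ρ hρ0 hρ2 (a (s:ℤ)) (hreg (s:ℤ))
  -- kernel decay
  obtain ⟨D, β, hD, hβ, hKd⟩ := kernel_exp_decay hK
  set δ := β / 2 with hδdef
  have hδ : 0 < δ := by positivity
  set c1 := D * (1 + 2 / β) with hc1def
  have hc1 : 0 < c1 := by positivity
  have hKz : ∀ z : ℝ, |K z| * |z| ^ γ ≤ c1 * Real.exp (-(δ * |z|)) := by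
    intro z
    calc |K z| * |z| ^ γ
        ≤ (D * Real.exp (-(β * |z|))) * (1 + |z|) :=
          mul_le_mul (hKd z) (rpow_le_one_add (abs_nonneg z) hγ0 hγ1)
            (Real.rpow_nonneg (abs_nonneg z) _) (by positivity)
      _ = D * (Real.exp (-(β * |z|)) * (1 + |z|)) := by ring
      _ ≤ D * ((1 + 2 / β) * Real.exp (-(β / 2 * |z|))) := by
          apply mul_le_mul_of_nonneg_left (exp_mul_one_add_le hβ (abs_nonneg z)) hD.le
      _ = c1 * Real.exp (-(δ * |z|)) := by rw [hc1def, hδdef]; ring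
  -- ξ is in L²
  have hξ0Lp : MemLp (ξ 0) 2 ℙ :=
    (memLp_two_iff_integrable_sq (hξmeas 0).aestronglyMeasurable).2 hξsq
  set σ₂ := eLpNorm (ξ 0) 2 ℙ with hσ₂def
  have hξLp : ∀ t, MemLp (ξ t) 2 ℙ := fun t => (hξid t).symm.memLp_snd hξ0Lp
  have hξnorm : ∀ t, eLpNorm (ξ t) 2 ℙ ≤ σ₂ := fun t => le_of_eq ((hξid t).eLpNorm_eq 2)
  set cb : ℝ≥0∞ := σ₂ * ENNReal.ofReal (1/(1-α)) with hcbdef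
  have hcbne : cb ≠ ⊤ := by
    rw [hcbdef]
    exact ENNReal.mul_ne_top hξ0Lp.eLpNorm_ne_top ENNReal.ofReal_ne_top
  set c₀ : ℝ := (cb.toReal)^2 with hc₀def
  have hc₀ : 0 ≤ c₀ := sq_nonneg _
  -- the constant
  set C := Ca * c₀ * (6 * c1 / δ) + 1 with hCdef
  have hCpos : 0 < C := by positivity
  refine ⟨C, hCpos, ?_⟩
  -- the eventual conditions
  have hev1 : ∀ᶠ n : ℕ in atTop, max δ 1 ≤ (n : ℝ) * b n := hnb.eventually_ge_atTop _
  have hev2 : ∀ᶠ n : ℕ in atTop, 1 ≤ n := eventually_ge_atTop 1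
  filter_upwards [hev1, hev2] with n hnb' hn1
  -- basic positivity for this n
  have hb : 0 < b n := hbpos n
  have hnbpos : 0 < (n:ℝ) * b n :=
    lt_of_lt_of_le zero_lt_one ((le_max_right δ 1).trans hnb')
  have hn0 : (0:ℝ) < (n:ℝ) := by exact_mod_cast hn1
  have hT0 : (0:ℝ) < (T:ℝ) := by exact_mod_cast hT
  have hnT : (0:ℝ) < (n:ℝ) * (T:ℝ) := by positivity
  set S := Real.sqrt ((n:ℝ) * b n) with hSdef
  have hS : 0 < S := Real.sqrt_pos.2 hnbpos
  have hA : 0 ≤ A n := by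
    rcases hKA with ⟨_, h⟩ | ⟨_, h⟩
    · rw [h n]; norm_num
    · rw [h n]; exact Real.log_nonneg (by exact_mod_cast hn1)
  have hbγ : 0 ≤ b n ^ γ := Real.rpow_nonneg hb.le _
  have hRHS : 0 ≤ C * S * (A n / ((n:ℝ) * b n) + b n ^ γ) := by
    apply mul_nonneg (mul_nonneg hCpos.le hS.le)
    exact add_nonneg (div_nonneg hA hnbpos.le) hbγ
  -- the auxiliary process
  set ca : ℕ → ℝ := fun t => a (t:ℤ) ((t:ℝ)/((n:ℝ)*(T:ℝ))) with hcadef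
  set Y := procY ca ξ with hYdef
  have hca : ∀ t, 1 ≤ t → t ≤ n*T → |ca t| ≤ α := by
    intro t h1 h2
    apply hbdd
    constructor
    · positivity
    · rw [div_le_one hnT]
      have : ((t:ℕ):ℝ) ≤ ((n*T : ℕ):ℝ) := by exact_mod_cast h2
      rw [Nat.cast_mul] at this
      exact this
  have hmom := procY_moment ca ξ σ₂ hξLp hξnorm α hα0 hα1 (n*T) hca
  have hYint : ∀ t, t ≤ n*T → Integrable (fun ω => (Y t ω)^2) ℙ :=
    fun t ht => (hmom t ht).1.integrable_sq
  have hYbound : ∀ t, t ≤ n*T → ∫ ω, (Y t ω)^2 ∂ℙ ≤ c₀ :=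
    fun t ht => sq_integral_bound _ (hmom t ht).1 hcbne (hmom t ht).2
  -- a.e. identification of X with Y
  have haeq : ∀ t, t ≤ n*T → ∀ᵐ ω ∂ℙ, X n t ω = Y t ω := by
    intro t
    induction t with
    | zero =>
      intro _
      filter_upwards [hXinit n] with ω h
      rw [h]; rfl
    | succ t ih =>
      intro hle
      filter_upwards [ih (by omega)] with ω h
      rw [hXrec n (t+1) (by omega) hle]
      show _ = ca (t+1) * Y t ω + ξ (t+1) ω
      rw [Nat.add_sub_cancel, h]
  -- the grid points
  set xj : ℕ → ℝ := fun j => ((s + j*T : ℕ) : ℝ)/((n:ℝ)*(T:ℝ)) with hxjdef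
  set zj : ℕ → ℝ := fun j => (xj j - u)/b n with hzjdef
  set tj : ℕ → ℕ := fun j => s + j*T - 1 with htjdef
  have hsle : ∀ j, j < n → s + j*T ≤ n*T := by
    intro j hj
    calc s + j*T ≤ T + j*T := by omega
      _ = (j+1)*T := by ring
      _ ≤ n*T := Nat.mul_le_mul_right T hj
  have htj : ∀ j, j < n → tj j ≤ n*T := by
    intro j hj
    have := hsle j hj
    simp only [htjdef]
    omega
  have hxj01 : ∀ j, j < n → xj j ∈ Set.Icc (0:ℝ) 1 := by
    intro j hj
    constructor
    · apply div_nonneg _ hnT.le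
      positivity
    · rw [hxjdef]
      simp only
      rw [div_le_one hnT]
      have : ((s + j*T : ℕ):ℝ) ≤ ((n*T : ℕ):ℝ) := by exact_mod_cast hsle j hj
      rw [Nat.cast_mul] at this
      exact this
  have hzx : ∀ j, xj j - u = zj j * b n := by
    intro j
    rw [hzjdef]
    field_simp
  have hz_arith : ∀ j : ℕ, zj j = ((s:ℝ)/((n:ℝ)*(T:ℝ)) - u)/b n + (j:ℝ) * (1/((n:ℝ)*b n)) := by
    intro j
    rw [hzjdef, hxjdef]
    simp only
    push_cast
    field_simp
    ring
  -- the kernel sum bound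
  have hsum : ∑ j ∈ Finset.range n, |K (zj j)| * |zj j| ^ γ ≤ (6*c1/δ) * ((n:ℝ)*b n) := by
    set d : ℝ := 1/((n:ℝ)*b n) with hddef
    have hd : 0 < d := by positivity
    set c0 : ℝ := ((s:ℝ)/((n:ℝ)*(T:ℝ)) - u)/b n with hc0def
    have hδd : 0 < δ * d := by positivity
    have hδd1 : δ * d ≤ 1 := by
      rw [hddef]
      rw [mul_one_div, div_le_one hnbpos]
      exact (le_max_left δ 1).trans hnb'
    have h13 : δ * d / 3 ≤ 1 - Real.exp (-(δ * d)) := one_sub_exp_neg_ge hδd.le hδd1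
    have hpos3 : 0 < 1 - Real.exp (-(δ * d)) := lt_of_lt_of_le (by positivity) h13
    calc ∑ j ∈ Finset.range n, |K (zj j)| * |zj j| ^ γ
        ≤ ∑ j ∈ Finset.range n, c1 * Real.exp (-(δ * |zj j|)) :=
          Finset.sum_le_sum (fun j _ => hKz (zj j))
      _ = c1 * ∑ j ∈ Finset.range n, Real.exp (-(δ * |c0 + (j:ℝ) * d|)) := by
          rw [Finset.mul_sum]
          apply Finset.sum_congr rfl
          intro j _
          rw [hz_arith j]
      _ ≤ c1 * (2 / (1 - Real.exp (-(δ * d)))) :=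
          mul_le_mul_of_nonneg_left (sum_exp_abs_le δ d c0 hδ hd n) hc1.le
      _ ≤ c1 * (2 / (δ * d / 3)) := by
          apply mul_le_mul_of_nonneg_left _ hc1.le
          exact div_le_div_of_nonneg_left (by norm_num) (by positivity) h13
      _ = (6*c1/δ) * ((n:ℝ)*b n) := by
          rw [hddef]
          field_simp
          ring
  -- the coefficients and the dominating function
  set co : ℕ → ℝ := fun j => (1/S) * (Ca * (b n)^γ * (|K (zj j)| * |zj j| ^ γ)) with hcodef
  have hco0 : ∀ j, 0 ≤ co j := by
    intro j
    apply mul_nonneg (by positivity)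
    apply mul_nonneg (mul_nonneg hCa0 hbγ)
    exact mul_nonneg (abs_nonneg _) (Real.rpow_nonneg (abs_nonneg _) _)
  set g : Ω → ℝ := fun ω => ∑ j ∈ Finset.range n, co j * (Y (tj j) ω)^2 with hgdef
  have hg_int : Integrable g ℙ := by
    apply integrable_finset_sum
    intro j hj
    exact (hYint (tj j) (htj j (Finset.mem_range.1 hj))).const_mul _
  -- a.e. pointwise domination
  have hae_all : ∀ᵐ ω ∂ℙ, ∀ j : ℕ, j < n → X n (tj j) ω = Y (tj j) ω := by
    rw [ae_all_iff]
    intro j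
    by_cases hj : j < n
    · filter_upwards [haeq (tj j) (htj j hj)] with ω h _
      exact h
    · exact Filter.Eventually.of_forall (fun ω h => absurd h hj)
  have h_ptwise : ∀ᵐ ω ∂ℙ, |J n ω| ≤ g ω := by
    filter_upwards [hae_all] with ω hω
    rw [hJ n ω]
    calc |(1 / S) * ∑ j ∈ Finset.range n,
          K ((((s + j * T : ℕ) : ℝ) / ((n : ℝ) * T) - u) / b n) *
          (X n (s + j * T - 1) ω) ^ 2 *
          (a (s : ℤ) (((s + j * T : ℕ) : ℝ) / ((n : ℝ) * T)) - a (s : ℤ) u)|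
        = (1/S) * |∑ j ∈ Finset.range n,
          K (zj j) * (X n (tj j) ω) ^ 2 *
          (a (s : ℤ) (xj j) - a (s : ℤ) u)| := by
          rw [abs_mul, abs_of_nonneg (by positivity : (0:ℝ) ≤ 1/S)]
      _ ≤ (1/S) * ∑ j ∈ Finset.range n, |K (zj j) * (X n (tj j) ω) ^ 2 *
            (a (s : ℤ) (xj j) - a (s : ℤ) u)| := by
          apply mul_le_mul_of_nonneg_left (Finset.abs_sum_le_sum_abs _ _) (by positivity)
      _ ≤ g ω := by
          rw [hgdef]
          simp only
          rw [Finset.mul_sum]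
          apply Finset.sum_le_sum
          intro j hj
          have hjn : j < n := Finset.mem_range.1 hj
          rw [abs_mul, abs_mul, abs_pow, sq_abs, hω j hjn]
          have hΔ : |a (s:ℤ) (xj j) - a (s:ℤ) u| ≤ Ca * ((b n)^γ * |zj j| ^ γ) := by
            have h1 := hCa (xj j) (hxj01 j hjn) u ⟨hu.1.le, hu.2.le⟩
            have h2 : |xj j - u| ^ γ = (b n)^γ * |zj j| ^ γ := by
              rw [hzx j, abs_mul, abs_of_pos hb, Real.mul_rpow (abs_nonneg _) hb.le]
              ring
            rw [h2] at h1
            exact h1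
          have hinner : |K (zj j)| * (Y (tj j) ω)^2 * |a (s:ℤ) (xj j) - a (s:ℤ) u|
              ≤ |K (zj j)| * (Y (tj j) ω)^2 * (Ca * ((b n)^γ * |zj j| ^ γ)) := by
            apply mul_le_mul_of_nonneg_left hΔ
            exact mul_nonneg (abs_nonneg _) (sq_nonneg _)
          calc (1/S) * (|K (zj j)| * (Y (tj j) ω)^2 * |a (s:ℤ) (xj j) - a (s:ℤ) u|)
              ≤ (1/S) * (|K (zj j)| * (Y (tj j) ω)^2 * (Ca * ((b n)^γ * |zj j| ^ γ))) :=
                mul_le_mul_of_nonneg_left hinner (by positivity)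
            _ = co j * (Y (tj j) ω)^2 := by
                simp only [hcodef]
                ring
  -- putting everything together
  have hmain : ∫ ω, |J n ω| ∂ℙ ≤ (Ca * c₀ * (6*c1/δ)) * S * (b n ^ γ) := by
    have hintg : ∫ ω, g ω ∂ℙ ≤ (Ca * c₀ * (6*c1/δ)) * S * (b n ^ γ) := by
      have heq1 : ∫ ω, g ω ∂ℙ = ∑ j ∈ Finset.range n, co j * ∫ ω, (Y (tj j) ω)^2 ∂ℙ := by
        rw [hgdef]
        rw [integral_finset_sum _ (fun j hj =>
          ((hYint (tj j) (htj j (Finset.mem_range.1 hj))).const_mul _))]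
        apply Finset.sum_congr rfl
        intro j _
        exact integral_const_mul _ _
      rw [heq1]
      calc ∑ j ∈ Finset.range n, co j * ∫ ω, (Y (tj j) ω)^2 ∂ℙ
          ≤ ∑ j ∈ Finset.range n, co j * c₀ := by
            apply Finset.sum_le_sum
            intro j hj
            exact mul_le_mul_of_nonneg_left
              (hYbound (tj j) (htj j (Finset.mem_range.1 hj))) (hco0 j)
        _ = ((1/S) * Ca * (b n)^γ * c₀) *
              ∑ j ∈ Finset.range n, |K (zj j)| * |zj j| ^ γ := by
            rw [Finset.mul_sum]
            apply Finset.sum_congr rfl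
            intro j _
            simp only [hcodef]
            ring
        _ ≤ ((1/S) * Ca * (b n)^γ * c₀) * ((6*c1/δ) * ((n:ℝ)*b n)) := by
            apply mul_le_mul_of_nonneg_left hsum
            positivity
        _ = (Ca * c₀ * (6*c1/δ)) * S * (b n ^ γ) := by
            have hSS : (n:ℝ) * b n = S * S := (Real.mul_self_sqrt hnbpos.le).symm
            rw [hSS]
            field_simp
    by_cases hJint : Integrable (fun ω => |J n ω|) ℙ
    · exact le_trans (integral_mono_ae hJint hg_int h_ptwise) hintg
    · rw [integral_undef hJint]
      calc (0:ℝ) ≤ ∫ ω, g ω ∂ℙ := by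
            apply integral_nonneg
            intro ω
            exact Finset.sum_nonneg (fun j _ => mul_nonneg (hco0 j) (sq_nonneg _))
        _ ≤ _ := hintg
  calc ∫ ω, |J n ω| ∂ℙ
      ≤ (Ca * c₀ * (6*c1/δ)) * S * (b n ^ γ) := hmain
    _ = (Ca * c₀ * (6*c1/δ)) * (S * (b n ^ γ)) := by ring
    _ ≤ C * (S * (A n / ((n:ℝ) * b n) + b n ^ γ)) := by
        apply mul_le_mul
        · rw [hCdef]; linarith
        · apply mul_le_mul_of_nonneg_left _ hS.le
          exact le_add_of_nonneg_left (div_nonneg hA hnbpos.le)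
        · positivity
        · exact hCpos.le
    _ = C * S * (A n / ((n:ℝ) * b n) + b n ^ γ) := by ring
end
end

section
/- Under Assumption A(ρ) with 1 < ρ ≤ 2 and X_0 = 0 almost surely, assume moreover E[ξ_0⁴] < ∞ and E[ξ_0³] = 0, let K satisfy Assumption (K) or (K̃) as well as ker(ρ), let (b_n)_{n≥1} be positive reals with b_n → 0 and n·b_n → ∞, and fix u ∈ (0,1), s ∈ {1,…,T}. Then there exists a constant C > 0 such that for all n large enough, Var(J_n) ≤ C · (A_n/(n·b_n) + b_n^ρ), where A_n = 1 if K satisfies (K̃) and A_n = log n if K satisfies (K). -/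
open MeasureTheory ProbabilityTheory Filter Set
open scoped ProbabilityTheory

noncomputable section

lemma lint_two {ρ : ℝ} (h1 : 1 < ρ) (h2 : ρ ≤ 2) : lint ρ = 1 := by
  have hc : ⌈ρ⌉₊ = 2 := by
    have h1' : 1 < ⌈ρ⌉₊ := by
      rw [Nat.lt_ceil]; exact_mod_cast h1
    have h2' : ⌈ρ⌉₊ ≤ 2 := Nat.ceil_le.2 (by norm_num [h2])
    omega
  simp [lint, hc]

lemma sq_le_four_exp {y : ℝ} (hy : 0 ≤ y) : y ^ 2 ≤ 4 * Real.exp y := by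
  have h := Real.add_one_le_exp (y / 2)
  have h2 : (y / 2 + 1) ^ 2 ≤ (Real.exp (y / 2)) ^ 2 :=
    pow_le_pow_left₀ (by positivity) (by linarith) 2
  have h3 : Real.exp (y/2) * Real.exp (y/2) = Real.exp y := by
    rw [← Real.exp_add]; norm_num
  nlinarith [Real.exp_pos y, h, h3]

lemma geom_grid_sum {q : ℝ} (hq0 : 0 ≤ q) (hq1 : q < 1) (m : ℤ) (n : ℕ) :
    ∑ j ∈ Finset.range n, q ^ ((j : ℤ) - m).natAbs ≤ 2 / (1 - q) := by
  classical
  have hsummable : Summable (fun k : ℕ => q ^ k) := summable_geometric_of_lt_one hq0 hq1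
  have htsum : ∑' k : ℕ, q ^ k = (1 - q)⁻¹ := tsum_geometric_of_lt_one hq0 hq1
  have key : ∀ (S : Finset ℕ), (∀ x ∈ S, ∀ y ∈ S,
      ((x : ℤ) - m).natAbs = ((y : ℤ) - m).natAbs → x = y) →
      ∑ j ∈ S, q ^ ((j : ℤ) - m).natAbs ≤ (1 - q)⁻¹ := by
    intro S hinj
    rw [← Finset.sum_image (f := fun k : ℕ => q ^ k) (g := fun j : ℕ => ((j:ℤ) - m).natAbs) hinj]
    calc ∑ k ∈ S.image _, q ^ k ≤ ∑' k : ℕ, q ^ k :=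
          hsummable.sum_le_tsum _ (fun i _ => by positivity)
      _ = (1 - q)⁻¹ := htsum
  set p : ℕ → Prop := fun j : ℕ => m ≤ (j : ℤ) with hp
  have hsplit := Finset.sum_filter_add_sum_filter_not (Finset.range n)
    p (fun j : ℕ => q ^ ((j : ℤ) - m).natAbs)
  have h1 : ∑ j ∈ (Finset.range n).filter p,
      q ^ ((j : ℤ) - m).natAbs ≤ (1 - q)⁻¹ := by
    apply key
    intro x hx y hy hxy
    rw [Finset.mem_filter] at hx hy
    have hx' : m ≤ (x:ℤ) := hx.2
    have hy' : m ≤ (y:ℤ) := hy.2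
    omega
  have h2 : ∑ j ∈ (Finset.range n).filter (fun j => ¬ p j),
      q ^ ((j : ℤ) - m).natAbs ≤ (1 - q)⁻¹ := by
    apply key
    intro x hx y hy hxy
    rw [Finset.mem_filter] at hx hy
    have hx' : ¬ m ≤ (x:ℤ) := hx.2
    have hy' : ¬ m ≤ (y:ℤ) := hy.2
    omega
  have : 2 / (1 - q) = (1 - q)⁻¹ + (1 - q)⁻¹ := by
    rw [div_eq_mul_inv]; ring
  linarith


lemma grid_exp_sum {β δ : ℝ} (hβ : 0 < β) (hδ : 0 < δ) (c : ℝ) (n : ℕ)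
:
    ∑ j ∈ Finset.range n, Real.exp (-(β * |c + j * δ|))
      ≤ Real.exp (β * δ) * (2 / (1 - Real.exp (-(β * δ)))) := by
  set r : ℝ := -c / δ with hr
  set m : ℤ := ⌊r⌋ with hm
  set q : ℝ := Real.exp (-(β * δ)) with hq
  have hq0 : 0 ≤ q := (Real.exp_pos _).le
  have hq1 : q < 1 := by
    rw [hq, Real.exp_lt_one_iff]; nlinarith
  have key : ∀ j ∈ Finset.range n,
      Real.exp (-(β * |c + j * δ|)) ≤ Real.exp (β * δ) * q ^ ((j : ℤ) - m).natAbs := by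
    intro j _
    have habs : |c + j * δ| = δ * |(j : ℝ) - r| := by
      have hcj : c + j * δ = δ * ((j : ℝ) - r) := by
        rw [hr, mul_sub, mul_div_assoc', mul_comm δ (-c), mul_div_assoc, div_self hδ.ne', mul_one]
        ring
      rw [hcj, abs_mul, abs_of_pos hδ]
    have hfloor1 : (m : ℝ) ≤ r := Int.floor_le r
    have hfloor2 : r < (m : ℝ) + 1 := Int.lt_floor_add_one r
    have hnatabs : ((((j : ℤ) - m).natAbs : ℝ)) = |(j : ℝ) - (m : ℝ)| := by
      rw [Nat.cast_natAbs]
      push_cast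
      ring_nf
    have hineq : |(j : ℝ) - r| ≥ (((j : ℤ) - m).natAbs : ℝ) - 1 := by
      rw [hnatabs]
      have h1 : |(j:ℝ) - (m:ℝ)| ≤ |(j:ℝ) - r| + |r - (m:ℝ)| := by
        have := abs_sub_abs_le_abs_sub ((j:ℝ) - (m:ℝ)) ((j:ℝ) - r)
        calc |(j:ℝ) - (m:ℝ)| = |((j:ℝ) - r) + (r - (m:ℝ))| := by ring_nf
          _ ≤ |(j:ℝ) - r| + |r - (m:ℝ)| := abs_add_le _ _
      have h2 : |r - (m:ℝ)| ≤ 1 := by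
        rw [abs_of_nonneg (by linarith)]; linarith
      linarith
    have : -(β * |c + j * δ|) ≤ β * δ + (-(β * δ)) * (((j : ℤ) - m).natAbs : ℝ) := by
      rw [habs]
      have : δ * |(j : ℝ) - r| ≥ δ * ((((j : ℤ) - m).natAbs : ℝ) - 1) :=
        mul_le_mul_of_nonneg_left hineq hδ.le
      nlinarith
    calc Real.exp (-(β * |c + j * δ|))
        ≤ Real.exp (β * δ + (-(β * δ)) * (((j : ℤ) - m).natAbs : ℝ)) := Real.exp_le_exp.2 this
      _ = Real.exp (β * δ) * q ^ ((j : ℤ) - m).natAbs := by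
          rw [Real.exp_add]
          congr 1
          rw [hq, ← Real.exp_nat_mul]
          congr 1
          ring
  calc ∑ j ∈ Finset.range n, Real.exp (-(β * |c + j * δ|))
      ≤ ∑ j ∈ Finset.range n, Real.exp (β * δ) * q ^ ((j : ℤ) - m).natAbs :=
        Finset.sum_le_sum key
    _ = Real.exp (β * δ) * ∑ j ∈ Finset.range n, q ^ ((j : ℤ) - m).natAbs := by
        rw [Finset.mul_sum]
    _ ≤ Real.exp (β * δ) * (2 / (1 - q)) := by
        apply mul_le_mul_of_nonneg_left (geom_grid_sum hq0 hq1 m n) (Real.exp_pos _).le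









lemma kernel_exp_bound {K : ℝ → ℝ} (hK : AssumpK K ∨ AssumpKt K) :
    ∃ β M : ℝ, 0 < β ∧ 0 ≤ M ∧ ∀ x, |K x| ≤ M * Real.exp (-(β * |x|)) := by
  rcases hK with ⟨-, ⟨M₀, hM₀⟩, -, -, β, hβ, htt⟩ | ⟨-, ⟨M₀, hM₀⟩, -, -, B, hB, hBK⟩
  · -- exponential tails
    have hM₀0 : 0 ≤ M₀ := le_trans (abs_nonneg _) (hM₀ 0)
    have hev : ∀ᶠ t in cocompact ℝ, dist (Real.exp (β * |t|) * K t) 0 < 1 :=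
      htt (Metric.ball_mem_nhds 0 one_pos)
    rw [Filter.hasBasis_cocompact.eventually_iff] at hev
    obtain ⟨k, hkc, hk⟩ := hev
    obtain ⟨R, hkR⟩ := (Metric.isBounded_iff_subset_closedBall 0).1 hkc.isBounded
    have hR0 : 0 ≤ |R| := abs_nonneg R
    refine ⟨β, max 1 (M₀ * Real.exp (β * |R|)), hβ, le_max_of_le_left one_pos.le, fun x => ?_⟩
    by_cases hx : x ∈ k
    · have hxR : |x| ≤ |R| := by
        have := hkR hx
        rw [Metric.mem_closedBall, Real.dist_eq, sub_zero] at this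
        exact this.trans (le_abs_self R)
      calc |K x| ≤ M₀ := hM₀ x
        _ ≤ M₀ * Real.exp (β * |R|) * Real.exp (-(β * |x|)) := by
            rw [mul_assoc, ← Real.exp_add]
            have h1 : (1:ℝ) ≤ Real.exp (β * |R| + -(β * |x|)) := by
              rw [Real.one_le_exp_iff]
              nlinarith
            nlinarith
        _ ≤ max 1 (M₀ * Real.exp (β * |R|)) * Real.exp (-(β * |x|)) := by
            apply mul_le_mul_of_nonneg_right (le_max_right _ _) (Real.exp_pos _).le
    · have := hk hx
      rw [Real.dist_eq, sub_zero, abs_mul, abs_of_pos (Real.exp_pos _)] at this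
      have h2 : |K x| ≤ Real.exp (-(β * |x|)) := by
        rw [Real.exp_neg, ← one_div, le_div_iff₀ (Real.exp_pos _)]
        nlinarith
      calc |K x| ≤ Real.exp (-(β * |x|)) := h2
        _ ≤ max 1 (M₀ * Real.exp (β * |R|)) * Real.exp (-(β * |x|)) := by
            nlinarith [Real.exp_pos (-(β * |x|)), le_max_left (1:ℝ) (M₀ * Real.exp (β * |R|))]
  · -- compact support
    have hM₀0 : 0 ≤ M₀ := le_trans (abs_nonneg _) (hM₀ 0)
    refine ⟨1, M₀ * Real.exp B, one_pos, by positivity, fun x => ?_⟩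
    by_cases hx : B < |x|
    · rw [hBK x hx, abs_zero]
      positivity
    · push_neg at hx
      calc |K x| ≤ M₀ := hM₀ x
        _ ≤ M₀ * Real.exp B * Real.exp (-(1 * |x|)) := by
            rw [mul_assoc, ← Real.exp_add]
            have h1 : (1:ℝ) ≤ Real.exp (B + -(1 * |x|)) := by
              rw [Real.one_le_exp_iff]
              linarith
            nlinarith
        _ = M₀ * Real.exp B * Real.exp (-(1 * |x|)) := rfl

lemma lipschitz_of_CHolder {ρ : ℝ} {f : ℝ → ℝ} (h1 : 1 < ρ) (h2 : ρ ≤ 2)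
    (hf : CHolder ρ f) : ∃ L : ℝ, 0 ≤ L ∧ ∀ x ∈ Set.Icc (0:ℝ) 1, ∀ y ∈ Set.Icc (0:ℝ) 1,
      |f x - f y| ≤ L * |x - y| := by
  have hcd : ContDiffOn ℝ 1 f (Set.Icc 0 1) := by
    have := hf.1
    rw [lint_two h1 h2] at this
    exact_mod_cast this
  have hu : UniqueDiffOn ℝ (Set.Icc (0:ℝ) 1) := uniqueDiffOn_Icc one_pos
  have hdiff : DifferentiableOn ℝ f (Set.Icc 0 1) := hcd.differentiableOn one_ne_zero
  have hcont : ContinuousOn (derivWithin f (Set.Icc 0 1)) (Set.Icc 0 1) :=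
    hcd.continuousOn_derivWithin hu le_rfl
  obtain ⟨C, hC⟩ := isCompact_Icc.exists_bound_of_continuousOn hcont
  refine ⟨max C 0, le_max_right _ _, fun x hx y hy => ?_⟩
  have hb : ∀ z ∈ Set.Icc (0:ℝ) 1, ‖derivWithin f (Set.Icc 0 1) z‖ ≤ max C 0 :=
    fun z hz => (hC z hz).trans (le_max_left _ _)
  have := Convex.norm_image_sub_le_of_norm_derivWithin_le hdiff hb (convex_Icc 0 1) hy hx
  simpa [Real.norm_eq_abs] using this


/-- The explicit linear process built from innovations `ξ` and coefficients `d`. -/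
def Yproc {Ω : Type*} (d : ℕ → ℝ) (ξ : ℕ → Ω → ℝ) (r t : ℕ) (ω : Ω) : ℝ :=
  ∑ i ∈ Finset.Ioc r t, (∏ m ∈ Finset.Ioc i t, d m) * ξ i ω

lemma Yproc_zero {Ω : Type*} (d : ℕ → ℝ) (ξ : ℕ → Ω → ℝ) (r t : ℕ) (h : t ≤ r) :
    Yproc d ξ r t = fun _ => 0 := by
  funext ω
  simp [Yproc, Finset.Ioc_eq_empty (by omega : ¬ r < t)]

lemma Yproc_rec {Ω : Type*} (d : ℕ → ℝ) (ξ : ℕ → Ω → ℝ) (r t : ℕ) (h : r ≤ t) :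
    Yproc d ξ r (t + 1) = fun ω => d (t + 1) * Yproc d ξ r t ω + ξ (t + 1) ω := by
  funext ω
  simp only [Yproc]
  rw [Finset.sum_Ioc_succ_top h]
  rw [Finset.mul_sum]
  congr 1
  · apply Finset.sum_congr rfl
    intro i hi
    rw [Finset.mem_Ioc] at hi
    rw [Finset.prod_Ioc_succ_top hi.2]
    ring
  · simp [Finset.Ioc_eq_empty (lt_irrefl (t+1))]

lemma Yproc_split {Ω : Type*} (d : ℕ → ℝ) (ξ : ℕ → Ω → ℝ) (r t t' : ℕ)
    (h1 : r ≤ t) (h2 : t ≤ t') :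
    Yproc d ξ r t' = fun ω =>
      (∏ m ∈ Finset.Ioc t t', d m) * Yproc d ξ r t ω + Yproc d ξ t t' ω := by
  funext ω
  simp only [Yproc]
  rw [Finset.mul_sum, ← Finset.sum_Ioc_consecutive _ h1 h2]
  congr 1
  apply Finset.sum_congr rfl
  intro i hi
  rw [Finset.mem_Ioc] at hi
  rw [← Finset.prod_Ioc_consecutive _ hi.2 h2]
  ring

lemma Yproc_measurable {Ω : Type*} [MeasurableSpace Ω] (d : ℕ → ℝ) (ξ : ℕ → Ω → ℝ)
    (hξ : ∀ i, Measurable (ξ i)) (r t : ℕ) : Measurable (Yproc d ξ r t) := by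
  apply Finset.measurable_sum
  intro i _
  exact (hξ i).const_mul _

lemma indep_linear {Ω : Type*} [MeasureSpace Ω] (ξ : ℕ → Ω → ℝ)
    (hξmeas : ∀ i, Measurable (ξ i))
    (hξindep : iIndepFun ξ ℙ)
    (S S' : Finset ℕ) (hd : Disjoint S S') (c c' : ℕ → ℝ) :
    IndepFun (fun ω => ∑ i ∈ S, c i * ξ i ω) (fun ω => ∑ i ∈ S', c' i * ξ i ω) ℙ := by
  classical
  have h := hξindep.indepFun_finset S S' hd hξmeas
  have hφ : Measurable (fun (v : ↥S → ℝ) => ∑ i : S, c i * v i) :=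
    Finset.measurable_sum _ (fun i _ => (measurable_pi_apply i).const_mul _)
  have hψ : Measurable (fun (v : ↥S' → ℝ) => ∑ i : S', c' i * v i) :=
    Finset.measurable_sum _ (fun i _ => (measurable_pi_apply i).const_mul _)
  have h2 := h.comp hφ hψ
  have e1 : ((fun (v : ↥S → ℝ) => ∑ i : S, c i * v i) ∘
      (fun ω (i : S) => ξ i ω)) = fun ω => ∑ i ∈ S, c i * ξ i ω := by
    funext ω
    simp only [Function.comp_apply]
    rw [← Finset.sum_coe_sort S (fun i => c i * ξ i ω)]
  have e2 : ((fun (v : ↥S' → ℝ) => ∑ i : S', c' i * v i) ∘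
      (fun ω (i : S') => ξ i ω)) = fun ω => ∑ i ∈ S', c' i * ξ i ω := by
    funext ω
    simp only [Function.comp_apply]
    rw [← Finset.sum_coe_sort S' (fun i => c' i * ξ i ω)]
  rwa [e1, e2] at h2

lemma indep_Yproc_Yproc {Ω : Type*} [MeasureSpace Ω] (d : ℕ → ℝ) (ξ : ℕ → Ω → ℝ)
    (hξmeas : ∀ i, Measurable (ξ i))
    (hξindep : iIndepFun ξ ℙ)
    (r t t' : ℕ) :
    IndepFun (Yproc d ξ r t) (Yproc d ξ t t') ℙ := by
  have h := indep_linear ξ hξmeas hξindep (Finset.Ioc r t) (Finset.Ioc t t')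
    (by rw [Finset.disjoint_left]; intro i hi hi'
        rw [Finset.mem_Ioc] at hi hi'; omega)
    (fun i => ∏ m ∈ Finset.Ioc i t, d m) (fun i => ∏ m ∈ Finset.Ioc i t', d m)
  exact h

lemma indep_Yproc_xi {Ω : Type*} [MeasureSpace Ω] (d : ℕ → ℝ) (ξ : ℕ → Ω → ℝ)
    (hξmeas : ∀ i, Measurable (ξ i))
    (hξindep : iIndepFun ξ ℙ)
    (r t : ℕ) :
    IndepFun (Yproc d ξ r t) (ξ (t + 1)) ℙ := by
  have h := indep_linear ξ hξmeas hξindep (Finset.Ioc r t) {t + 1}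
    (by rw [Finset.disjoint_left]; intro i hi hi'
        rw [Finset.mem_Ioc] at hi; rw [Finset.mem_singleton] at hi'; omega)
    (fun i => ∏ m ∈ Finset.Ioc i t, d m) (fun _ => 1)
  have e : (fun ω => ∑ i ∈ ({t + 1} : Finset ℕ), (1:ℝ) * ξ i ω) = ξ (t + 1) := by
    funext ω; simp
  rwa [e] at h

lemma Yproc_moments {Ω : Type*} [MeasureSpace Ω] (hprob : IsProbabilityMeasure (ℙ : Measure Ω))
    (ξ : ℕ → Ω → ℝ) (hξmeas : ∀ i, Measurable (ξ i))
    (hξindep : iIndepFun ξ ℙ)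
    (hXi_int : ∀ i k, 1 ≤ k → k ≤ 4 → Integrable (fun ω => ξ i ω ^ k) ℙ)
    (σ2 μ4 : ℝ) (hσ2 : 0 ≤ σ2) (hμ4 : 0 ≤ μ4)
    (hm1 : ∀ i, ∫ ω, ξ i ω ∂ℙ = 0)
    (hm2 : ∀ i, ∫ ω, ξ i ω ^ 2 ∂ℙ = σ2)
    (hm3 : ∀ i, ∫ ω, ξ i ω ^ 3 ∂ℙ = 0)
    (hm4 : ∀ i, ∫ ω, ξ i ω ^ 4 ∂ℙ = μ4)
    (d : ℕ → ℝ) (α : ℝ) (hα0 : 0 ≤ α) (hα1 : α < 1) (N : ℕ)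
    (hd : ∀ m, 1 ≤ m → m ≤ N → |d m| ≤ α) (r : ℕ) :
    ∀ t, t ≤ N →
      (∀ k, 1 ≤ k → k ≤ 4 → Integrable (fun ω => (Yproc d ξ r t ω) ^ k) ℙ) ∧
      (∫ ω, Yproc d ξ r t ω ∂ℙ) = 0 ∧
      (0 ≤ ∫ ω, (Yproc d ξ r t ω) ^ 2 ∂ℙ) ∧
      (∫ ω, (Yproc d ξ r t ω) ^ 2 ∂ℙ) ≤ σ2 / (1 - α ^ 2) ∧
      (∫ ω, (Yproc d ξ r t ω) ^ 4 ∂ℙ)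
        ≤ (6 * α ^ 2 * (σ2 / (1 - α ^ 2)) * σ2 + μ4) / (1 - α ^ 4) := by
  have hα2 : (0:ℝ) < 1 - α ^ 2 := by nlinarith
  have hα4 : (0:ℝ) < 1 - α ^ 4 := by nlinarith
  have hB2 : (0:ℝ) ≤ σ2 / (1 - α ^ 2) := by positivity
  have hM4 : (0:ℝ) ≤ (6 * α ^ 2 * (σ2 / (1 - α ^ 2)) * σ2 + μ4) / (1 - α ^ 4) := by positivity
  -- trivial case helper
  have htriv : ∀ t, Yproc d ξ r t = (fun _ => (0:ℝ)) →
      (∀ k, 1 ≤ k → k ≤ 4 → Integrable (fun ω => (Yproc d ξ r t ω) ^ k) ℙ) ∧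
      (∫ ω, Yproc d ξ r t ω ∂ℙ) = 0 ∧
      (0 ≤ ∫ ω, (Yproc d ξ r t ω) ^ 2 ∂ℙ) ∧
      (∫ ω, (Yproc d ξ r t ω) ^ 2 ∂ℙ) ≤ σ2 / (1 - α ^ 2) ∧
      (∫ ω, (Yproc d ξ r t ω) ^ 4 ∂ℙ)
        ≤ (6 * α ^ 2 * (σ2 / (1 - α ^ 2)) * σ2 + μ4) / (1 - α ^ 4) := by
    intro t ht
    rw [ht]
    refine ⟨fun k hk1 _ => ?_, by simp, by simp, by simpa using hB2, by simpa using hM4⟩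
    simp only [zero_pow (by omega : k ≠ 0)]
    exact integrable_const 0
  intro t
  induction t with
  | zero =>
    intro _
    exact htriv 0 (Yproc_zero d ξ r 0 (Nat.zero_le r))
  | succ t ih =>
    intro hN
    by_cases hrt : t < r
    · exact htriv (t+1) (Yproc_zero d ξ r (t+1) (by omega))
    · push_neg at hrt
      obtain ⟨hIW, hm1W, hm2W0, hm2W, hm4W⟩ := ih (by omega)
      set W := Yproc d ξ r t with hW
      set A := d (t + 1) with hA'
      set V := ξ (t + 1) with hV'
      have hrec : Yproc d ξ r (t + 1) = fun ω => A * W ω + V ω := Yproc_rec d ξ r t hrt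
      have hA : |A| ≤ α := hd (t+1) (by omega) hN
      have hA2 : A ^ 2 ≤ α ^ 2 := by
        calc A ^ 2 = |A| ^ 2 := (sq_abs A).symm
          _ ≤ α ^ 2 := pow_le_pow_left₀ (abs_nonneg A) hA 2
      have hA4 : A ^ 4 ≤ α ^ 4 := by
        calc A ^ 4 = |A| ^ 4 := by rw [← abs_pow]; exact (abs_of_nonneg (by positivity)).symm
          _ ≤ α ^ 4 := pow_le_pow_left₀ (abs_nonneg A) hA 4
      have hm4W0 : 0 ≤ ∫ ω, W ω ^ 4 ∂ℙ := integral_nonneg (fun ω => by positivity)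
      have hIndep : IndepFun W V ℙ := indep_Yproc_xi d ξ hξmeas hξindep r t
      have hIndep_pow : ∀ i k : ℕ, IndepFun (fun ω => W ω ^ i) (fun ω => V ω ^ k) ℙ :=
        fun i k => hIndep.comp (measurable_id.pow_const i) (measurable_id.pow_const k)
      have hIV : ∀ k, 1 ≤ k → k ≤ 4 → Integrable (fun ω => V ω ^ k) ℙ :=
        fun k h1 h4 => hXi_int (t+1) k h1 h4
      have hIprod : ∀ i k, 1 ≤ i → i ≤ 4 → 1 ≤ k → k ≤ 4 →
          Integrable (fun ω => W ω ^ i * V ω ^ k) ℙ :=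
        fun i k hi1 hi4 hk1 hk4 =>
          (hIndep_pow i k).integrable_mul (hIW i hi1 hi4) (hIV k hk1 hk4)
      have hEprod : ∀ i k, 1 ≤ i → i ≤ 4 → 1 ≤ k → k ≤ 4 →
          (∫ ω, W ω ^ i * V ω ^ k ∂ℙ) = (∫ ω, W ω ^ i ∂ℙ) * (∫ ω, V ω ^ k ∂ℙ) :=
        fun i k hi1 hi4 hk1 hk4 =>
          (hIndep_pow i k).integral_fun_mul_eq_mul_integral (hIW i hi1 hi4).aestronglyMeasurable (hIV k hk1 hk4).aestronglyMeasurable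
      have hm1V : ∫ ω, V ω ∂ℙ = 0 := hm1 (t+1)
      have hm2V : ∫ ω, V ω ^ 2 ∂ℙ = σ2 := hm2 (t+1)
      have hm3V : ∫ ω, V ω ^ 3 ∂ℙ = 0 := hm3 (t+1)
      have hm4V : ∫ ω, V ω ^ 4 ∂ℙ = μ4 := hm4 (t+1)
      have hW1 : Integrable W ℙ := by
        have := hIW 1 le_rfl (by omega); simpa using this
      have hV1 : Integrable V ℙ := by
        have := hIV 1 le_rfl (by omega); simpa using this
      have hm1W' : ∫ ω, W ω ^ 1 ∂ℙ = 0 := by simpa using hm1W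
      have hm1V' : ∫ ω, V ω ^ 1 ∂ℙ = 0 := by simpa using hm1V
      -- integrability of all powers of the new value
      have hIsum : ∀ k, 1 ≤ k → k ≤ 4 → Integrable (fun ω => (A * W ω + V ω) ^ k) ℙ := by
        intro k hk1 hk4
        interval_cases k
        · have e : (fun ω => (A * W ω + V ω) ^ 1) = fun ω =>
            A * W ω + V ω := by funext ω; ring
          rw [e]
          exact (hW1.const_mul A).add hV1
        · have e : (fun ω => (A * W ω + V ω) ^ 2) = fun ω =>
            A ^ 2 * W ω ^ 2 + (2 * A) * (W ω ^ 1 * V ω ^ 1) + V ω ^ 2 := by funext ω; ring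
          rw [e]
          exact (((hIW 2 (by omega) (by omega)).const_mul _).add
            ((hIprod 1 1 le_rfl (by omega) le_rfl (by omega)).const_mul _)).add
            (hIV 2 (by omega) (by omega))
        · have e : (fun ω => (A * W ω + V ω) ^ 3) = fun ω =>
            A ^ 3 * W ω ^ 3 + (3 * A ^ 2) * (W ω ^ 2 * V ω ^ 1)
              + (3 * A) * (W ω ^ 1 * V ω ^ 2) + V ω ^ 3 := by funext ω; ring
          rw [e]
          exact ((((hIW 3 (by omega) (by omega)).const_mul _).add
            ((hIprod 2 1 (by omega) (by omega) le_rfl (by omega)).const_mul _)).add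
            ((hIprod 1 2 le_rfl (by omega) (by omega) (by omega)).const_mul _)).add
            (hIV 3 (by omega) (by omega))
        · have e : (fun ω => (A * W ω + V ω) ^ 4) = fun ω =>
            A ^ 4 * W ω ^ 4 + (4 * A ^ 3) * (W ω ^ 3 * V ω ^ 1)
              + (6 * A ^ 2) * (W ω ^ 2 * V ω ^ 2)
              + (4 * A) * (W ω ^ 1 * V ω ^ 3) + V ω ^ 4 := by funext ω; ring
          rw [e]
          exact (((((hIW 4 (by omega) (by omega)).const_mul _).add
            ((hIprod 3 1 (by omega) (by omega) le_rfl (by omega)).const_mul _)).add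
            ((hIprod 2 2 (by omega) (by omega) (by omega) (by omega)).const_mul _)).add
            ((hIprod 1 3 le_rfl (by omega) (by omega) (by omega)).const_mul _)).add
            (hIV 4 (by omega) (by omega))
      -- first moment
      have hEm1 : (∫ ω, (A * W ω + V ω) ∂ℙ) = 0 := by
        rw [integral_add (hW1.const_mul A) hV1, integral_const_mul, hm1W, hm1V]
        ring
      -- second moment
      have hEm2 : (∫ ω, (A * W ω + V ω) ^ 2 ∂ℙ) = A ^ 2 * (∫ ω, W ω ^ 2 ∂ℙ) + σ2 := by
        have e : (fun ω => (A * W ω + V ω) ^ 2) = fun ω =>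
          A ^ 2 * W ω ^ 2 + (2 * A) * (W ω ^ 1 * V ω ^ 1) + V ω ^ 2 := by funext ω; ring
        rw [e]
        have j1 : Integrable (fun ω => A ^ 2 * W ω ^ 2) ℙ :=
          (hIW 2 (by omega) (by omega)).const_mul _
        have j2 : Integrable (fun ω => (2 * A) * (W ω ^ 1 * V ω ^ 1)) ℙ :=
          (hIprod 1 1 le_rfl (by omega) le_rfl (by omega)).const_mul _
        have j12 : Integrable (fun ω => A ^ 2 * W ω ^ 2 + (2 * A) * (W ω ^ 1 * V ω ^ 1)) ℙ :=
          j1.add j2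
        rw [integral_add j12 (hIV 2 (by omega) (by omega)), integral_add j1 j2,
          integral_const_mul, integral_const_mul,
          hEprod 1 1 le_rfl (by omega) le_rfl (by omega), hm1W', hm1V', hm2V]
        ring
      -- fourth moment
      have hEm4 : (∫ ω, (A * W ω + V ω) ^ 4 ∂ℙ)
          = A ^ 4 * (∫ ω, W ω ^ 4 ∂ℙ) + 6 * A ^ 2 * (∫ ω, W ω ^ 2 ∂ℙ) * σ2 + μ4 := by
        have e : (fun ω => (A * W ω + V ω) ^ 4) = fun ω =>
          A ^ 4 * W ω ^ 4 + (4 * A ^ 3) * (W ω ^ 3 * V ω ^ 1)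
            + (6 * A ^ 2) * (W ω ^ 2 * V ω ^ 2)
            + (4 * A) * (W ω ^ 1 * V ω ^ 3) + V ω ^ 4 := by funext ω; ring
        rw [e]
        have i1 : Integrable (fun ω => A ^ 4 * W ω ^ 4) ℙ :=
          (hIW 4 (by omega) (by omega)).const_mul (A ^ 4)
        have i2 : Integrable (fun ω => (4 * A ^ 3) * (W ω ^ 3 * V ω ^ 1)) ℙ :=
          (hIprod 3 1 (by omega) (by omega) le_rfl (by omega)).const_mul (4 * A ^ 3)
        have i3 : Integrable (fun ω => (6 * A ^ 2) * (W ω ^ 2 * V ω ^ 2)) ℙ :=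
          (hIprod 2 2 (by omega) (by omega) (by omega) (by omega)).const_mul (6 * A ^ 2)
        have i4 : Integrable (fun ω => (4 * A) * (W ω ^ 1 * V ω ^ 3)) ℙ :=
          (hIprod 1 3 le_rfl (by omega) (by omega) (by omega)).const_mul (4 * A)
        have i5 : Integrable (fun ω => V ω ^ 4) ℙ := hIV 4 (by omega) (by omega)
        have i12 : Integrable (fun ω => A ^ 4 * W ω ^ 4
          + (4 * A ^ 3) * (W ω ^ 3 * V ω ^ 1)) ℙ := i1.add i2
        have i123 : Integrable (fun ω => A ^ 4 * W ω ^ 4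
          + (4 * A ^ 3) * (W ω ^ 3 * V ω ^ 1) + (6 * A ^ 2) * (W ω ^ 2 * V ω ^ 2)) ℙ :=
          i12.add i3
        have i1234 : Integrable (fun ω => A ^ 4 * W ω ^ 4
          + (4 * A ^ 3) * (W ω ^ 3 * V ω ^ 1) + (6 * A ^ 2) * (W ω ^ 2 * V ω ^ 2)
          + (4 * A) * (W ω ^ 1 * V ω ^ 3)) ℙ := i123.add i4
        rw [integral_add i1234 i5,
          integral_add i123 i4,
          integral_add i12 i3,
          integral_add i1 i2,
          integral_const_mul, integral_const_mul, integral_const_mul, integral_const_mul,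
          hEprod 3 1 (by omega) (by omega) le_rfl (by omega),
          hEprod 2 2 (by omega) (by omega) (by omega) (by omega),
          hEprod 1 3 le_rfl (by omega) (by omega) (by omega),
          hm1W', hm1V', hm2V, hm3V, hm4V]
        ring
      simp only [hrec]
      refine ⟨hIsum, hEm1, ?_, ?_, ?_⟩
      · rw [hEm2]; nlinarith
      · rw [hEm2]
        have h1 : A ^ 2 * (∫ ω, W ω ^ 2 ∂ℙ) ≤ α ^ 2 * (σ2 / (1 - α ^ 2)) := by
          apply mul_le_mul hA2 hm2W hm2W0 (by positivity)
        have h2 : α ^ 2 * (σ2 / (1 - α ^ 2)) + σ2 = σ2 / (1 - α ^ 2) := by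
          field_simp
          ring
        linarith
      · rw [hEm4]
        set B2 := σ2 / (1 - α ^ 2) with hB2'
        set M4 := (6 * α ^ 2 * B2 * σ2 + μ4) / (1 - α ^ 4) with hM4'
        have h1 : A ^ 4 * (∫ ω, W ω ^ 4 ∂ℙ) ≤ α ^ 4 * M4 := by
          apply mul_le_mul hA4 hm4W hm4W0 (by positivity)
        have h2 : 6 * A ^ 2 * (∫ ω, W ω ^ 2 ∂ℙ) * σ2 ≤ 6 * α ^ 2 * B2 * σ2 := by
          have h3 : A ^ 2 * (∫ ω, W ω ^ 2 ∂ℙ) ≤ α ^ 2 * B2 :=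
            mul_le_mul hA2 hm2W hm2W0 (by positivity)
          nlinarith
        have h4 : α ^ 4 * M4 + 6 * α ^ 2 * B2 * σ2 + μ4 = M4 := by
          rw [hM4']
          field_simp
          ring
        linarith

set_option maxHeartbeats 1000000 in
lemma Yproc_cov_bound {Ω : Type*} [MeasureSpace Ω]
    (hprob : IsProbabilityMeasure (ℙ : Measure Ω))
    (ξ : ℕ → Ω → ℝ) (hξmeas : ∀ i, Measurable (ξ i))
    (hξindep : iIndepFun ξ ℙ)
    (hXi_int : ∀ i k, 1 ≤ k → k ≤ 4 → Integrable (fun ω => ξ i ω ^ k) ℙ)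
    (σ2 μ4 : ℝ) (hσ2 : 0 ≤ σ2) (hμ4 : 0 ≤ μ4)
    (hm1 : ∀ i, ∫ ω, ξ i ω ∂ℙ = 0)
    (hm2 : ∀ i, ∫ ω, ξ i ω ^ 2 ∂ℙ = σ2)
    (hm3 : ∀ i, ∫ ω, ξ i ω ^ 3 ∂ℙ = 0)
    (hm4 : ∀ i, ∫ ω, ξ i ω ^ 4 ∂ℙ = μ4)
    (d : ℕ → ℝ) (α : ℝ) (hα0 : 0 ≤ α) (hα1 : α < 1) (N : ℕ)
    (hd : ∀ m, 1 ≤ m → m ≤ N → |d m| ≤ α)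
    (t t' : ℕ) (htt : t ≤ t') (ht'N : t' ≤ N) :
    |(∫ ω, (Yproc d ξ 0 t ω) ^ 2 * (Yproc d ξ 0 t' ω) ^ 2 ∂ℙ)
      - (∫ ω, (Yproc d ξ 0 t ω) ^ 2 ∂ℙ) * (∫ ω, (Yproc d ξ 0 t' ω) ^ 2 ∂ℙ)|
    ≤ α ^ (2 * (t' - t)) *
      ((6 * α ^ 2 * (σ2 / (1 - α ^ 2)) * σ2 + μ4) / (1 - α ^ 4) + (σ2 / (1 - α ^ 2)) ^ 2) := by
  have hα2 : (0:ℝ) < 1 - α ^ 2 := by nlinarith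
  have hα4 : (0:ℝ) < 1 - α ^ 4 := by nlinarith
  set B2 := σ2 / (1 - α ^ 2) with hB2'
  set M4 := (6 * α ^ 2 * B2 * σ2 + μ4) / (1 - α ^ 4) with hM4'
  have htN : t ≤ N := htt.trans ht'N
  obtain ⟨hIW, hm1W, hm2W0, hm2W, hm4W⟩ := Yproc_moments hprob ξ hξmeas hξindep hXi_int
    σ2 μ4 hσ2 hμ4 hm1 hm2 hm3 hm4 d α hα0 hα1 N hd 0 t htN
  obtain ⟨hIZ, hm1Z, hm2Z0, hm2Z, hm4Z⟩ := Yproc_moments hprob ξ hξmeas hξindep hXi_int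
    σ2 μ4 hσ2 hμ4 hm1 hm2 hm3 hm4 d α hα0 hα1 N hd t t' ht'N
  set W := Yproc d ξ 0 t with hW'
  set Z := Yproc d ξ t t' with hZ'
  set p := ∏ m ∈ Finset.Ioc t t', d m with hp'
  have hsplit : Yproc d ξ 0 t' = fun ω => p * W ω + Z ω :=
    Yproc_split d ξ 0 t t' (Nat.zero_le t) htt
  have hm4W0 : 0 ≤ ∫ ω, W ω ^ 4 ∂ℙ := integral_nonneg (fun ω => by positivity)
  -- bound on p
  have hpabs : |p| ≤ α ^ (t' - t) := by
    rw [hp']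
    calc |∏ m ∈ Finset.Ioc t t', d m| = ∏ m ∈ Finset.Ioc t t', |d m| :=
          Finset.abs_prod _ _
      _ ≤ ∏ m ∈ Finset.Ioc t t', α := by
          apply Finset.prod_le_prod (fun m _ => abs_nonneg _)
          intro m hm
          rw [Finset.mem_Ioc] at hm
          exact hd m (by omega) (hm.2.trans ht'N)
      _ = α ^ (t' - t) := by rw [Finset.prod_const, Nat.card_Ioc]
  have hp2 : p ^ 2 ≤ α ^ (2 * (t' - t)) := by
    calc p ^ 2 = |p| ^ 2 := (sq_abs p).symm
      _ ≤ (α ^ (t' - t)) ^ 2 := pow_le_pow_left₀ (abs_nonneg _) hpabs 2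
      _ = α ^ (2 * (t' - t)) := by rw [← pow_mul, mul_comm]
  -- independence
  have hIndep : IndepFun W Z ℙ := indep_Yproc_Yproc d ξ hξmeas hξindep 0 t t'
  have hIndep31 : IndepFun (fun ω => W ω ^ 3) Z ℙ := by
    have := hIndep.comp (measurable_id.pow_const 3) measurable_id
    exact this
  have hIndep22 : IndepFun (fun ω => W ω ^ 2) (fun ω => Z ω ^ 2) ℙ :=
    hIndep.comp (measurable_id.pow_const 2) (measurable_id.pow_const 2)
  have hIndep11 : IndepFun W Z ℙ := hIndep
  have hIW1 : Integrable W ℙ := by have := hIW 1 le_rfl (by omega); simpa using this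
  have hIZ1 : Integrable Z ℙ := by have := hIZ 1 le_rfl (by omega); simpa using this
  have hEW3Z : (∫ ω, W ω ^ 3 * Z ω ∂ℙ) = (∫ ω, W ω ^ 3 ∂ℙ) * (∫ ω, Z ω ∂ℙ) :=
    hIndep31.integral_fun_mul_eq_mul_integral (hIW 3 (by omega) (by omega)).aestronglyMeasurable hIZ1.aestronglyMeasurable
  have hEW2Z2 : (∫ ω, W ω ^ 2 * Z ω ^ 2 ∂ℙ)
      = (∫ ω, W ω ^ 2 ∂ℙ) * (∫ ω, Z ω ^ 2 ∂ℙ) :=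
    hIndep22.integral_fun_mul_eq_mul_integral (hIW 2 (by omega) (by omega)).aestronglyMeasurable
      (hIZ 2 (by omega) (by omega)).aestronglyMeasurable
  have hEWZ : (∫ ω, W ω * Z ω ∂ℙ) = (∫ ω, W ω ∂ℙ) * (∫ ω, Z ω ∂ℙ) :=
    hIndep11.integral_fun_mul_eq_mul_integral hIW1.aestronglyMeasurable hIZ1.aestronglyMeasurable
  -- integrability of pieces
  have i1 : Integrable (fun ω => p ^ 2 * W ω ^ 4) ℙ :=
    (hIW 4 (by omega) (by omega)).const_mul _
  have i2 : Integrable (fun ω => (2 * p) * (W ω ^ 3 * Z ω)) ℙ :=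
    (hIndep31.integrable_mul (hIW 3 (by omega) (by omega)) hIZ1).const_mul _
  have i3 : Integrable (fun ω => W ω ^ 2 * Z ω ^ 2) ℙ :=
    hIndep22.integrable_mul (hIW 2 (by omega) (by omega)) (hIZ 2 (by omega) (by omega))
  have i12 : Integrable (fun ω => p ^ 2 * W ω ^ 4 + (2 * p) * (W ω ^ 3 * Z ω)) ℙ := i1.add i2
  have j1 : Integrable (fun ω => p ^ 2 * W ω ^ 2) ℙ :=
    (hIW 2 (by omega) (by omega)).const_mul _
  have j2 : Integrable (fun ω => (2 * p) * (W ω * Z ω)) ℙ :=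
    (hIndep11.integrable_mul hIW1 hIZ1).const_mul _
  have j3 : Integrable (fun ω => Z ω ^ 2) ℙ := hIZ 2 (by omega) (by omega)
  have j12 : Integrable (fun ω => p ^ 2 * W ω ^ 2 + (2 * p) * (W ω * Z ω)) ℙ := j1.add j2
  -- first expansion
  have E1 : (∫ ω, W ω ^ 2 * (Yproc d ξ 0 t' ω) ^ 2 ∂ℙ)
      = p ^ 2 * (∫ ω, W ω ^ 4 ∂ℙ) + (∫ ω, W ω ^ 2 ∂ℙ) * (∫ ω, Z ω ^ 2 ∂ℙ) := by
    have e : (fun ω => W ω ^ 2 * (Yproc d ξ 0 t' ω) ^ 2) = fun ω =>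
        p ^ 2 * W ω ^ 4 + (2 * p) * (W ω ^ 3 * Z ω) + W ω ^ 2 * Z ω ^ 2 := by
      rw [hsplit]
      funext ω
      ring
    rw [e, integral_add i12 i3, integral_add i1 i2, integral_const_mul, integral_const_mul,
      hEW3Z, hEW2Z2, hm1Z]
    ring
  have E2 : (∫ ω, (Yproc d ξ 0 t' ω) ^ 2 ∂ℙ)
      = p ^ 2 * (∫ ω, W ω ^ 2 ∂ℙ) + (∫ ω, Z ω ^ 2 ∂ℙ) := by
    have e : (fun ω => (Yproc d ξ 0 t' ω) ^ 2) = fun ω =>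
        p ^ 2 * W ω ^ 2 + (2 * p) * (W ω * Z ω) + Z ω ^ 2 := by
      rw [hsplit]
      funext ω
      ring
    rw [e, integral_add j12 j3, integral_add j1 j2, integral_const_mul, integral_const_mul,
      hEWZ, hm1Z]
    ring
  rw [E1, E2]
  have ecov : p ^ 2 * (∫ ω, W ω ^ 4 ∂ℙ) + (∫ ω, W ω ^ 2 ∂ℙ) * (∫ ω, Z ω ^ 2 ∂ℙ)
      - (∫ ω, W ω ^ 2 ∂ℙ) * (p ^ 2 * (∫ ω, W ω ^ 2 ∂ℙ) + (∫ ω, Z ω ^ 2 ∂ℙ))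
      = p ^ 2 * ((∫ ω, W ω ^ 4 ∂ℙ) - (∫ ω, W ω ^ 2 ∂ℙ) ^ 2) := by ring
  rw [ecov, abs_mul]
  have h1 : |p ^ 2| = p ^ 2 := abs_of_nonneg (by positivity)
  have h2 : |(∫ ω, W ω ^ 4 ∂ℙ) - (∫ ω, W ω ^ 2 ∂ℙ) ^ 2| ≤ M4 + B2 ^ 2 := by
    have h3 : (∫ ω, W ω ^ 2 ∂ℙ) ^ 2 ≤ B2 ^ 2 := pow_le_pow_left₀ hm2W0 hm2W 2
    rw [abs_sub_comm, abs_sub_le_iff]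
    constructor
    · nlinarith
    · nlinarith
  rw [h1]
  have hαpow : (0:ℝ) ≤ α ^ (2 * (t' - t)) := by positivity
  calc p ^ 2 * |(∫ ω, W ω ^ 4 ∂ℙ) - (∫ ω, W ω ^ 2 ∂ℙ) ^ 2|
      ≤ α ^ (2 * (t' - t)) * (M4 + B2 ^ 2) := by
        apply mul_le_mul hp2 h2 (abs_nonneg _) hαpow
  _ = α ^ (2 * (t' - t)) * (M4 + B2 ^ 2) := rfl

lemma var_sum_eq {Ω : Type*} [MeasureSpace Ω] (n : ℕ) (f : ℕ → Ω → ℝ)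
    (hf : ∀ j ∈ Finset.range n, Integrable (f j) ℙ)
    (hff : ∀ j ∈ Finset.range n, ∀ k ∈ Finset.range n,
      Integrable (fun ω => f j ω * f k ω) ℙ) :
    (∫ ω, (∑ j ∈ Finset.range n, f j ω) ^ 2 ∂ℙ)
      - (∫ ω, ∑ j ∈ Finset.range n, f j ω ∂ℙ) ^ 2
    = ∑ j ∈ Finset.range n, ∑ k ∈ Finset.range n,
        ((∫ ω, f j ω * f k ω ∂ℙ) - (∫ ω, f j ω ∂ℙ) * (∫ ω, f k ω ∂ℙ)) := by
  have e1 : (fun ω => (∑ j ∈ Finset.range n, f j ω) ^ 2)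
      = fun ω => ∑ j ∈ Finset.range n, ∑ k ∈ Finset.range n, f j ω * f k ω := by
    funext ω
    rw [sq, Finset.sum_mul_sum]
  have hint : ∀ j ∈ Finset.range n,
      Integrable (fun ω => ∑ k ∈ Finset.range n, f j ω * f k ω) ℙ :=
    fun j hj => integrable_finset_sum _ (fun k hk => hff j hj k hk)
  have e2 : (∫ ω, (∑ j ∈ Finset.range n, f j ω) ^ 2 ∂ℙ)
      = ∑ j ∈ Finset.range n, ∑ k ∈ Finset.range n, ∫ ω, f j ω * f k ω ∂ℙ := by
    rw [e1, integral_finset_sum _ hint]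
    exact Finset.sum_congr rfl (fun j hj => integral_finset_sum _ (fun k hk => hff j hj k hk))
  have e3 : (∫ ω, ∑ j ∈ Finset.range n, f j ω ∂ℙ)
      = ∑ j ∈ Finset.range n, ∫ ω, f j ω ∂ℙ :=
    integral_finset_sum _ (fun j hj => hf j hj)
  rw [e2, e3, sq, Finset.sum_mul_sum, ← Finset.sum_sub_distrib]
  exact Finset.sum_congr rfl (fun j _ => by rw [← Finset.sum_sub_distrib])

lemma final_sum_bound (n : ℕ) (w : ℕ → ℝ) (Cov : ℕ → ℕ → ℝ) (γ C0 : ℝ)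
    (hγ0 : 0 ≤ γ) (hγ1 : γ < 1) (hC0 : 0 ≤ C0)
    (hcov : ∀ j ∈ Finset.range n, ∀ k ∈ Finset.range n,
      Cov j k ≤ |w j| * |w k| * (γ ^ ((j:ℤ) - (k:ℤ)).natAbs * C0)) :
    ∑ j ∈ Finset.range n, ∑ k ∈ Finset.range n, Cov j k
      ≤ (∑ j ∈ Finset.range n, (w j) ^ 2) * (C0 * (2 / (1 - γ))) := by
  have h1γ : 0 < 1 - γ := by linarith
  have step1 : ∑ j ∈ Finset.range n, ∑ k ∈ Finset.range n, Cov j k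
      ≤ ∑ j ∈ Finset.range n, ∑ k ∈ Finset.range n,
        ((w j)^2 / 2 + (w k)^2 / 2) * (γ ^ ((j:ℤ) - (k:ℤ)).natAbs * C0) := by
    apply Finset.sum_le_sum
    intro j hj
    apply Finset.sum_le_sum
    intro k hk
    refine (hcov j hj k hk).trans ?_
    apply mul_le_mul_of_nonneg_right _ (by positivity)
    nlinarith [sq_nonneg (|w j| - |w k|), sq_abs (w j), sq_abs (w k)]
  have hgeom : ∀ m : ℤ, ∑ k ∈ Finset.range n, γ ^ ((k:ℤ) - m).natAbs ≤ 2 / (1 - γ) :=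
    fun m => geom_grid_sum hγ0 hγ1 m n
  have hsym : ∀ j k : ℕ, ((j:ℤ) - (k:ℤ)).natAbs = ((k:ℤ) - (j:ℤ)).natAbs := by
    intro j k; omega
  have step2 : ∑ j ∈ Finset.range n, ∑ k ∈ Finset.range n,
      ((w j)^2 / 2) * (γ ^ ((j:ℤ) - (k:ℤ)).natAbs * C0)
      ≤ ∑ j ∈ Finset.range n, (w j)^2 / 2 * (C0 * (2 / (1 - γ))) := by
    apply Finset.sum_le_sum
    intro j _
    have e : ∀ k : ℕ, ((w j)^2 / 2) * (γ ^ ((j:ℤ) - (k:ℤ)).natAbs * C0)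
        = ((w j)^2 / 2 * C0) * γ ^ ((k:ℤ) - (j:ℤ)).natAbs := by
      intro k; rw [hsym j k]; ring
    calc ∑ k ∈ Finset.range n, ((w j)^2 / 2) * (γ ^ ((j:ℤ) - (k:ℤ)).natAbs * C0)
        = ((w j)^2 / 2 * C0) * ∑ k ∈ Finset.range n, γ ^ ((k:ℤ) - (j:ℤ)).natAbs := by
          rw [Finset.mul_sum]
          exact Finset.sum_congr rfl (fun k _ => e k)
      _ ≤ ((w j)^2 / 2 * C0) * (2 / (1 - γ)) := by
          apply mul_le_mul_of_nonneg_left (hgeom (j:ℤ)) (by positivity)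
      _ = (w j)^2 / 2 * (C0 * (2 / (1 - γ))) := by ring
  have step3 : ∑ j ∈ Finset.range n, ∑ k ∈ Finset.range n,
      ((w k)^2 / 2) * (γ ^ ((j:ℤ) - (k:ℤ)).natAbs * C0)
      ≤ ∑ k ∈ Finset.range n, (w k)^2 / 2 * (C0 * (2 / (1 - γ))) := by
    rw [Finset.sum_comm]
    apply Finset.sum_le_sum
    intro k _
    have e : ∀ j : ℕ, ((w k)^2 / 2) * (γ ^ ((j:ℤ) - (k:ℤ)).natAbs * C0)
        = ((w k)^2 / 2 * C0) * γ ^ ((j:ℤ) - (k:ℤ)).natAbs := by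
      intro j; ring
    calc ∑ j ∈ Finset.range n, ((w k)^2 / 2) * (γ ^ ((j:ℤ) - (k:ℤ)).natAbs * C0)
        = ((w k)^2 / 2 * C0) * ∑ j ∈ Finset.range n, γ ^ ((j:ℤ) - (k:ℤ)).natAbs := by
          rw [Finset.mul_sum]
          exact Finset.sum_congr rfl (fun j _ => e j)
      _ ≤ ((w k)^2 / 2 * C0) * (2 / (1 - γ)) := by
          apply mul_le_mul_of_nonneg_left (hgeom (k:ℤ)) (by positivity)
      _ = (w k)^2 / 2 * (C0 * (2 / (1 - γ))) := by ring
  have hsplit : ∑ j ∈ Finset.range n, ∑ k ∈ Finset.range n,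
      ((w j)^2 / 2 + (w k)^2 / 2) * (γ ^ ((j:ℤ) - (k:ℤ)).natAbs * C0)
      = (∑ j ∈ Finset.range n, ∑ k ∈ Finset.range n,
          ((w j)^2 / 2) * (γ ^ ((j:ℤ) - (k:ℤ)).natAbs * C0))
        + ∑ j ∈ Finset.range n, ∑ k ∈ Finset.range n,
          ((w k)^2 / 2) * (γ ^ ((j:ℤ) - (k:ℤ)).natAbs * C0) := by
    rw [← Finset.sum_add_distrib]
    apply Finset.sum_congr rfl
    intro j _
    rw [← Finset.sum_add_distrib]
    apply Finset.sum_congr rfl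
    intro k _
    ring
  have hfin : (∑ j ∈ Finset.range n, (w j)^2 / 2 * (C0 * (2 / (1 - γ))))
      + (∑ k ∈ Finset.range n, (w k)^2 / 2 * (C0 * (2 / (1 - γ))))
      = (∑ j ∈ Finset.range n, (w j) ^ 2) * (C0 * (2 / (1 - γ))) := by
    rw [← Finset.sum_add_distrib, Finset.sum_mul]
    apply Finset.sum_congr rfl
    intro j _
    ring
  linarith [step1, step2, step3, hsplit.le, hsplit.ge]

lemma weight_sq_bound {K : ℝ → ℝ} {β MK L bn : ℝ} (hβ : 0 < β) (hMK : 0 ≤ MK)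
    (hL : 0 ≤ L) (hbn : 0 < bn)
    (hKb : ∀ x, |K x| ≤ MK * Real.exp (-(β * |x|)))
    (x Δ : ℝ) (hΔ : |Δ| ≤ L * (bn * |x|)) :
    (K x * Δ) ^ 2 ≤ (L ^ 2 * MK ^ 2 * (4 / β ^ 2)) * bn ^ 2 * Real.exp (-(β * |x|)) := by
  set E := Real.exp (-(β * |x|)) with hE'
  have hE0 : 0 < E := Real.exp_pos _
  have h1 : |K x * Δ| ≤ (MK * E) * (L * (bn * |x|)) := by
    rw [abs_mul]
    apply mul_le_mul (hKb x) hΔ (abs_nonneg _) (by positivity)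
  have h2 : (K x * Δ) ^ 2 ≤ ((MK * E) * (L * (bn * |x|))) ^ 2 := by
    calc (K x * Δ) ^ 2 = |K x * Δ| ^ 2 := (sq_abs _).symm
      _ ≤ ((MK * E) * (L * (bn * |x|))) ^ 2 :=
          pow_le_pow_left₀ (abs_nonneg _) h1 2
  have h3 : ((MK * E) * (L * (bn * |x|))) ^ 2
      = MK^2 * L^2 * bn^2 * (E^2 * |x|^2) := by ring
  have h4 : |x| ^ 2 ≤ (4 / β ^ 2) * Real.exp (β * |x|) := by
    have h5 := sq_le_four_exp (y := β * |x|) (by positivity)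
    have h6 : (β * |x|)^2 = β^2 * |x|^2 := by ring
    rw [h6] at h5
    have hβ2 : 0 < β ^ 2 := by positivity
    calc |x|^2 = (β^2 * |x|^2) / β^2 := by field_simp
      _ ≤ (4 * Real.exp (β * |x|)) / β^2 := (div_le_div_iff_of_pos_right hβ2).mpr h5
      _ = (4 / β^2) * Real.exp (β * |x|) := by ring
  have h7 : E ^ 2 * Real.exp (β * |x|) = E := by
    rw [hE', ← Real.exp_nat_mul, ← Real.exp_add]
    congr 1
    push_cast
    ring
  calc (K x * Δ) ^ 2 ≤ MK^2 * L^2 * bn^2 * (E^2 * |x|^2) := by rw [← h3]; exact h2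
    _ ≤ MK^2 * L^2 * bn^2 * (E^2 * ((4 / β ^ 2) * Real.exp (β * |x|))) := by
        apply mul_le_mul_of_nonneg_left _ (by positivity)
        apply mul_le_mul_of_nonneg_left h4 (by positivity)
    _ = (L ^ 2 * MK ^ 2 * (4 / β ^ 2)) * bn ^ 2 * (E ^ 2 * Real.exp (β * |x|)) := by ring
    _ = (L ^ 2 * MK ^ 2 * (4 / β ^ 2)) * bn ^ 2 * E := by rw [h7]

lemma grid_sum_le {β δ : ℝ} (hβ : 0 < β) (hδ : 0 < δ) (hy : β * δ ≤ 1) (c : ℝ) (n : ℕ) :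
    ∑ j ∈ Finset.range n, Real.exp (-(β * |c + j * δ|)) ≤ 12 / (β * δ) := by
  have h1 := grid_exp_sum hβ hδ c n
  set y := β * δ with hy'
  have hy0 : 0 < y := by positivity
  have h2 : Real.exp y ≤ 3 := by
    calc Real.exp y ≤ Real.exp 1 := Real.exp_le_exp.2 hy
      _ ≤ 3 := by
        have := Real.exp_one_lt_d9
        linarith
  have h3 : y / 2 ≤ 1 - Real.exp (-y) := by
    have h4 : Real.exp (-y) ≤ 1 / (1 + y) := by
      rw [Real.exp_neg, inv_eq_one_div]
      exact one_div_le_one_div_of_le (by linarith) (by linarith [Real.add_one_le_exp y])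
    have h5 : 1 - 1 / (1 + y) = y / (1 + y) := by field_simp; ring
    have h6 : y / 2 ≤ y / (1 + y) := by
      apply div_le_div_of_nonneg_left hy0.le (by linarith) (by linarith)
    linarith
  have h7 : 0 < 1 - Real.exp (-y) := by linarith
  have h8 : 2 / (1 - Real.exp (-y)) ≤ 4 / y := by
    rw [div_le_div_iff₀ h7 hy0]
    linarith [mul_le_mul_of_nonneg_left h3 (by norm_num : (0:ℝ) ≤ 4)]
  calc ∑ j ∈ Finset.range n, Real.exp (-(β * |c + j * δ|))
      ≤ Real.exp y * (2 / (1 - Real.exp (-y))) := h1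
    _ ≤ 3 * (4 / y) := by
        apply mul_le_mul h2 h8 (by positivity) (by norm_num)
    _ = 12 / y := by ring

set_option maxHeartbeats 2000000 in
/-- Under Assumption A(ρ) with `1 < ρ ≤ 2`, `X₀ = 0` a.s.,
`E[ξ₀⁴] < ∞` and `E[ξ₀³] = 0`, for a kernel `K` satisfying (K) or (K̃) and ker(ρ),
one has, for `n` large enough, `Var(Jₙ) ≤ C (Aₙ/(n bₙ) + bₙ^ρ)`. -/
theorem statement17
    {Ω : Type*} [MeasureSpace Ω] (hprob : IsProbabilityMeasure (ℙ : Measure Ω))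
    (T : ℕ) (hT : 1 ≤ T) (ρ : ℝ) (hρ1 : 1 < ρ) (hρ2 : ρ ≤ 2)
    -- Assumption A(ρ)
    (a : ℤ → ℝ → ℝ) (α : ℝ) (hα1 : α < 1)
    (hper : ∀ (t : ℤ) (v : ℝ), a (t + T) v = a t v)
    (hbdd : ∀ (t : ℤ), ∀ v ∈ Set.Icc (0:ℝ) 1, |a t v| ≤ α)
    (hreg : ∀ t : ℤ, CHolder ρ (a t))
    -- the i.i.d. innovations, with mean 0 and variance σ² ∈ (0,∞)
    (ξ : ℕ → Ω → ℝ) (hξmeas : ∀ t, Measurable (ξ t))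
    (hξindep : iIndepFun ξ ℙ)
    (hξid : ∀ t, IdentDistrib (ξ t) (ξ 0) ℙ ℙ)
    (hξmean : ∫ ω, ξ 0 ω ∂ℙ = 0)
    (σ : ℝ) (hσ : 0 < σ)
    (hξvar : ∫ ω, (ξ 0 ω) ^ 2 ∂ℙ = σ ^ 2)
    (hξsq : Integrable (fun ω => (ξ 0 ω) ^ 2) ℙ)
    -- the process, started from X₀ = 0 almost surely
    (X : ℕ → ℕ → Ω → ℝ)
    (hXinit : ∀ n, ∀ᵐ ω ∂ℙ, X n 0 ω = 0)
    (hXrec : ∀ n t, 1 ≤ t → t ≤ n * T →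
      ∀ ω, X n t ω = a (t : ℤ) ((t : ℝ) / ((n : ℝ) * T)) * X n (t - 1) ω + ξ t ω)
    -- fourth order moment assumptions on the innovations
    (hξ4int : Integrable (fun ω => (ξ 0 ω) ^ 4) ℙ)
    (hξ3 : ∫ ω, (ξ 0 ω) ^ 3 ∂ℙ = 0)
    -- the kernel, the bandwidths and the constants Aₙ
    (K : ℝ → ℝ) (hK : AssumpK K ∨ AssumpKt K) (hker : AssumpKer ρ K)
    (b : ℕ → ℝ) (hbpos : ∀ n, 0 < b n)
    (hb0 : Tendsto b atTop (nhds 0))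
    (hnb : Tendsto (fun n : ℕ => (n : ℝ) * b n) atTop atTop)
    (A : ℕ → ℝ)
    (hKA : (AssumpKt K ∧ ∀ n, A n = 1) ∨ (AssumpK K ∧ ∀ n : ℕ, A n = Real.log n))
    -- the point of estimation and the phase
    (u : ℝ) (hu : u ∈ Set.Ioo (0:ℝ) 1) (s : ℕ) (hs1 : 1 ≤ s) (hsT : s ≤ T)
    -- the bias term Jₙ
    (J : ℕ → Ω → ℝ)
    (hJ : ∀ n ω, J n ω = (1 / Real.sqrt ((n : ℝ) * b n)) * ∑ j ∈ Finset.range n,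
      K ((((s + j * T : ℕ) : ℝ) / ((n : ℝ) * T) - u) / b n) *
        (X n (s + j * T - 1) ω) ^ 2 *
        (a (s : ℤ) (((s + j * T : ℕ) : ℝ) / ((n : ℝ) * T)) - a (s : ℤ) u))
 :
    ∃ C : ℝ, 0 < C ∧ ∀ᶠ n : ℕ in atTop,
      (∫ ω, (J n ω) ^ 2 ∂ℙ) - (∫ ω, J n ω ∂ℙ) ^ 2
        ≤ C * (A n / ((n : ℝ) * b n) + b n ^ ρ) := by
  classical
  have hα0 : 0 ≤ α := le_trans (abs_nonneg _) (hbdd 0 0 ⟨le_rfl, zero_le_one⟩)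
  have hα2 : (0:ℝ) < 1 - α ^ 2 := by nlinarith
  have hα4 : (0:ℝ) < 1 - α ^ 4 := by nlinarith
  -- moments of the innovations
  have hid_pow : ∀ (i k : ℕ), IdentDistrib (fun ω => ξ i ω ^ k) (fun ω => ξ 0 ω ^ k) ℙ ℙ :=
    fun i k => (hξid i).comp (measurable_id.pow_const k)
  have habs1 : ∀ x : ℝ, |x ^ 1| ≤ x ^ 2 + 1 := by
    intro x
    rw [pow_one]
    nlinarith [sq_nonneg (|x| - 1), sq_abs x, abs_nonneg x]
  have habs3 : ∀ x : ℝ, |x ^ 3| ≤ x ^ 4 + 1 := by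
    intro x
    have h1 : |x ^ 3| = |x| ^ 3 := abs_pow x 3
    have h2 : x ^ 4 = |x| ^ 4 := by
      rw [← abs_pow]
      exact (abs_of_nonneg (by positivity)).symm
    rw [h1, h2]
    nlinarith [abs_nonneg x, sq_nonneg (|x| ^ 2 - |x|), sq_nonneg (|x| - 1)]
  have hint0 : ∀ k, 1 ≤ k → k ≤ 4 → Integrable (fun ω => ξ 0 ω ^ k) ℙ := by
    intro k h1 h4
    interval_cases k
    · exact (hξsq.add (integrable_const 1)).mono'
        (((hξmeas 0).pow_const 1).aestronglyMeasurable)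
        (Filter.Eventually.of_forall fun ω => by rw [Real.norm_eq_abs]; exact habs1 _)
    · exact hξsq
    · exact (hξ4int.add (integrable_const 1)).mono'
        (((hξmeas 0).pow_const 3).aestronglyMeasurable)
        (Filter.Eventually.of_forall fun ω => by rw [Real.norm_eq_abs]; exact habs3 _)
    · exact hξ4int
  have hξint : ∀ i k, 1 ≤ k → k ≤ 4 → Integrable (fun ω => ξ i ω ^ k) ℙ :=
    fun i k h1 h4 => ((hid_pow i k).integrable_iff).2 (hint0 k h1 h4)
  have hm1 : ∀ i : ℕ, ∫ ω, ξ i ω ∂ℙ = 0 := fun i => ((hξid i).integral_eq).trans hξmean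
  have hm2 : ∀ i : ℕ, ∫ ω, ξ i ω ^ 2 ∂ℙ = σ ^ 2 :=
    fun i => ((hid_pow i 2).integral_eq).trans hξvar
  have hm3 : ∀ i : ℕ, ∫ ω, ξ i ω ^ 3 ∂ℙ = 0 := fun i => ((hid_pow i 3).integral_eq).trans hξ3
  have hm4 : ∀ i : ℕ, ∫ ω, ξ i ω ^ 4 ∂ℙ = ∫ ω, ξ 0 ω ^ 4 ∂ℙ :=
    fun i => (hid_pow i 4).integral_eq
  have hσ20 : (0:ℝ) ≤ σ ^ 2 := sq_nonneg σ
  have hμ40 : (0:ℝ) ≤ ∫ ω, ξ 0 ω ^ 4 ∂ℙ := integral_nonneg fun ω => by positivity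
  -- Lipschitz constant of a s and exponential kernel bound
  obtain ⟨L, hL0, hLip⟩ := lipschitz_of_CHolder hρ1 hρ2 (hreg (s : ℤ))
  obtain ⟨β₀, MK, hβ₀, hMK0, hKexp⟩ := kernel_exp_bound hK
  have hγ0 : (0:ℝ) ≤ α ^ (2 * T) := by positivity
  have hγ1 : α ^ (2 * T) < 1 := pow_lt_one₀ hα0 hα1 (by omega)
  have h1γ : (0:ℝ) < 1 - α ^ (2 * T) := by linarith
  -- the constants
  set C0 : ℝ := (6 * α ^ 2 * (σ ^ 2 / (1 - α ^ 2)) * σ ^ 2 + ∫ ω, ξ 0 ω ^ 4 ∂ℙ) / (1 - α ^ 4)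
    + (σ ^ 2 / (1 - α ^ 2)) ^ 2 with hC0def
  have hB20 : (0:ℝ) ≤ σ ^ 2 / (1 - α ^ 2) := by positivity
  have hC00 : (0:ℝ) ≤ C0 := by
    rw [hC0def]
    have h1 : (0:ℝ) ≤ 6 * α ^ 2 * (σ ^ 2 / (1 - α ^ 2)) * σ ^ 2 := by positivity
    have h2 : (0:ℝ) ≤ (σ ^ 2 / (1 - α ^ 2)) ^ 2 := sq_nonneg _
    have h3 : (0:ℝ) ≤ (6 * α ^ 2 * (σ ^ 2 / (1 - α ^ 2)) * σ ^ 2 + ∫ ω, ξ 0 ω ^ 4 ∂ℙ)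
        / (1 - α ^ 4) := div_nonneg (by linarith) hα4.le
    linarith
  set CC : ℝ := (C0 * (2 / (1 - α ^ (2 * T)))) * ((L ^ 2 * MK ^ 2 * (4 / β₀ ^ 2)) * (12 / β₀))
    with hCCdef
  have hCC0 : (0:ℝ) ≤ CC := by
    rw [hCCdef]
    apply mul_nonneg (mul_nonneg hC00 (by positivity)) (by positivity)
  refine ⟨CC + 1, by linarith, ?_⟩
  have hev2 : ∀ᶠ n : ℕ in atTop, b n < 1 := hb0.eventually_lt_const one_pos
  have hev3 : ∀ᶠ n : ℕ in atTop, β₀ ≤ (n:ℝ) * b n := hnb.eventually_ge_atTop β₀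
  have hev4 : ∀ᶠ n : ℕ in atTop, 0 ≤ A n := by
    rcases hKA with ⟨-, h⟩ | ⟨-, h⟩
    · exact Filter.Eventually.of_forall fun n => by rw [h n]; norm_num
    · filter_upwards [Filter.eventually_ge_atTop 1] with n hn
      rw [h n]
      exact Real.log_nonneg (by exact_mod_cast hn)
  filter_upwards [Filter.eventually_ge_atTop 1, hev2, hev3, hev4] with n hn1 hbn1 hnbn hAn
  -- basic positivity facts for this n
  have hnR : (0:ℝ) < (n:ℝ) := by exact_mod_cast hn1
  have hTR : (0:ℝ) < (T:ℝ) := by exact_mod_cast hT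
  have hbn : 0 < b n := hbpos n
  have hnbR : (0:ℝ) < (n:ℝ) * b n := by positivity
  have hnT : (0:ℝ) < (n:ℝ) * (T:ℝ) := by positivity
  -- the coefficient sequence
  set d : ℕ → ℝ := fun m => a (m : ℤ) ((m : ℝ) / ((n : ℝ) * (T:ℝ))) with hddef
  have hdb : ∀ m, 1 ≤ m → m ≤ n * T → |d m| ≤ α := by
    intro m h1 h2
    apply hbdd
    refine ⟨by positivity, ?_⟩
    rw [div_le_one hnT]
    have h3 : (m:ℝ) ≤ ((n * T : ℕ):ℝ) := Nat.cast_le.2 h2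
    push_cast at h3
    exact h3
  have Mo := Yproc_moments hprob ξ hξmeas hξindep hξint (σ ^ 2) (∫ ω, ξ 0 ω ^ 4 ∂ℙ)
    hσ20 hμ40 hm1 hm2 hm3 hm4 d α hα0 hα1 (n * T) hdb 0
  have hsj : ∀ j, j < n → s + j * T ≤ n * T := by
    intro j hj
    have h1 : (j + 1) * T ≤ n * T := Nat.mul_le_mul_right _ (by omega)
    have h2 : (j + 1) * T = j * T + T := by ring
    omega
  -- a.e. identification of X with Yproc
  have key1 : ∀ t, t ≤ n * T → (X n t) =ᵐ[ℙ] (Yproc d ξ 0 t) := by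
    intro t
    induction t with
    | zero =>
      intro _
      rw [Yproc_zero d ξ 0 0 le_rfl]
      exact hXinit n
    | succ t ih =>
      intro ht
      have hrec := hXrec n (t + 1) (by omega) ht
      have hYrec := Yproc_rec d ξ 0 t (Nat.zero_le t)
      filter_upwards [ih (by omega)] with ω hω
      rw [hrec ω, hYrec]
      simp only [Nat.add_sub_cancel]
      rw [hω]
  have hkey : ∀ᵐ ω ∂ℙ, ∀ j, j < n → X n (s + j * T - 1) ω = Yproc d ξ 0 (s + j * T - 1) ω := by
    rw [ae_all_iff]
    intro j
    by_cases hj : j < n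
    · have ht : s + j * T - 1 ≤ n * T := by have := hsj j hj; omega
      filter_upwards [key1 _ ht] with ω h _
      exact h
    · exact Filter.Eventually.of_forall fun ω h => absurd h hj
  -- weights and squared process
  set w : ℕ → ℝ := fun j => K ((((s + j * T : ℕ) : ℝ) / ((n : ℝ) * T) - u) / b n) *
      (a (s:ℤ) (((s + j * T : ℕ) : ℝ) / ((n : ℝ) * T)) - a (s:ℤ) u) with hwdef
  set Q : ℕ → Ω → ℝ := fun j ω => (Yproc d ξ 0 (s + j * T - 1) ω) ^ 2 with hQdef
  have hJae : J n =ᵐ[ℙ] fun ω =>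
      (1 / Real.sqrt ((n:ℝ) * b n)) * ∑ j ∈ Finset.range n, w j * Q j ω := by
    filter_upwards [hkey] with ω hω
    rw [hJ n ω]
    congr 1
    refine Finset.sum_congr rfl fun j hj => ?_
    rw [Finset.mem_range] at hj
    rw [hω j hj]
    simp only [hwdef, hQdef]
    ring
  have hQint : ∀ j, j < n → Integrable (Q j) ℙ := by
    intro j hj
    have h := (Mo (s + j * T - 1) (by have := hsj j hj; omega)).1 2 (by omega) (by omega)
    simpa [hQdef] using h
  have hY4int : ∀ j, j < n → Integrable (fun ω => (Yproc d ξ 0 (s + j * T - 1) ω) ^ 4) ℙ :=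
    fun j hj => (Mo (s + j * T - 1) (by have := hsj j hj; omega)).1 4 (by omega) (by omega)
  have hQQint : ∀ j, j < n → ∀ k, k < n → Integrable (fun ω => Q j ω * Q k ω) ℙ := by
    intro j hj k hk
    have hg : Integrable (fun ω => (1/2 : ℝ) * ((Yproc d ξ 0 (s + j * T - 1) ω) ^ 4
        + (Yproc d ξ 0 (s + k * T - 1) ω) ^ 4)) ℙ :=
      ((hY4int j hj).add (hY4int k hk)).const_mul _
    apply hg.mono'
    · exact (((Yproc_measurable d ξ hξmeas 0 _).pow_const 2).mul
        ((Yproc_measurable d ξ hξmeas 0 _).pow_const 2)).aestronglyMeasurable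
    · refine Filter.Eventually.of_forall fun ω => ?_
      simp only [hQdef, Real.norm_eq_abs]
      rw [abs_of_nonneg (by positivity)]
      nlinarith [sq_nonneg ((Yproc d ξ 0 (s + j * T - 1) ω) ^ 2
        - (Yproc d ξ 0 (s + k * T - 1) ω) ^ 2)]
  have hfint : ∀ j ∈ Finset.range n, Integrable (fun ω => w j * Q j ω) ℙ :=
    fun j hj => (hQint j (Finset.mem_range.1 hj)).const_mul _
  have hffint : ∀ j ∈ Finset.range n, ∀ k ∈ Finset.range n,
      Integrable (fun ω => (w j * Q j ω) * (w k * Q k ω)) ℙ := by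
    intro j hj k hk
    have e : (fun ω => (w j * Q j ω) * (w k * Q k ω))
        = fun ω => (w j * w k) * (Q j ω * Q k ω) := funext fun ω => by ring
    rw [e]
    exact (hQQint j (Finset.mem_range.1 hj) k (Finset.mem_range.1 hk)).const_mul _
  have hvar : (∫ ω, (∑ j ∈ Finset.range n, w j * Q j ω) ^ 2 ∂ℙ)
      - (∫ ω, ∑ j ∈ Finset.range n, w j * Q j ω ∂ℙ) ^ 2
      = ∑ j ∈ Finset.range n, ∑ k ∈ Finset.range n,
        ((∫ ω, (w j * Q j ω) * (w k * Q k ω) ∂ℙ)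
          - (∫ ω, w j * Q j ω ∂ℙ) * (∫ ω, w k * Q k ω ∂ℙ)) :=
    var_sum_eq n (fun j ω => w j * Q j ω) hfint hffint
  -- covariance bound for each pair
  have main : ∀ p q : ℕ, p ≤ q → q < n →
      |(∫ ω, (Yproc d ξ 0 (s + p * T - 1) ω) ^ 2 * (Yproc d ξ 0 (s + q * T - 1) ω) ^ 2 ∂ℙ)
        - (∫ ω, (Yproc d ξ 0 (s + p * T - 1) ω) ^ 2 ∂ℙ)
          * (∫ ω, (Yproc d ξ 0 (s + q * T - 1) ω) ^ 2 ∂ℙ)|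
      ≤ (α ^ (2 * T)) ^ (q - p) * C0 := by
    intro p q hpq hq
    have hb2 := Yproc_cov_bound hprob ξ hξmeas hξindep hξint (σ ^ 2) (∫ ω, ξ 0 ω ^ 4 ∂ℙ)
      hσ20 hμ40 hm1 hm2 hm3 hm4 d α hα0 hα1 (n * T) hdb
      (s + p * T - 1) (s + q * T - 1)
      (by have := Nat.mul_le_mul_right T hpq; omega)
      (by have := hsj q hq; omega)
    have hexp : α ^ (2 * ((s + q * T - 1) - (s + p * T - 1))) = (α ^ (2 * T)) ^ (q - p) := by
      have h6 : p * T ≤ q * T := Nat.mul_le_mul_right T hpq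
      have h7 : (q - p) * T = q * T - p * T := Nat.sub_mul q p T
      have h5 : (s + q * T - 1) - (s + p * T - 1) = (q - p) * T := by omega
      rw [h5, ← pow_mul]
      congr 1
      ring
    rw [hexp] at hb2
    rw [hC0def]
    exact hb2
  have hcov : ∀ j ∈ Finset.range n, ∀ k ∈ Finset.range n,
      (∫ ω, (w j * Q j ω) * (w k * Q k ω) ∂ℙ)
        - (∫ ω, w j * Q j ω ∂ℙ) * (∫ ω, w k * Q k ω ∂ℙ)
      ≤ |w j| * |w k| * ((α ^ (2 * T)) ^ ((j:ℤ) - (k:ℤ)).natAbs * C0) := by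
    intro j hj k hk
    rw [Finset.mem_range] at hj hk
    simp only [hQdef]
    have e2 : (∫ ω, (w j * (Yproc d ξ 0 (s + j * T - 1) ω) ^ 2)
          * (w k * (Yproc d ξ 0 (s + k * T - 1) ω) ^ 2) ∂ℙ)
        = (w j * w k) * ∫ ω, (Yproc d ξ 0 (s + j * T - 1) ω) ^ 2
          * (Yproc d ξ 0 (s + k * T - 1) ω) ^ 2 ∂ℙ := by
      have e1 : (fun ω => (w j * (Yproc d ξ 0 (s + j * T - 1) ω) ^ 2)
            * (w k * (Yproc d ξ 0 (s + k * T - 1) ω) ^ 2))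
          = fun ω => (w j * w k) * ((Yproc d ξ 0 (s + j * T - 1) ω) ^ 2
            * (Yproc d ξ 0 (s + k * T - 1) ω) ^ 2) := funext fun ω => by ring
      rw [e1, integral_const_mul]
    have e3 : (∫ ω, w j * (Yproc d ξ 0 (s + j * T - 1) ω) ^ 2 ∂ℙ)
        = w j * ∫ ω, (Yproc d ξ 0 (s + j * T - 1) ω) ^ 2 ∂ℙ := integral_const_mul _ _
    have e4 : (∫ ω, w k * (Yproc d ξ 0 (s + k * T - 1) ω) ^ 2 ∂ℙ)
        = w k * ∫ ω, (Yproc d ξ 0 (s + k * T - 1) ω) ^ 2 ∂ℙ := integral_const_mul _ _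
    rw [e2, e3, e4]
    have hcovQ : |(∫ ω, (Yproc d ξ 0 (s + j * T - 1) ω) ^ 2
          * (Yproc d ξ 0 (s + k * T - 1) ω) ^ 2 ∂ℙ)
        - (∫ ω, (Yproc d ξ 0 (s + j * T - 1) ω) ^ 2 ∂ℙ)
          * (∫ ω, (Yproc d ξ 0 (s + k * T - 1) ω) ^ 2 ∂ℙ)|
        ≤ (α ^ (2 * T)) ^ ((j:ℤ) - (k:ℤ)).natAbs * C0 := by
      rcases le_total j k with hjk | hjk
      · have h8 : ((j:ℤ) - (k:ℤ)).natAbs = k - j := by omega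
        rw [h8]
        exact main j k hjk hk
      · have h8 : ((j:ℤ) - (k:ℤ)).natAbs = j - k := by omega
        rw [h8]
        have e5 : (fun ω => (Yproc d ξ 0 (s + j * T - 1) ω) ^ 2
              * (Yproc d ξ 0 (s + k * T - 1) ω) ^ 2)
            = fun ω => (Yproc d ξ 0 (s + k * T - 1) ω) ^ 2
              * (Yproc d ξ 0 (s + j * T - 1) ω) ^ 2 := funext fun ω => mul_comm _ _
        rw [e5, mul_comm (∫ ω, (Yproc d ξ 0 (s + j * T - 1) ω) ^ 2 ∂ℙ)
          (∫ ω, (Yproc d ξ 0 (s + k * T - 1) ω) ^ 2 ∂ℙ)]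
        exact main k j hjk hj
    set I2 := ∫ ω, (Yproc d ξ 0 (s + j * T - 1) ω) ^ 2
      * (Yproc d ξ 0 (s + k * T - 1) ω) ^ 2 ∂ℙ
    set Ij := ∫ ω, (Yproc d ξ 0 (s + j * T - 1) ω) ^ 2 ∂ℙ
    set Ik := ∫ ω, (Yproc d ξ 0 (s + k * T - 1) ω) ^ 2 ∂ℙ
    calc (w j * w k) * I2 - (w j * Ij) * (w k * Ik)
        = (w j * w k) * (I2 - Ij * Ik) := by ring
      _ ≤ |(w j * w k) * (I2 - Ij * Ik)| := le_abs_self _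
      _ = |w j| * |w k| * |I2 - Ij * Ik| := by rw [abs_mul, abs_mul]
      _ ≤ |w j| * |w k| * ((α ^ (2 * T)) ^ ((j:ℤ) - (k:ℤ)).natAbs * C0) := by
          apply mul_le_mul_of_nonneg_left hcovQ (by positivity)
  have hsum1 : ∑ j ∈ Finset.range n, ∑ k ∈ Finset.range n,
      ((∫ ω, (w j * Q j ω) * (w k * Q k ω) ∂ℙ)
        - (∫ ω, w j * Q j ω ∂ℙ) * (∫ ω, w k * Q k ω ∂ℙ))
      ≤ (∑ j ∈ Finset.range n, (w j) ^ 2) * (C0 * (2 / (1 - α ^ (2 * T)))) :=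
    final_sum_bound n w _ (α ^ (2 * T)) C0 hγ0 hγ1 hC00 hcov
  -- bounding the sum of squared weights
  have hwsq : ∀ j ∈ Finset.range n, (w j) ^ 2 ≤ (L ^ 2 * MK ^ 2 * (4 / β₀ ^ 2)) * (b n) ^ 2 *
      Real.exp (-(β₀ * |(((s + j * T : ℕ):ℝ) / ((n:ℝ) * T) - u) / b n|)) := by
    intro j hj
    rw [Finset.mem_range] at hj
    simp only [hwdef]
    apply weight_sq_bound hβ₀ hMK0 hL0 hbn hKexp
    have hv0 : (0:ℝ) ≤ ((s + j * T : ℕ):ℝ) / ((n:ℝ) * T) := by positivity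
    have hv1 : ((s + j * T : ℕ):ℝ) / ((n:ℝ) * T) ≤ 1 := by
      rw [div_le_one hnT]
      have h3 : ((s + j * T : ℕ):ℝ) ≤ ((n * T : ℕ):ℝ) := Nat.cast_le.2 (hsj j hj)
      push_cast at h3
      push_cast
      linarith
    have hL1 := hLip _ ⟨hv0, hv1⟩ u ⟨hu.1.le, hu.2.le⟩
    have he : |((s + j * T : ℕ):ℝ) / ((n:ℝ) * T) - u|
        = b n * |(((s + j * T : ℕ):ℝ) / ((n:ℝ) * T) - u) / b n| := by
      rw [abs_div, abs_of_pos hbn]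
      field_simp
    calc |a (s:ℤ) (((s + j * T : ℕ):ℝ) / ((n:ℝ) * T)) - a (s:ℤ) u|
        ≤ L * |((s + j * T : ℕ):ℝ) / ((n:ℝ) * T) - u| := hL1
      _ = L * (b n * |(((s + j * T : ℕ):ℝ) / ((n:ℝ) * T) - u) / b n|) := by rw [he]
  have hxform : ∀ j : ℕ, ((((s + j * T : ℕ):ℝ) / ((n:ℝ) * T) - u)) / b n
      = ((s:ℝ) / ((n:ℝ) * T) - u) / b n + (j:ℝ) * (1 / ((n:ℝ) * b n)) := by
    intro j
    push_cast
    field_simp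
    ring
  have hgrid : ∑ j ∈ Finset.range n,
      Real.exp (-(β₀ * |(((s + j * T : ℕ):ℝ) / ((n:ℝ) * T) - u) / b n|))
      ≤ 12 * ((n:ℝ) * b n) / β₀ := by
    have hδ : (0:ℝ) < 1 / ((n:ℝ) * b n) := by positivity
    have hy : β₀ * (1 / ((n:ℝ) * b n)) ≤ 1 := by
      rw [mul_one_div, div_le_one hnbR]
      exact hnbn
    have h10 := grid_sum_le hβ₀ hδ hy (((s:ℝ) / ((n:ℝ) * T) - u) / b n) n
    have h11 : ∑ j ∈ Finset.range n,
        Real.exp (-(β₀ * |(((s + j * T : ℕ):ℝ) / ((n:ℝ) * T) - u) / b n|))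
        = ∑ j ∈ Finset.range n, Real.exp (-(β₀ * |((s:ℝ) / ((n:ℝ) * T) - u) / b n
          + (j:ℝ) * (1 / ((n:ℝ) * b n))|)) :=
      Finset.sum_congr rfl fun j _ => by rw [hxform j]
    rw [h11]
    refine h10.trans (le_of_eq ?_)
    rw [mul_one_div]
    field_simp
  have hSW : ∑ j ∈ Finset.range n, (w j) ^ 2
      ≤ (L ^ 2 * MK ^ 2 * (4 / β₀ ^ 2)) * (b n) ^ 2 * (12 * ((n:ℝ) * b n) / β₀) := by
    calc ∑ j ∈ Finset.range n, (w j) ^ 2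
        ≤ ∑ j ∈ Finset.range n, (L ^ 2 * MK ^ 2 * (4 / β₀ ^ 2)) * (b n) ^ 2 *
          Real.exp (-(β₀ * |(((s + j * T : ℕ):ℝ) / ((n:ℝ) * T) - u) / b n|)) :=
          Finset.sum_le_sum hwsq
      _ = (L ^ 2 * MK ^ 2 * (4 / β₀ ^ 2)) * (b n) ^ 2 * ∑ j ∈ Finset.range n,
          Real.exp (-(β₀ * |(((s + j * T : ℕ):ℝ) / ((n:ℝ) * T) - u) / b n|)) := by
          rw [Finset.mul_sum]
      _ ≤ (L ^ 2 * MK ^ 2 * (4 / β₀ ^ 2)) * (b n) ^ 2 * (12 * ((n:ℝ) * b n) / β₀) := by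
          apply mul_le_mul_of_nonneg_left hgrid (by positivity)
  -- expressing the variance of J
  have hJ1 : ∫ ω, J n ω ∂ℙ = (1 / Real.sqrt ((n:ℝ) * b n))
      * ∫ ω, ∑ j ∈ Finset.range n, w j * Q j ω ∂ℙ := by
    rw [integral_congr_ae hJae, integral_const_mul]
  have hJsqae : (fun ω => (J n ω) ^ 2) =ᵐ[ℙ] fun ω =>
      (1 / ((n:ℝ) * b n)) * (∑ j ∈ Finset.range n, w j * Q j ω) ^ 2 := by
    filter_upwards [hJae] with ω h
    rw [h, mul_pow, div_pow, one_pow, Real.sq_sqrt hnbR.le]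
  have hJ2 : ∫ ω, (J n ω) ^ 2 ∂ℙ = (1 / ((n:ℝ) * b n))
      * ∫ ω, (∑ j ∈ Finset.range n, w j * Q j ω) ^ 2 ∂ℙ := by
    rw [integral_congr_ae hJsqae, integral_const_mul]
  have hc2 : (1 / Real.sqrt ((n:ℝ) * b n)) ^ 2 = 1 / ((n:ℝ) * b n) := by
    rw [div_pow, one_pow, Real.sq_sqrt hnbR.le]
  have hVar : (∫ ω, (J n ω) ^ 2 ∂ℙ) - (∫ ω, J n ω ∂ℙ) ^ 2
      = (1 / ((n:ℝ) * b n)) * ((∫ ω, (∑ j ∈ Finset.range n, w j * Q j ω) ^ 2 ∂ℙ)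
        - (∫ ω, ∑ j ∈ Finset.range n, w j * Q j ω ∂ℙ) ^ 2) := by
    rw [hJ2, hJ1, mul_pow, hc2]
    ring
  have hpow : (b n) ^ 2 ≤ b n ^ ρ := by
    calc (b n) ^ 2 = b n ^ ((2:ℕ):ℝ) := (Real.rpow_natCast _ 2).symm
      _ ≤ b n ^ ρ := Real.rpow_le_rpow_of_exponent_ge hbn hbn1.le (by push_cast; linarith)
  have hρpos : (0:ℝ) ≤ b n ^ ρ := Real.rpow_nonneg hbn.le ρ
  -- final chain
  have hD : (∫ ω, (∑ j ∈ Finset.range n, w j * Q j ω) ^ 2 ∂ℙ)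
      - (∫ ω, ∑ j ∈ Finset.range n, w j * Q j ω ∂ℙ) ^ 2
      ≤ ((L ^ 2 * MK ^ 2 * (4 / β₀ ^ 2)) * (b n) ^ 2 * (12 * ((n:ℝ) * b n) / β₀))
        * (C0 * (2 / (1 - α ^ (2 * T)))) := by
    rw [hvar]
    refine hsum1.trans ?_
    apply mul_le_mul_of_nonneg_right hSW
    apply mul_nonneg hC00 (by positivity)
  have hfinal : (1 / ((n:ℝ) * b n)) * (((L ^ 2 * MK ^ 2 * (4 / β₀ ^ 2)) * (b n) ^ 2
      * (12 * ((n:ℝ) * b n) / β₀)) * (C0 * (2 / (1 - α ^ (2 * T))))) = CC * (b n) ^ 2 := by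
    rw [hCCdef]
    field_simp
  calc (∫ ω, (J n ω) ^ 2 ∂ℙ) - (∫ ω, J n ω ∂ℙ) ^ 2
      = (1 / ((n:ℝ) * b n)) * ((∫ ω, (∑ j ∈ Finset.range n, w j * Q j ω) ^ 2 ∂ℙ)
        - (∫ ω, ∑ j ∈ Finset.range n, w j * Q j ω ∂ℙ) ^ 2) := hVar
    _ ≤ (1 / ((n:ℝ) * b n)) * (((L ^ 2 * MK ^ 2 * (4 / β₀ ^ 2)) * (b n) ^ 2
        * (12 * ((n:ℝ) * b n) / β₀)) * (C0 * (2 / (1 - α ^ (2 * T))))) :=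
        mul_le_mul_of_nonneg_left hD (by positivity)
    _ = CC * (b n) ^ 2 := hfinal
    _ ≤ CC * (b n ^ ρ) := mul_le_mul_of_nonneg_left hpow hCC0
    _ ≤ CC * (A n / ((n:ℝ) * b n) + b n ^ ρ) := by
        have h1 : 0 ≤ A n / ((n:ℝ) * b n) := div_nonneg hAn hnbR.le
        exact mul_le_mul_of_nonneg_left (by linarith) hCC0
    _ ≤ (CC + 1) * (A n / ((n:ℝ) * b n) + b n ^ ρ) := by
        have h1 : 0 ≤ A n / ((n:ℝ) * b n) := div_nonneg hAn hnbR.le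
        exact mul_le_mul_of_nonneg_right (by linarith) (by linarith)
end
end
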